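/- arXiv:1412.8114 — 7 statements merged into one kernel-verified Lean document; each statement's English description precedes it below -/
import Mathlib

section
/- Let G = ([n], E) be a finite simple graph, k a field, and a ∈ ℕ^n. Then x^a ∉ T_G and x^{a+e_i} ∈ T_G for every i ∈ [n] (i.e., x^a is a standard monomial of T_G maximal under divisibility) if and only if there exists an acyclic orientation O of G with a_i = outdeg_O(i) for all i ∈ [n]. Moreover, distinct acyclic orientations of G have distinct out-degree vectors, so such an O is unique. -/
open MvPolynomial

/-- `O` is an orientation of `G`. -/
def IsOrientation {V : Type*} (G : SimpleGraph V) (O : V → V → Prop) : Prop :=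
  (∀ u v, O u v → G.Adj u v) ∧ ∀ u v, G.Adj u v → (O u v ↔ ¬ O v u)

/-- The relation `O` has no directed cycles. -/
def IsAcyclicRel {V : Type*} (O : V → V → Prop) : Prop :=
  ∀ v, ¬ Relation.TransGen O v v

/-- Out-degree of a vertex with respect to an orientation. -/
noncomputable def outDeg {V : Type*} (O : V → V → Prop) (i : V) : ℕ :=
  {j : V | O i j}.ncard

/-- `dout_σ(i)`: the number of neighbors of `i` outside of `σ`. -/
noncomputable def doutDeg {n : ℕ} (G : SimpleGraph (Fin n)) (σ : Finset (Fin n)) (i : Fin n) :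
    ℕ :=
  {j : Fin n | j ∉ σ ∧ G.Adj i j}.ncard

/-- The tree ideal of `G`. -/
noncomputable def treeIdeal (n : ℕ) (G : SimpleGraph (Fin n)) (K : Type*) [Field K] :
    Ideal (MvPolynomial (Fin n) K) :=
  Ideal.span {f | ∃ σ : Finset (Fin n), σ.Nonempty ∧
    (G.induce (↑σ : Set (Fin n))).Connected ∧
    f = ∏ i ∈ σ, (X i : MvPolynomial (Fin n) K) ^ (doutDeg G σ i + 1)}

section Aux

attribute [local instance 10] Classical.propDecidable

open Finset Relation
lemma ncard_eqA {α : Type*} [Fintype α] (P : α → Prop) :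
    {j | P j}.ncard = (Finset.univ.filter P).card := by
  rw [← Set.ncard_coe_finset]; congr 1; ext x; simp

lemma prod_X_powA {K : Type*} [CommSemiring K] {ι : Type*} (s : Finset ι) (f : ι → ℕ) :
    (∏ i ∈ s, (X i : MvPolynomial ι K) ^ f i) =
      monomial (∑ i ∈ s, Finsupp.single i (f i)) 1 := by
  classical
  induction s using Finset.induction with
  | empty => simp
  | @insert _ _ h ih =>
      rw [Finset.prod_insert h, Finset.sum_insert h, ih, X_pow_eq_monomial, monomial_mul, one_mul]

lemma sum_single_applyA {ι : Type*} (s : Finset ι) (c : ι → ℕ) (j : ι) :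
    (∑ i ∈ s, Finsupp.single i (c i)) j = if j ∈ s then c j else 0 := by
  classical
  rw [Finset.sum_apply']
  simp [Finsupp.single_apply]

lemma mem_treeIdeal_iffA {n : ℕ} (G : SimpleGraph (Fin n)) (K : Type*) [Field K] (b : Fin n → ℕ) :
    (∏ i, (X i : MvPolynomial (Fin n) K) ^ b i) ∈ treeIdeal n G K ↔
      ∃ σ : Finset (Fin n), σ.Nonempty ∧ (G.induce (↑σ : Set (Fin n))).Connected ∧
        ∀ i ∈ σ, doutDeg G σ i + 1 ≤ b i := by
  have hset : {f | ∃ σ : Finset (Fin n), σ.Nonempty ∧ (G.induce (↑σ : Set (Fin n))).Connected ∧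
      f = ∏ i ∈ σ, (X i : MvPolynomial (Fin n) K) ^ (doutDeg G σ i + 1)}
      = (fun s => monomial s (1 : K)) '' {d | ∃ σ : Finset (Fin n), σ.Nonempty ∧
          (G.induce (↑σ : Set (Fin n))).Connected ∧
          d = ∑ i ∈ σ, Finsupp.single i (doutDeg G σ i + 1)} := by
    ext f
    constructor
    · rintro ⟨σ, h1, h2, rfl⟩
      exact ⟨_, ⟨σ, h1, h2, rfl⟩, (prod_X_powA σ _).symm⟩
    · rintro ⟨d, ⟨σ, h1, h2, rfl⟩, rfl⟩
      exact ⟨σ, h1, h2, (prod_X_powA σ _).symm⟩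
  rw [treeIdeal, hset, mem_ideal_span_monomial_image, prod_X_powA Finset.univ b,
    support_monomial, if_neg one_ne_zero]
  simp only [Finset.mem_singleton, forall_eq]
  constructor
  · rintro ⟨si, ⟨σ, h1, h2, rfl⟩, hle⟩
    refine ⟨σ, h1, h2, fun i hi => ?_⟩
    have h := hle i
    rwa [sum_single_applyA, sum_single_applyA, if_pos hi, if_pos (Finset.mem_univ i)] at h
  · rintro ⟨σ, h1, h2, h3⟩
    refine ⟨_, ⟨σ, h1, h2, rfl⟩, ?_⟩
    intro j
    rw [sum_single_applyA, sum_single_applyA, if_pos (Finset.mem_univ j)]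
    split_ifs with hj
    · exact h3 j hj
    · exact Nat.zero_le _

lemma induce_connectedA {n : ℕ} (G : SimpleGraph (Fin n)) (S : Finset (Fin n)) (v₀ : Fin n)
    (hv₀ : v₀ ∈ S)
    (h : ∀ u ∈ S, Relation.ReflTransGen (fun x y => x ∈ S ∧ y ∈ S ∧ G.Adj x y) v₀ u) :
    (G.induce (↑S : Set (Fin n))).Connected := by
  rw [SimpleGraph.connected_iff]
  have key : ∀ x, Relation.ReflTransGen (fun x y => x ∈ S ∧ y ∈ S ∧ G.Adj x y) v₀ x →
      ∀ hx : x ∈ S, (G.induce (↑S : Set (Fin n))).Reachable ⟨v₀, hv₀⟩ ⟨x, hx⟩ := by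
    intro x hrx
    induction hrx with
    | refl => intro _; exact SimpleGraph.Reachable.refl _
    | tail h₁ h₂ ih =>
        intro hx
        refine (ih h₂.1).trans (SimpleGraph.Adj.reachable ?_)
        exact h₂.2.2
  refine ⟨fun u w => ?_, ⟨⟨v₀, hv₀⟩⟩⟩
  obtain ⟨u, hu⟩ := u
  obtain ⟨w, hw⟩ := w
  exact (key u (h u hu) hu).symm.trans (key w (h w hw) hw)

lemma exists_sinkA {n : ℕ} {O : Fin n → Fin n → Prop} (hac : IsAcyclicRel O)
    (σ : Finset (Fin n)) (hσ : σ.Nonempty) : ∃ i ∈ σ, ∀ j ∈ σ, ¬ O i j := by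
  induction σ using Finset.strongInduction with
  | _ σ ih =>
    obtain ⟨v, hv⟩ := hσ
    set σ' := σ.filter (fun j => Relation.TransGen O v j) with hσ'
    by_cases hne : σ'.Nonempty
    · have hss : σ' ⊂ σ := by
        refine Finset.ssubset_iff_of_subset (Finset.filter_subset _ _) |>.mpr ?_
        exact ⟨v, hv, by simp [hσ', hac v]⟩
      obtain ⟨i, hi, hsink⟩ := ih σ' hss hne
      refine ⟨i, (Finset.mem_filter.mp hi).1, fun j hj hOij => ?_⟩
      have hvi : Relation.TransGen O v i := (Finset.mem_filter.mp hi).2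
      exact hsink j (Finset.mem_filter.mpr ⟨hj, hvi.tail hOij⟩) hOij
    · refine ⟨v, hv, fun j hj hOvj => ?_⟩
      exact hne ⟨j, Finset.mem_filter.mpr ⟨hj, Relation.TransGen.single hOvj⟩⟩

lemma sink_boundA {n : ℕ} {G : SimpleGraph (Fin n)} {O : Fin n → Fin n → Prop}
    (hor : IsOrientation G O) (hac : IsAcyclicRel O) (σ : Finset (Fin n)) (hσ : σ.Nonempty) :
    ∃ i ∈ σ, outDeg O i ≤ doutDeg G σ i := by
  obtain ⟨i, hi, hsink⟩ := exists_sinkA hac σ hσ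
  refine ⟨i, hi, ?_⟩
  rw [outDeg, doutDeg]
  apply Set.ncard_le_ncard _ (Set.toFinite _)
  intro j hj
  refine ⟨fun hjσ => hsink j hjσ hj, hor.1 i j hj⟩

-- ⇐ part 2: the criterion holds for outdeg + e i₀, witnessed by the vertices reaching i₀

lemma reach_setA {n : ℕ} {G : SimpleGraph (Fin n)} {O : Fin n → Fin n → Prop}
    (hor : IsOrientation G O) (i₀ : Fin n) :
    ∃ σ : Finset (Fin n), σ.Nonempty ∧ (G.induce (↑σ : Set (Fin n))).Connected ∧
      ∀ i ∈ σ, doutDeg G σ i + 1 ≤ outDeg O i + (if i = i₀ then 1 else 0) := by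
  set σ : Finset (Fin n) := Finset.univ.filter (fun i => Relation.ReflTransGen O i i₀) with hσ
  have hmem : ∀ i, i ∈ σ ↔ Relation.ReflTransGen O i i₀ := by
    intro i; simp [hσ]
  have hi₀ : i₀ ∈ σ := (hmem i₀).mpr Relation.ReflTransGen.refl
  have hsub : ∀ i ∈ σ, {j : Fin n | j ∉ σ ∧ G.Adj i j} ⊆ {j : Fin n | O i j} := by
    intro i hi j hj
    obtain ⟨hjσ, hadj⟩ := hj
    by_contra hn
    have hOji : O j i := not_not.mp (fun hn2 => hn ((hor.2 i j hadj).mpr hn2))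
    exact hjσ ((hmem j).mpr (Relation.ReflTransGen.head hOji ((hmem i).mp hi)))
  refine ⟨σ, ⟨i₀, hi₀⟩, ?_, ?_⟩
  · -- connectivity
    apply induce_connectedA G σ i₀ hi₀
    have key : ∀ u, Relation.ReflTransGen O u i₀ →
        Relation.ReflTransGen (fun x y => x ∈ σ ∧ y ∈ σ ∧ G.Adj x y) u i₀ := by
      intro u hu
      induction hu using Relation.ReflTransGen.head_induction_on with
      | refl => exact Relation.ReflTransGen.refl
      | head h' hrest ih =>
          rename_i x c
          refine Relation.ReflTransGen.head ⟨?_, ?_, ?_⟩ ih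
          · exact (hmem x).mpr (Relation.ReflTransGen.head h' hrest)
          · exact (hmem c).mpr hrest
          · exact hor.1 _ _ h'
    intro u hu
    have hsymm : Symmetric (fun x y => x ∈ σ ∧ y ∈ σ ∧ G.Adj x y) := by
      rintro x y ⟨h1, h2, h3⟩; exact ⟨h2, h1, h3.symm⟩
    exact (@Relation.ReflTransGen.stdSymm _ _ ⟨fun x y h => hsymm h⟩).symm _ _ (key u ((hmem u).mp hu))
  · intro i hi
    rcases eq_or_ne i i₀ with rfl | hne
    · rw [if_pos rfl]
      have := Set.ncard_le_ncard (hsub i hi) (Set.toFinite _)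
      rw [doutDeg, outDeg]
      omega
    · rw [if_neg hne]
      -- find the first step of a path from i to i₀
      obtain (h' | ⟨c, hic, hci₀⟩) := Relation.ReflTransGen.cases_head ((hmem i).mp hi)
      · exact absurd h' hne
      have hcσ : c ∈ σ := (hmem c).mpr hci₀
      have hinsert : insert c {j : Fin n | j ∉ σ ∧ G.Adj i j} ⊆ {j : Fin n | O i j} := by
        intro j hj
        rcases Set.mem_insert_iff.mp hj with rfl | hj
        · exact hic
        · exact hsub i hi hj
      have hcn : c ∉ {j : Fin n | j ∉ σ ∧ G.Adj i j} := fun hc => hc.1 hcσ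
      have h1 : ({j : Fin n | j ∉ σ ∧ G.Adj i j}).ncard + 1
          = (insert c {j : Fin n | j ∉ σ ∧ G.Adj i j}).ncard := by
        rw [Set.ncard_insert_of_notMem hcn (Set.toFinite _)]
      have h2 := Set.ncard_le_ncard hinsert (Set.toFinite _)
      rw [doutDeg, outDeg]
      omega

lemma component_peelA {n : ℕ} {G : SimpleGraph (Fin n)} {a : Fin n → ℕ}
    (Hglob : ∀ σ : Finset (Fin n), σ.Nonempty → (G.induce (↑σ : Set (Fin n))).Connected →
      ∃ i ∈ σ, a i ≤ doutDeg G σ i) :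
    ∀ S : Finset (Fin n), S.Nonempty → ∃ v ∈ S, a v ≤ doutDeg G S v := by
  intro S hS
  obtain ⟨v₀, hv₀⟩ := hS
  set R : Fin n → Fin n → Prop := fun x y => x ∈ S ∧ y ∈ S ∧ G.Adj x y with hR
  set C : Finset (Fin n) := S.filter (fun u => Relation.ReflTransGen R v₀ u) with hC
  have hCS : C ⊆ S := Finset.filter_subset _ _
  have hv₀C : v₀ ∈ C := Finset.mem_filter.mpr ⟨hv₀, Relation.ReflTransGen.refl⟩
  have upgrade : ∀ x, Relation.ReflTransGen R v₀ x →
      Relation.ReflTransGen (fun p q => p ∈ C ∧ q ∈ C ∧ G.Adj p q) v₀ x := by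
    intro x hx
    induction hx with
    | refl => exact Relation.ReflTransGen.refl
    | tail hvb hbc ih =>
        refine ih.tail ⟨?_, ?_, hbc.2.2⟩
        · exact Finset.mem_filter.mpr ⟨hbc.1, hvb⟩
        · exact Finset.mem_filter.mpr ⟨hbc.2.1, hvb.tail hbc⟩
  have hconn : (G.induce (↑C : Set (Fin n))).Connected := by
    apply induce_connectedA G C v₀ hv₀C
    intro u hu
    exact upgrade u (Finset.mem_filter.mp hu).2
  obtain ⟨i, hiC, hile⟩ := Hglob C ⟨v₀, hv₀C⟩ hconn
  refine ⟨i, hCS hiC, ?_⟩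
  have hEq : doutDeg G C i = doutDeg G S i := by
    rw [doutDeg, doutDeg]
    congr 1
    ext j
    simp only [Set.mem_setOf_eq]
    constructor
    · rintro ⟨hjC, hadj⟩
      refine ⟨fun hjS => hjC ?_, hadj⟩
      exact Finset.mem_filter.mpr ⟨hjS,
        (Finset.mem_filter.mp hiC).2.tail ⟨hCS hiC, hjS, hadj⟩⟩
    · rintro ⟨hjS, hadj⟩
      exact ⟨fun hjC => hjS (hCS hjC), hadj⟩
  rwa [hEq] at hile

-- orientations from injective rank functions

lemma rank_orientA {n : ℕ} (G : SimpleGraph (Fin n)) (r : Fin n → ℕ)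
    (hr : Function.Injective r) :
    IsOrientation G (fun i j => G.Adj i j ∧ r j < r i) ∧
      IsAcyclicRel (fun i j => G.Adj i j ∧ r j < r i) := by
  constructor
  · constructor
    · exact fun u v h => h.1
    · intro u v hadj
      have hne : r u ≠ r v := fun h => (G.ne_of_adj hadj) (hr h)
      constructor
      · rintro ⟨_, h1⟩ ⟨_, h2⟩; omega
      · intro h
        refine ⟨hadj, ?_⟩
        rcases hne.lt_or_gt with h' | h'
        · exact absurd ⟨hadj.symm, h'⟩ h
        · exact h'
  · intro v hv
    have : ∀ x y, Relation.TransGen (fun i j => G.Adj i j ∧ r j < r i) x y → r y < r x := by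
      intro x y h
      induction h with
      | single h => exact h.2
      | tail _ h ih => exact lt_trans h.2 ih
    exact absurd (this v v hv) (lt_irrefl _)

lemma peelA {n : ℕ} {G : SimpleGraph (Fin n)} {a : Fin n → ℕ}
    (H : ∀ S : Finset (Fin n), S.Nonempty → ∃ v ∈ S, a v ≤ doutDeg G S v) :
    ∀ S : Finset (Fin n), ∃ r : Fin n → ℕ,
      Set.InjOn r ↑S ∧ (∀ i ∈ S, n - S.card ≤ r i ∧ r i < n) ∧
      ∀ i ∈ S, a i ≤ (Finset.univ.filter (fun j => G.Adj i j ∧ (j ∉ S ∨ r j < r i))).card := by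
  intro S
  induction S using Finset.strongInduction with
  | _ S ih =>
    rcases S.eq_empty_or_nonempty with rfl | hne
    · exact ⟨fun _ => 0, by simp [Set.InjOn], by simp, by simp⟩
    · obtain ⟨v, hv, hav⟩ := H S hne
      obtain ⟨r', hinj', hbd', hcnt'⟩ := ih (S.erase v) (Finset.erase_ssubset hv)
      have hcard : S.card ≤ n := by
        simpa using Finset.card_le_card (Finset.subset_univ S)
      have hcard1 : 1 ≤ S.card := Finset.card_pos.mpr hne
      have hecard : (S.erase v).card = S.card - 1 := Finset.card_erase_of_mem hv
      set r : Fin n → ℕ := Function.update r' v (n - S.card) with hr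
      have hrv : r v = n - S.card := Function.update_self _ _ _
      have hrne : ∀ i, i ≠ v → r i = r' i := fun i hi => Function.update_of_ne hi _ _
      have hbig : ∀ i ∈ S, i ≠ v → n - S.card < r i := by
        intro i hi hiv
        have := (hbd' i (Finset.mem_erase.mpr ⟨hiv, hi⟩)).1
        rw [hecard] at this
        rw [hrne i hiv]
        omega
      refine ⟨r, ?_, ?_, ?_⟩
      · intro i hi j hj hij
        simp only [Finset.coe_mem, Finset.mem_coe] at hi hj
        by_cases hiv : i = v <;> by_cases hjv : j = v
        · rw [hiv, hjv]
        · exfalso; rw [hiv, hrv] at hij; have := hbig j hj hjv; omega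
        · exfalso; rw [hjv, hrv] at hij; have := hbig i hi hiv; omega
        · exact hinj' (Finset.mem_erase.mpr ⟨hiv, hi⟩) (Finset.mem_erase.mpr ⟨hjv, hj⟩)
            (by rwa [hrne i hiv, hrne j hjv] at hij)
      · intro i hi
        by_cases hiv : i = v
        · rw [hiv, hrv]; omega
        · have := hbd' i (Finset.mem_erase.mpr ⟨hiv, hi⟩)
          rw [hecard] at this
          rw [hrne i hiv]
          omega
      · intro i hi
        by_cases hiv : i = v
        · subst hiv
        -- a i ≤ doutDeg G S i = card filter (j ∉ S ∧ Adj i j) ≤ card target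
          refine le_trans hav ?_
          rw [doutDeg, ncard_eqA]
          apply Finset.card_le_card
          intro j hj
          simp only [Finset.mem_filter, Finset.mem_univ, true_and] at hj ⊢
          exact ⟨hj.2, Or.inl hj.1⟩
        · refine le_trans (hcnt' i (Finset.mem_erase.mpr ⟨hiv, hi⟩)) ?_
          apply Finset.card_le_card
          intro j hj
          simp only [Finset.mem_filter, Finset.mem_univ, true_and] at hj ⊢
          refine ⟨hj.1, ?_⟩
          rcases hj.2 with hjo | hjlt
          · rw [Finset.mem_erase, not_and_or, not_not] at hjo
            rcases hjo with rfl | hjo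
            · right
              rw [hrv, hrne i hiv]
              have := hbig i hi hiv
              rw [hrne i hiv] at this
              omega
            · exact Or.inl hjo
          · right
            rcases eq_or_ne j v with rfl | hjv
            · rw [hrv]; exact lt_of_le_of_lt (Nat.sub_le_sub_left (le_refl _) n |>.trans (le_refl _)) (by
                rw [hrne i hiv]; have := hbig _ hi hiv; rw [hrne i hiv] at this; exact this)
            · rw [hrne j hjv, hrne i hiv]; exact hjlt

lemma uniqA {n : ℕ} {G : SimpleGraph (Fin n)} (O O' : Fin n → Fin n → Prop)
    (hO : IsOrientation G O) (hacO : IsAcyclicRel O)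
    (hO' : IsOrientation G O') (_hacO' : IsAcyclicRel O')
    (h : ∀ i, outDeg O i = outDeg O' i) : O = O' := by
  by_contra hne
  set D : Fin n → Fin n → Prop := fun x y => O x y ∧ O' y x with hD
  -- D nonempty
  have flipO : ∀ u v, G.Adj u v → ¬ O u v → O v u := fun u v hadj hn =>
    not_not.mp (fun hn2 => hn ((hO.2 u v hadj).mpr hn2))
  have flipO' : ∀ u v, G.Adj u v → ¬ O' u v → O' v u := fun u v hadj hn =>
    not_not.mp (fun hn2 => hn ((hO'.2 u v hadj).mpr hn2))
  have hneUV : ∃ u v, D u v := by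
    by_contra hc
    push_neg at hc
    apply hne
    funext u v
    apply propext
    constructor
    · intro hOuv
      by_contra hnuv
      exact hc u v ⟨hOuv, flipO' u v (hO.1 u v hOuv) hnuv⟩
    · intro hOuv
      by_contra hnuv
      exact hc v u ⟨flipO u v (hO'.1 u v hOuv) hnuv, hOuv⟩
  -- degree balance
  have key : ∀ i, (Finset.univ.filter (fun j => D i j)).card
      = (Finset.univ.filter (fun j => D j i)).card := by
    intro i
    have e1 : (Finset.univ.filter (fun j => O i j)).card
        = (Finset.univ.filter (fun j => O i j ∧ O' i j)).card
          + (Finset.univ.filter (fun j => D i j)).card := by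
      rw [← Finset.card_union_of_disjoint]
      · congr 1
        ext j
        simp only [Finset.mem_union, Finset.mem_filter, Finset.mem_univ, true_and, hD]
        constructor
        · intro hj
          by_cases h' : O' i j
          · exact Or.inl ⟨hj, h'⟩
          · exact Or.inr ⟨hj, flipO' i j (hO.1 i j hj) h'⟩
        · rintro (⟨hj, _⟩ | ⟨hj, _⟩) <;> exact hj
      · rw [Finset.disjoint_filter]
        rintro j _ ⟨hOij, hO'ij⟩ ⟨_, hO'ji⟩
        exact ((hO'.2 i j (hO.1 i j hOij)).mp hO'ij) hO'ji
    have e2 : (Finset.univ.filter (fun j => O' i j)).card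
        = (Finset.univ.filter (fun j => O i j ∧ O' i j)).card
          + (Finset.univ.filter (fun j => D j i)).card := by
      rw [← Finset.card_union_of_disjoint]
      · congr 1
        ext j
        simp only [Finset.mem_union, Finset.mem_filter, Finset.mem_univ, true_and, hD]
        constructor
        · intro hj
          by_cases h' : O i j
          · exact Or.inl ⟨h', hj⟩
          · exact Or.inr ⟨flipO i j (hO'.1 i j hj) h', hj⟩
        · rintro (⟨_, hj⟩ | ⟨_, hj⟩) <;> exact hj
      · rw [Finset.disjoint_filter]
        rintro j _ ⟨hOij, hO'ij⟩ ⟨hOji, _⟩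
        exact ((hO.2 i j (hO.1 i j hOij)).mp hOij) hOji
    have hdeg : (Finset.univ.filter (fun j => O i j)).card
        = (Finset.univ.filter (fun j => O' i j)).card := by
      have hh := h i
      rw [outDeg, outDeg, ncard_eqA (fun j => O i j), ncard_eqA (fun j => O' i j)] at hh
      exact hh
    omega
  -- build infinite walk
  set T : Fin n → Prop := fun x => ∃ y, D y x with hT
  have step : ∀ x, T x → ∃ z, D x z ∧ T z := by
    intro x ⟨y, hy⟩
    have h1 : 0 < (Finset.univ.filter (fun j => D j x)).card :=
      Finset.card_pos.mpr ⟨y, Finset.mem_filter.mpr ⟨Finset.mem_univ _, hy⟩⟩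
    rw [← key] at h1
    obtain ⟨z, hz⟩ := Finset.card_pos.mp h1
    exact ⟨z, (Finset.mem_filter.mp hz).2, ⟨x, (Finset.mem_filter.mp hz).2⟩⟩
  obtain ⟨u, v, huv⟩ := hneUV
  choose nxt hnxt1 hnxt2 using step
  have hTv : T v := ⟨u, huv⟩
  let f : ℕ → {x : Fin n // T x} := fun k =>
    Nat.rec ⟨v, hTv⟩ (fun _ p => ⟨nxt p.1 p.2, hnxt2 p.1 p.2⟩) k
  have hstep : ∀ k, D (f k).1 (f (k + 1)).1 := fun k => hnxt1 (f k).1 (f k).2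
  have htg : ∀ k l, k < l → Relation.TransGen O (f k).1 (f l).1 := by
    intro k l
    induction l with
    | zero => omega
    | succ m ih =>
        intro hkl
        rcases Nat.lt_succ_iff_lt_or_eq.mp hkl with h' | h'
        · exact (ih h').tail (hstep m).1
        · cases h'; exact Relation.TransGen.single (hstep k).1
  obtain ⟨x, y, hxy, hfeq⟩ := Finite.exists_ne_map_eq_of_infinite (fun k => (f k).1)
  rcases hxy.lt_or_gt with h' | h'
  · exact hacO _ (hfeq ▸ htg x y h')
  · exact hacO _ (hfeq ▸ htg y x h')

end Aux

section Main

attribute [local instance 10] Classical.propDecidable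

open Finset Relation

theorem stmt9 (n : ℕ) (G : SimpleGraph (Fin n)) (K : Type*) [Field K] (a : Fin n → ℕ) :
    (((∏ i, (X i : MvPolynomial (Fin n) K) ^ a i) ∉ treeIdeal n G K ∧
      ∀ i₀ : Fin n,
        (∏ i, (X i : MvPolynomial (Fin n) K) ^ ((a + Pi.single i₀ 1 : Fin n → ℕ) i)) ∈ treeIdeal n G K) ↔
      ∃ O : Fin n → Fin n → Prop, IsOrientation G O ∧ IsAcyclicRel O ∧
        ∀ i, a i = outDeg O i) ∧
    (∀ O O' : Fin n → Fin n → Prop,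
      IsOrientation G O → IsAcyclicRel O → IsOrientation G O' → IsAcyclicRel O' →
      (∀ i, outDeg O i = outDeg O' i) → O = O') := by
  constructor
  · constructor
    · rintro ⟨hnot, hall⟩
      have Hglob : ∀ σ : Finset (Fin n), σ.Nonempty →
          (G.induce (↑σ : Set (Fin n))).Connected → ∃ i ∈ σ, a i ≤ doutDeg G σ i := by
        intro σ h1 h2
        by_contra hc
        push_neg at hc
        refine hnot ((mem_treeIdeal_iffA G K a).mpr ⟨σ, h1, h2, fun i hi => hc i hi⟩)
      obtain ⟨r, hinj, _, hcnt⟩ := peelA (component_peelA Hglob) Finset.univ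
      have hrInj : Function.Injective r := fun x y h =>
        hinj (by simp) (by simp) h
      obtain ⟨hor, hac⟩ := rank_orientA G r hrInj
      set O : Fin n → Fin n → Prop := fun i j => G.Adj i j ∧ r j < r i with hO
      have hab : ∀ i, a i ≤ outDeg O i := by
        intro i
        rw [outDeg, ncard_eqA (fun j => O i j)]
        refine le_trans (hcnt i (Finset.mem_univ i)) (Finset.card_le_card ?_)
        intro j hj
        simp only [Finset.mem_filter, Finset.mem_univ, true_and] at hj ⊢
        refine ⟨hj.1, ?_⟩
        rcases hj.2 with h' | h'
        · exact absurd trivial h'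
        · exact h'
      have hba : ∀ i₀, outDeg O i₀ ≤ a i₀ := by
        intro i₀
        by_contra h
        push_neg at h
        obtain ⟨σ, h1, h2, h3⟩ := (mem_treeIdeal_iffA G K _).mp (hall i₀)
        obtain ⟨i, hi, hle⟩ := sink_boundA hor hac σ h1
        have h4 := h3 i hi
        rw [Pi.add_apply] at h4
        rcases eq_or_ne i i₀ with rfl | hne
        · rw [Pi.single_eq_same] at h4
          omega
        · rw [Pi.single_eq_of_ne hne] at h4
          have := hab i
          omega
      exact ⟨O, hor, hac, fun i => le_antisymm (hab i) (hba i)⟩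
    · rintro ⟨O, hor, hac, ha⟩
      constructor
      · intro hmem
        obtain ⟨σ, h1, h2, h3⟩ := (mem_treeIdeal_iffA G K a).mp hmem
        obtain ⟨i, hi, hle⟩ := sink_boundA hor hac σ h1
        have := h3 i hi
        rw [ha i] at this
        omega
      · intro i₀
        rw [mem_treeIdeal_iffA]
        obtain ⟨σ, h1, h2, h3⟩ := reach_setA hor i₀
        refine ⟨σ, h1, h2, fun i hi => ?_⟩
        have h4 := h3 i hi
        rw [Pi.add_apply, ha i]
        rcases eq_or_ne i i₀ with rfl | hne
        · rw [Pi.single_eq_same]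
          rw [if_pos rfl] at h4
          omega
        · rw [Pi.single_eq_of_ne hne]
          rw [if_neg hne] at h4
          omega
  · exact fun O O' h1 h2 h3 h4 h5 => uniqA O O' h1 h2 h3 h4 h5

end Main
end

section
/- For every n ≥ 1, (n+1)^{n−1} = Σ_{π} n! / (∏_{B ∈ π} |B|!), where the sum runs over all non-crossing partitions π of the totally ordered set {1,…,n} and the product runs over the blocks B of π. -/
/-- `π` is a non-crossing partition of `{1,…,n}` (encoded as `Fin n`), given as its set of
blocks: blocks are nonempty, every element lies in exactly one block, and there are no
`a < b < c < d` with `a, c` in one block and `b, d` in a different block. -/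
def IsNCPartition (n : ℕ) (π : Finset (Finset (Fin n))) : Prop :=
  (∀ B ∈ π, B.Nonempty) ∧
  (∀ a : Fin n, ∃! B : Finset (Fin n), B ∈ π ∧ a ∈ B) ∧
  ¬ ∃ a b c d : Fin n, ∃ B ∈ π, ∃ B' ∈ π, B ≠ B' ∧
      a < b ∧ b < c ∧ c < d ∧ a ∈ B ∧ c ∈ B ∧ b ∈ B' ∧ d ∈ B'



open Finset

variable {n : ℕ}

/-- Interval sum condition: the sum of `s` over `[m, j]` is at least `j - m + 1`. -/
def Msum (s : Fin n → ℕ) (m j : Fin n) : Prop :=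
  (j : ℕ) - (m : ℕ) + 1 ≤ ∑ i ∈ Finset.Icc m j, s i

instance (s : Fin n → ℕ) (m j : Fin n) : Decidable (Msum s m j) := by
  unfold Msum; infer_instance

/-- Ballot condition for `s`. -/
def IsBallot (s : Fin n → ℕ) : Prop :=
  ∀ k : Fin n, (k : ℕ) + 1 ≤ ∑ j ∈ Finset.Iic k, s j

instance IsBallot.dec (s : Fin n → ℕ) : Decidable (IsBallot s) := by
  unfold IsBallot; infer_instance

/-- Candidate block-min of `j` for ballot data `s`. -/
noncomputable def mus (s : Fin n → ℕ) (j : Fin n) : Fin n :=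
  if h : ((Finset.univ : Finset (Fin n)).filter fun m => m ≤ j ∧ Msum s m j).Nonempty
  then Finset.max' _ h else j

lemma Icc_split {m j j' : Fin n} (h1 : m ≤ j) (h2 : j ≤ j') :
    Finset.Icc m j' = Finset.Icc m j ∪ Finset.Ioc j j' := by
  ext x
  simp only [mem_Icc, mem_union, mem_Ioc, Fin.le_def, Fin.lt_def] at *
  omega

lemma sum_Icc_split (s : Fin n → ℕ) {m j j' : Fin n} (h1 : m ≤ j) (h2 : j ≤ j') :
    ∑ i ∈ Finset.Icc m j', s i = (∑ i ∈ Finset.Icc m j, s i) + ∑ i ∈ Finset.Ioc j j', s i := by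
  rw [Icc_split h1 h2, Finset.sum_union]
  rw [Finset.disjoint_left]
  intro a ha ha'
  simp only [mem_Icc, mem_Ioc] at ha ha'
  exact absurd ha.2 (not_le.2 ha'.1)

/-- From a positive sum over `Ioc x y`, extract the first index with positive value. -/
lemma exists_head (s : Fin n → ℕ) {x y : Fin n}
    (hpos : 0 < ∑ i ∈ Finset.Ioc x y, s i) :
    ∃ m'', m'' ∈ Finset.Ioc x y ∧ s m'' ≠ 0 ∧
      ∑ i ∈ Finset.Icc m'' y, s i = ∑ i ∈ Finset.Ioc x y, s i := by
  have hne : ((Finset.Ioc x y).filter fun i => s i ≠ 0).Nonempty := by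
    by_contra h
    rw [Finset.not_nonempty_iff_eq_empty, Finset.filter_eq_empty_iff] at h
    have : ∑ i ∈ Finset.Ioc x y, s i = 0 :=
      Finset.sum_eq_zero fun i hi => not_not.1 (h hi)
    omega
  refine ⟨Finset.min' _ hne, ?_, ?_, ?_⟩
  · exact (Finset.mem_filter.1 (Finset.min'_mem _ hne)).1
  · exact (Finset.mem_filter.1 (Finset.min'_mem _ hne)).2
  · set m'' := Finset.min' _ hne with hm''
    have hmem : m'' ∈ Finset.Ioc x y := (Finset.mem_filter.1 (Finset.min'_mem _ hne)).1
    rw [Finset.mem_Ioc] at hmem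
    apply Finset.sum_subset
    · intro i hi
      rw [Finset.mem_Icc] at hi
      rw [Finset.mem_Ioc]
      exact ⟨lt_of_lt_of_le hmem.1 hi.1, hi.2⟩
    · intro i hi hni
      rw [Finset.mem_Ioc] at hi
      rw [Finset.mem_Icc] at hni
      by_contra hsi
      have : m'' ≤ i := Finset.min'_le _ _ (Finset.mem_filter.2 ⟨Finset.mem_Ioc.2 hi, hsi⟩)
      exact hni ⟨this, hi.2⟩

section MusLemmas

variable {s : Fin n → ℕ} (hb : IsBallot s)

include hb

lemma mus_le (j : Fin n) : mus s j ≤ j ∧ Msum s (mus s j) j := by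
  have h0 : (⟨0, j.pos⟩ : Fin n) ∈ (Finset.univ : Finset (Fin n)).filter
      fun m => m ≤ j ∧ Msum s m j := by
    refine Finset.mem_filter.2 ⟨Finset.mem_univ _, Fin.mk_le_of_le_val (Nat.zero_le _), ?_⟩
    have hIcc : Finset.Icc (⟨0, j.pos⟩ : Fin n) j = Finset.Iic j := by
      ext x
      simp only [Finset.mem_Icc, Finset.mem_Iic, Fin.le_def]
      omega
    unfold Msum
    rw [hIcc]
    simpa using hb j
  have hne : ((Finset.univ : Finset (Fin n)).filter fun m => m ≤ j ∧ Msum s m j).Nonempty :=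
    ⟨_, h0⟩
  rw [mus, dif_pos hne]
  have := Finset.max'_mem _ hne
  rw [Finset.mem_filter] at this
  exact this.2

lemma le_mus {m j : Fin n} (hm : m ≤ j) (hM : Msum s m j) : m ≤ mus s j := by
  have hmem : m ∈ (Finset.univ : Finset (Fin n)).filter fun m => m ≤ j ∧ Msum s m j :=
    Finset.mem_filter.2 ⟨Finset.mem_univ _, hm, hM⟩
  rw [mus, dif_pos ⟨_, hmem⟩]
  exact Finset.le_max' _ _ hmem

lemma mus_fix {j : Fin n} (hj : s j ≠ 0) : mus s j = j := by
  have h : Msum s j j := by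
    unfold Msum
    rw [Finset.Icc_self, Finset.sum_singleton]
    omega
  exact le_antisymm (mus_le hb j).1 (le_mus hb le_rfl h)

lemma mus_pos (j : Fin n) : s (mus s j) ≠ 0 := by
  obtain ⟨h1, h2⟩ := mus_le hb j
  set m := mus s j with hm
  intro hzero
  rcases eq_or_lt_of_le h1 with heq | hlt
  · unfold Msum at h2
    rw [heq] at h2 hzero
    rw [Finset.Icc_self, Finset.sum_singleton, hzero] at h2
    omega
  · -- m < j, s m = 0
    unfold Msum at h2
    have hsplit : ∑ i ∈ Finset.Icc m j, s i = s m + ∑ i ∈ Finset.Ioc m j, s i := by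
      rw [sum_Icc_split s le_rfl h1, Finset.Icc_self, Finset.sum_singleton]
    have hIoc : (j : ℕ) - (m : ℕ) + 1 ≤ ∑ i ∈ Finset.Ioc m j, s i := by omega
    have hpos : 0 < ∑ i ∈ Finset.Ioc m j, s i := by omega
    obtain ⟨m'', hmem, hspos, hsum⟩ := exists_head s hpos
    rw [Finset.mem_Ioc] at hmem
    have hM'' : Msum s m'' j := by
      unfold Msum
      rw [hsum]
      have : (m : ℕ) ≤ (m'' : ℕ) := le_of_lt (Fin.lt_def.1 hmem.1)
      omega
    have := le_mus hb hmem.2 hM''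
    exact absurd (lt_of_lt_of_le hmem.1 this) (lt_irrefl _)

lemma mus_idem (j : Fin n) : mus s (mus s j) = mus s j :=
  mus_fix hb (mus_pos hb j)

/-- Key structural lemma: if `mus s j' = m` and `m ≤ j ≤ j'` then `m ≤ mus s j`. -/
lemma mus_diamond {m j j' : Fin n} (h : mus s j' = m) (h1 : m ≤ j) (h2 : j ≤ j') :
    m ≤ mus s j := by
  by_contra hlt
  push_neg at hlt
  -- show Msum s m j, contradiction with maximality giving mus s j ≥ m
  have hMj' : Msum s m j' := by rw [← h]; exact (mus_le hb j').2
  have hnM : ¬ Msum s m j := fun hM => absurd (le_mus hb h1 hM) (not_le.2 hlt)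
  unfold Msum at hMj' hnM
  push_neg at hnM
  have hsplit := sum_Icc_split s h1 h2
  have hm_le_j : (m : ℕ) ≤ (j : ℕ) := Fin.le_def.1 h1
  have hj_le_j' : (j : ℕ) ≤ (j' : ℕ) := Fin.le_def.1 h2
  have hIoc : (j' : ℕ) - (j : ℕ) + 1 ≤ ∑ i ∈ Finset.Ioc j j', s i := by omega
  have hpos : 0 < ∑ i ∈ Finset.Ioc j j', s i := by omega
  obtain ⟨m'', hmem, hspos, hsum⟩ := exists_head s hpos
  rw [Finset.mem_Ioc] at hmem
  have hM'' : Msum s m'' j' := by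
    unfold Msum
    rw [hsum]
    have : (j : ℕ) < (m'' : ℕ) := Fin.lt_def.1 hmem.1
    omega
  have hle := le_mus hb hmem.2 hM''
  rw [h] at hle
  exact absurd (lt_of_le_of_lt (hle.trans h1) hmem.1) (lt_irrefl _)

end MusLemmas


open Finset

variable {n : ℕ}

/-- Fiber cardinality of `g` at `j`. -/
def fibc (g : Fin n → Fin n) (j : Fin n) : ℕ :=
  ((Finset.univ : Finset (Fin n)).filter fun i => g i = j).card

lemma sum_fibc (g : Fin n → Fin n) (A : Finset (Fin n)) :
    ∑ j ∈ A, fibc g j = ((Finset.univ : Finset (Fin n)).filter fun x => g x ∈ A).card := by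
  rw [Finset.card_eq_sum_card_fiberwise (f := g)
    (s := (Finset.univ : Finset (Fin n)).filter fun x => g x ∈ A)
    (t := A) (fun x hx => (Finset.mem_filter.1 hx).2)]
  refine Finset.sum_congr rfl fun j hj => ?_
  unfold fibc
  congr 1
  ext x
  simp only [Finset.mem_filter, Finset.mem_univ, true_and]
  constructor
  · intro hx; exact ⟨hx ▸ hj, hx⟩
  · rintro ⟨-, hx⟩; exact hx

lemma sum_fibc_univ (g : Fin n → Fin n) :
    ∑ j, fibc g j = n := by
  rw [sum_fibc g Finset.univ]
  simp

section FibCard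

variable {s : Fin n → ℕ} (hb : IsBallot s) (hsum : ∑ j, s j = n)

include hb

lemma fibc_mus_le (m : Fin n) : fibc (mus s) m ≤ s m := by
  rcases Nat.eq_zero_or_pos (s m) with hz | hpos
  · have : ((Finset.univ : Finset (Fin n)).filter fun i => mus s i = m) = ∅ := by
      rw [Finset.filter_eq_empty_iff]
      intro j _ hj
      exact mus_pos hb j (hj ▸ hz)
    rw [fibc, this]
    simp
  · set v : Fin n → ℕ := fun j => (∑ i ∈ Finset.Icc m j, s i) - ((j : ℕ) - (m : ℕ)) with hv
    -- facts about elements of the fiber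
    have hfib : ∀ j : Fin n, mus s j = m → m ≤ j ∧ 1 ≤ v j ∧ v j ≤ s m := by
      intro j hj
      have hmj : m ≤ j := hj ▸ (mus_le hb j).1
      have hM : Msum s m j := hj ▸ (mus_le hb j).2
      unfold Msum at hM
      have hmj' : (m : ℕ) ≤ (j : ℕ) := Fin.le_def.1 hmj
      refine ⟨hmj, by simp only [hv]; omega, ?_⟩
      rcases eq_or_lt_of_le hmj with heq | hlt
      · simp only [hv, ← heq, Finset.Icc_self, Finset.sum_singleton]
        omega
      · have hsplit : ∑ i ∈ Finset.Icc m j, s i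
            = s m + ∑ i ∈ Finset.Ioc m j, s i := by
          rw [sum_Icc_split s le_rfl hmj, Finset.Icc_self, Finset.sum_singleton]
        have hIoc : ∑ i ∈ Finset.Ioc m j, s i ≤ (j : ℕ) - (m : ℕ) := by
          by_contra hgt
          push_neg at hgt
          have hpos' : 0 < ∑ i ∈ Finset.Ioc m j, s i := by omega
          obtain ⟨m'', hmem, -, hsum''⟩ := exists_head s hpos'
          rw [Finset.mem_Ioc] at hmem
          have hM'' : Msum s m'' j := by
            unfold Msum
            rw [hsum'']
            have : (m : ℕ) < (m'' : ℕ) := Fin.lt_def.1 hmem.1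
            omega
          have := le_mus hb hmem.2 hM''
          rw [hj] at this
          exact absurd (lt_of_le_of_lt this hmem.1) (lt_irrefl _)
        simp only [hv]
        omega
    -- strict decrease along the fiber
    have hdec : ∀ j j' : Fin n, mus s j = m → mus s j' = m → j < j' → v j' < v j := by
      intro j j' hj hj' hlt
      obtain ⟨hmj, hv1, -⟩ := hfib j hj
      obtain ⟨hmj', -, -⟩ := hfib j' hj'
      have hM : Msum s m j := hj ▸ (mus_le hb j).2
      unfold Msum at hM
      have hsplit := sum_Icc_split s hmj (le_of_lt hlt)
      have hIoc : ∑ i ∈ Finset.Ioc j j', s i ≤ (j' : ℕ) - (j : ℕ) - 1 := by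
        by_contra hgt
        push_neg at hgt
        have hjj' : (j : ℕ) < (j' : ℕ) := Fin.lt_def.1 hlt
        have hpos' : 0 < ∑ i ∈ Finset.Ioc j j', s i := by omega
        obtain ⟨m'', hmem, -, hsum''⟩ := exists_head s hpos'
        rw [Finset.mem_Ioc] at hmem
        have hM'' : Msum s m'' j' := by
          unfold Msum
          rw [hsum'']
          have : (j : ℕ) < (m'' : ℕ) := Fin.lt_def.1 hmem.1
          omega
        have hle := le_mus hb hmem.2 hM''
        rw [hj'] at hle
        exact absurd (lt_of_le_of_lt (hle.trans hmj) hmem.1) (lt_irrefl _)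
      have hmj'' : (m : ℕ) ≤ (j : ℕ) := Fin.le_def.1 hmj
      have hjj' : (j : ℕ) < (j' : ℕ) := Fin.lt_def.1 hlt
      simp only [hv]
      omega
    -- injection into Icc 1 (s m)
    have hcard : fibc (mus s) m ≤ (Finset.Icc 1 (s m)).card := by
      apply Finset.card_le_card_of_injOn v
      · intro j hj
        rw [Finset.mem_coe, Finset.mem_filter] at hj
        obtain ⟨-, h1, h2⟩ := hfib j hj.2
        rw [Finset.mem_coe, Finset.mem_Icc]
        exact ⟨h1, h2⟩
      · intro j hj j' hj' hvv
        simp only [Finset.coe_filter, Set.mem_setOf_eq] at hj hj'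
        rcases lt_trichotomy j j' with h | h | h
        · exact absurd hvv (Nat.ne_of_gt (hdec j j' hj.2 hj'.2 h))
        · exact h
        · exact absurd hvv (Nat.ne_of_lt (hdec j' j hj'.2 hj.2 h))
    rwa [Nat.card_Icc, Nat.add_sub_cancel] at hcard

include hsum

lemma fibc_mus (m : Fin n) : fibc (mus s) m = s m := by
  have hle : ∀ m ∈ (Finset.univ : Finset (Fin n)), fibc (mus s) m ≤ s m :=
    fun m _ => fibc_mus_le hb m
  have hsums : ∑ j, fibc (mus s) j = ∑ j, s j := by
    rw [sum_fibc_univ, hsum]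
  exact (Finset.sum_eq_sum_iff_of_le hle).1 hsums m (Finset.mem_univ m)

end FibCard

open Finset

variable {n : ℕ}

/-- The block of `a` in `π`. -/
noncomputable def blk (π : Finset (Finset (Fin n))) (a : Fin n) : Finset (Fin n) :=
  if h : ∃ B, B ∈ π ∧ a ∈ B then h.choose else {a}

/-- The minimum of the block of `a` in `π`. -/
noncomputable def muOf (π : Finset (Finset (Fin n))) (a : Fin n) : Fin n :=
  if h : (blk π a).Nonempty then (blk π a).min' h else a

/-- The block-size data of a partition. -/
noncomputable def sdata (π : Finset (Finset (Fin n))) : Fin n → ℕ := fibc (muOf π)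

/-- The partition built from ballot data `s`. -/
noncomputable def buildPart (s : Fin n → ℕ) : Finset (Finset (Fin n)) :=
  ((Finset.univ : Finset (Fin n)).image (mus s)).image
    (fun m => (Finset.univ : Finset (Fin n)).filter fun x => mus s x = m)

section PartLemmas

variable {π : Finset (Finset (Fin n))} (hπ : IsNCPartition n π)
include hπ

lemma blk_mem (a : Fin n) : blk π a ∈ π ∧ a ∈ blk π a := by
  have h : ∃ B, B ∈ π ∧ a ∈ B := (hπ.2.1 a).exists
  unfold blk
  rw [dif_pos h]
  exact h.choose_spec

lemma blk_eq {B : Finset (Fin n)} {a : Fin n} (hB : B ∈ π) (ha : a ∈ B) : blk π a = B :=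
  (hπ.2.1 a).unique ⟨(blk_mem hπ a).1, (blk_mem hπ a).2⟩ ⟨hB, ha⟩

lemma muOf_spec (a : Fin n) :
    muOf π a ∈ blk π a ∧ ∀ x ∈ blk π a, muOf π a ≤ x := by
  have hne : (blk π a).Nonempty := hπ.1 _ (blk_mem hπ a).1
  unfold muOf
  rw [dif_pos hne]
  exact ⟨Finset.min'_mem _ _, fun x hx => Finset.min'_le _ _ hx⟩

lemma muOf_le (a : Fin n) : muOf π a ≤ a :=
  (muOf_spec hπ a).2 a (blk_mem hπ a).2

lemma muOf_eq_iff_blk {a b : Fin n} : muOf π a = muOf π b ↔ blk π a = blk π b := by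
  constructor
  · intro h
    have h1 : muOf π a ∈ blk π a := (muOf_spec hπ a).1
    have h2 : muOf π a ∈ blk π b := h ▸ (muOf_spec hπ b).1
    rw [← blk_eq hπ (blk_mem hπ a).1 h1, ← blk_eq hπ (blk_mem hπ b).1 h2]
  · intro h
    have h1 : muOf π b ∈ blk π a := h ▸ (muOf_spec hπ b).1
    have h2 : muOf π a ∈ blk π b := h ▸ (muOf_spec hπ a).1
    exact le_antisymm ((muOf_spec hπ a).2 _ h1) ((muOf_spec hπ b).2 _ h2)

lemma muOf_idem (a : Fin n) : muOf π (muOf π a) = muOf π a :=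
  (muOf_eq_iff_blk hπ).2 (blk_eq hπ (blk_mem hπ a).1 (muOf_spec hπ a).1)

lemma fiber_eq_blk (a : Fin n) :
    ((Finset.univ : Finset (Fin n)).filter fun x => muOf π x = muOf π a) = blk π a := by
  ext x
  simp only [Finset.mem_filter, Finset.mem_univ, true_and]
  constructor
  · intro h
    have := (muOf_eq_iff_blk hπ).1 h
    exact this ▸ (blk_mem hπ x).2
  · intro hx
    exact (muOf_eq_iff_blk hπ).2 (blk_eq hπ (blk_mem hπ a).1 hx)

lemma ballot_sdata : IsBallot (sdata π) := by
  intro k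
  unfold sdata
  rw [sum_fibc]
  have hsub : Finset.Iic k ⊆ (Finset.univ : Finset (Fin n)).filter
      fun x => muOf π x ∈ Finset.Iic k := by
    intro x hx
    rw [Finset.mem_Iic] at hx
    exact Finset.mem_filter.2 ⟨Finset.mem_univ _, Finset.mem_Iic.2 ((muOf_le hπ x).trans hx)⟩
  calc (k : ℕ) + 1 = (Finset.Iic k).card := (Fin.card_Iic k).symm
    _ ≤ _ := Finset.card_le_card hsub

lemma sdata_claim1 (j : Fin n) : Msum (sdata π) (muOf π j) j := by
  unfold Msum sdata
  rw [sum_fibc]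
  have hmj : muOf π j ≤ j := muOf_le hπ j
  have hsub : Finset.Icc (muOf π j) j ⊆ (Finset.univ : Finset (Fin n)).filter
      (fun x => muOf π x ∈ Finset.Icc (muOf π j) j) := by
    intro x hx
    rw [Finset.mem_Icc] at hx
    refine Finset.mem_filter.2 ⟨Finset.mem_univ _,
      Finset.mem_Icc.2 ⟨?_, (muOf_le hπ x).trans hx.2⟩⟩
    by_contra hlt
    push_neg at hlt
    have hxm : x ≠ muOf π j := by
      intro h
      have hx2 : muOf π x = muOf π j := by rw [h]; exact muOf_idem hπ j
      rw [hx2] at hlt; exact lt_irrefl _ hlt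
    have hmx : muOf π j < x := lt_of_le_of_ne hx.1 (Ne.symm hxm)
    have hxj : x ≠ j := by
      intro h
      rw [h] at hlt; exact lt_irrefl _ hlt
    have hxj' : x < j := lt_of_le_of_ne hx.2 hxj
    have hblkne : blk π x ≠ blk π j := by
      intro h
      have h2 := (muOf_eq_iff_blk hπ).2 h
      rw [h2] at hlt
      exact lt_irrefl _ hlt
    exact hπ.2.2 ⟨muOf π x, muOf π j, x, j, blk π x, (blk_mem hπ x).1, blk π j,
      (blk_mem hπ j).1, hblkne, hlt, hmx, hxj', (muOf_spec hπ x).1, (blk_mem hπ x).2,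
      (muOf_spec hπ j).1, (blk_mem hπ j).2⟩
  have hcard := Finset.card_le_card hsub
  rw [Fin.card_Icc] at hcard
  have hv : (muOf π j : ℕ) ≤ (j : ℕ) := Fin.le_def.1 hmj
  omega

lemma sdata_claim2 {j m' : Fin n} (h1 : muOf π j < m') (h2 : m' ≤ j) :
    ¬ Msum (sdata π) m' j := by
  unfold Msum sdata
  rw [sum_fibc]
  have hsub : ((Finset.univ : Finset (Fin n)).filter
      (fun x => muOf π x ∈ Finset.Icc m' j)) ⊆ (Finset.Icc m' j).erase j := by
    intro x hx
    rw [Finset.mem_filter, Finset.mem_Icc] at hx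
    obtain ⟨-, hq1, hq2⟩ := hx
    have hxj : x ≠ j := by
      intro h
      rw [h] at hq1
      exact absurd (h1.trans_le hq1) (lt_irrefl _)
    refine Finset.mem_erase.2 ⟨hxj, Finset.mem_Icc.2 ⟨hq1.trans (muOf_le hπ x), ?_⟩⟩
    by_contra hjx
    push_neg at hjx
    have hqj : muOf π x ≠ j := by
      intro h
      have hid : muOf π (muOf π x) = muOf π x := muOf_idem hπ x
      rw [h] at hid hq1
      rw [hid] at h1
      exact absurd (h1.trans_le hq1) (lt_irrefl _)
    have hqj' : muOf π x < j := lt_of_le_of_ne hq2 hqj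
    have hmq : muOf π j < muOf π x := h1.trans_le hq1
    have hblkne : blk π j ≠ blk π x := by
      intro h
      have h3 := (muOf_eq_iff_blk hπ).2 h
      rw [h3] at hmq
      exact lt_irrefl _ hmq
    exact hπ.2.2 ⟨muOf π j, muOf π x, j, x, blk π j, (blk_mem hπ j).1, blk π x,
      (blk_mem hπ x).1, hblkne, hmq, hqj', hjx, (muOf_spec hπ j).1, (blk_mem hπ j).2,
      (muOf_spec hπ x).1, (blk_mem hπ x).2⟩
  intro hM
  have hcard := Finset.card_le_card hsub
  have hjmem : j ∈ Finset.Icc m' j := Finset.mem_Icc.2 ⟨h2, le_rfl⟩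
  rw [Finset.card_erase_of_mem hjmem, Fin.card_Icc] at hcard
  have hle : (m' : ℕ) ≤ (j : ℕ) := Fin.le_def.1 h2
  omega

lemma muOf_eq_mus : muOf π = mus (sdata π) := by
  funext j
  have hb := ballot_sdata hπ
  set m := muOf π j with hm
  have le1 : m ≤ mus (sdata π) j := le_mus hb (muOf_le hπ j) (sdata_claim1 hπ j)
  rcases eq_or_lt_of_le le1 with h | h
  · exact h
  · exact absurd ((mus_le hb j).2) (sdata_claim2 hπ h (mus_le hb j).1)

lemma part_eq_build : π = buildPart (sdata π) := by
  have hmm := muOf_eq_mus hπ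
  unfold buildPart
  rw [← hmm]
  ext B
  simp only [Finset.mem_image, Finset.mem_univ, true_and, exists_exists_eq_and]
  constructor
  · intro hB
    obtain ⟨a, ha⟩ := hπ.1 B hB
    refine ⟨a, ?_⟩
    rw [fiber_eq_blk hπ a, blk_eq hπ hB ha]
  · rintro ⟨a, rfl⟩
    rw [fiber_eq_blk hπ a]
    exact (blk_mem hπ a).1

lemma prod_card_eq_sdata : ∏ B ∈ π, (B.card).factorial = ∏ j, (sdata π j).factorial := by
  have hM : ∀ j : Fin n, muOf π j ≠ j → sdata π j = 0 := by
    intro j hj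
    unfold sdata fibc
    rw [Finset.card_eq_zero, Finset.filter_eq_empty_iff]
    intro x _ hx
    exact hj (by rw [← hx, muOf_idem hπ, hx])
  rw [← Finset.prod_subset (Finset.subset_univ
    ((Finset.univ : Finset (Fin n)).filter fun j => muOf π j = j))
    (fun j _ hj => by
      rw [hM j (fun h => hj (Finset.mem_filter.2 ⟨Finset.mem_univ _, h⟩))]
      simp)]
  symm
  refine Finset.prod_bij (fun j _ => blk π j) ?_ ?_ ?_ ?_
  · intro j hj
    exact (blk_mem hπ j).1
  · intro j hj j' hj' h
    rw [Finset.mem_filter] at hj hj'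
    have := (muOf_eq_iff_blk hπ).2 h
    rw [hj.2, hj'.2] at this
    exact this
  · intro B hB
    obtain ⟨a, ha⟩ := hπ.1 B hB
    refine ⟨muOf π a, Finset.mem_filter.2 ⟨Finset.mem_univ _, muOf_idem hπ a⟩, ?_⟩
    show blk π (muOf π a) = B
    have h1 : blk π (muOf π a) = blk π a := blk_eq hπ (blk_mem hπ a).1 (muOf_spec hπ a).1
    rw [h1]
    exact blk_eq hπ hB ha
  · intro j hj
    rw [Finset.mem_filter] at hj
    congr 1
    unfold sdata fibc
    rw [show ((Finset.univ : Finset (Fin n)).filter fun x => muOf π x = j)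
      = ((Finset.univ : Finset (Fin n)).filter fun x => muOf π x = muOf π j) by rw [hj.2]]
    rw [fiber_eq_blk hπ j]

end PartLemmas

section BuildLemmas

variable {s : Fin n → ℕ} (hb : IsBallot s)
include hb

lemma build_isNC : IsNCPartition n (buildPart s) := by
  refine ⟨?_, ?_, ?_⟩
  · intro B hB
    unfold buildPart at hB
    simp only [Finset.mem_image, Finset.mem_univ, true_and, exists_exists_eq_and] at hB
    obtain ⟨a, rfl⟩ := hB
    exact ⟨mus s a, Finset.mem_filter.2 ⟨Finset.mem_univ _, mus_idem hb a⟩⟩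
  · intro a
    refine ⟨(Finset.univ : Finset (Fin n)).filter fun x => mus s x = mus s a, ⟨?_, ?_⟩, ?_⟩
    · unfold buildPart
      simp only [Finset.mem_image, Finset.mem_univ, true_and, exists_exists_eq_and]
      exact ⟨a, rfl⟩
    · exact Finset.mem_filter.2 ⟨Finset.mem_univ _, rfl⟩
    · rintro B ⟨hB, haB⟩
      unfold buildPart at hB
      simp only [Finset.mem_image, Finset.mem_univ, true_and, exists_exists_eq_and] at hB
      obtain ⟨b, rfl⟩ := hB
      rw [Finset.mem_filter] at haB
      rw [haB.2]
  · rintro ⟨a, b, c, d, B, hB, B', hB', hne, hab, hbc, hcd, haB, hcB, hbB', hdB'⟩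
    unfold buildPart at hB hB'
    simp only [Finset.mem_image, Finset.mem_univ, true_and, exists_exists_eq_and] at hB hB'
    obtain ⟨x, rfl⟩ := hB
    obtain ⟨y, rfl⟩ := hB'
    rw [Finset.mem_filter] at haB hcB hbB' hdB'
    -- p := mus s x, q := mus s y
    have hpq : mus s x ≠ mus s y := fun h => hne (by rw [h])
    have h1 : mus s x ≤ mus s b := by
      refine mus_diamond hb hcB.2 ?_ (le_of_lt hbc)
      calc mus s x = mus s a := haB.2.symm
        _ ≤ a := (mus_le hb a).1
        _ ≤ b := le_of_lt hab
    have h2 : mus s y ≤ mus s c := by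
      refine mus_diamond hb hdB'.2 ?_ (le_of_lt hcd)
      calc mus s y = mus s b := hbB'.2.symm
        _ ≤ b := (mus_le hb b).1
        _ ≤ c := le_of_lt hbc
    rw [hbB'.2] at h1
    rw [hcB.2] at h2
    exact hpq (le_antisymm h1 h2)

lemma muOf_build : muOf (buildPart s) = mus s := by
  have hπ := build_isNC hb
  funext a
  have hblk : blk (buildPart s) a
      = (Finset.univ : Finset (Fin n)).filter fun x => mus s x = mus s a := by
    refine blk_eq hπ ?_ (Finset.mem_filter.2 ⟨Finset.mem_univ _, rfl⟩)
    unfold buildPart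
    simp only [Finset.mem_image, Finset.mem_univ, true_and, exists_exists_eq_and]
    exact ⟨a, rfl⟩
  have hspec := muOf_spec hπ a
  rw [hblk] at hspec
  have h1 : mus s (muOf (buildPart s) a) = mus s a :=
    (Finset.mem_filter.1 hspec.1).2
  have h2 : muOf (buildPart s) a ≤ mus s a :=
    hspec.2 _ (Finset.mem_filter.2 ⟨Finset.mem_univ _, mus_idem hb a⟩)
  have h3 : mus s a ≤ muOf (buildPart s) a := by
    calc mus s a = mus s (muOf (buildPart s) a) := h1.symm
      _ ≤ muOf (buildPart s) a := (mus_le hb _).1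
  exact le_antisymm h2 h3

lemma sdata_build (hsum : ∑ j, s j = n) : sdata (buildPart s) = s := by
  unfold sdata
  rw [muOf_build hb]
  funext m
  exact fibc_mus hb hsum m

end BuildLemmas


open Finset Equiv

variable {n : ℕ}

lemma fibc_comp_perm (f : Fin n → Fin n) (σ : Equiv.Perm (Fin n)) (j : Fin n) :
    fibc (f ∘ σ) j = fibc f j := by
  unfold fibc
  apply Finset.card_bij' (fun i _ => σ i) (fun i _ => σ.symm i)
  · intro i hi
    rw [Finset.mem_filter] at hi ⊢
    exact ⟨Finset.mem_univ _, hi.2⟩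
  · intro i hi
    rw [Finset.mem_filter] at hi ⊢
    refine ⟨Finset.mem_univ _, ?_⟩
    show f (σ (σ.symm i)) = j
    rw [Equiv.apply_symm_apply]
    exact hi.2
  · intro i _; exact Equiv.symm_apply_apply σ i
  · intro i _; exact Equiv.apply_symm_apply σ i

lemma card_stab (f₀ : Fin n → Fin n) :
    ((Finset.univ : Finset (Equiv.Perm (Fin n))).filter fun σ : Equiv.Perm (Fin n) => f₀ ∘ ⇑σ = f₀).card
      = ∏ j, (fibc f₀ j).factorial := by
  rw [← Fintype.card_subtype]
  rw [DomMulAct.stabilizer_card f₀]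
  refine Finset.prod_congr rfl fun j _ => ?_
  congr 1
  rw [Fintype.card_subtype]
  rfl

lemma card_fiber_perm {f₀ f : Fin n → Fin n} (hf : fibc f = fibc f₀) :
    ((Finset.univ : Finset (Equiv.Perm (Fin n))).filter fun σ : Equiv.Perm (Fin n) => f₀ ∘ ⇑σ = f).card
      = ∏ j, (fibc f₀ j).factorial := by
  -- construct τ with f₀ ∘ τ = f
  have hcard : ∀ j, Fintype.card {i // f i = j} = Fintype.card {i // f₀ i = j} := by
    intro j
    rw [Fintype.card_subtype, Fintype.card_subtype]
    have := congrFun hf j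
    unfold fibc at this
    exact this
  let e : ∀ j, {i // f i = j} ≃ {i // f₀ i = j} := fun j => Fintype.equivOfCardEq (hcard j)
  let τ : Equiv.Perm (Fin n) :=
    ((Equiv.sigmaFiberEquiv f).symm.trans (Equiv.sigmaCongrRight e)).trans
      (Equiv.sigmaFiberEquiv f₀)
  have hτ : ∀ i, f₀ (τ i) = f i := fun i => (e (f i) ⟨i, rfl⟩).prop
  rw [← card_stab f₀]
  apply Finset.card_bij' (fun σ _ => σ * τ⁻¹) (fun ρ _ => ρ * τ)
  · intro σ hσ
    rw [Finset.mem_filter] at hσ ⊢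
    refine ⟨Finset.mem_univ _, funext fun y => ?_⟩
    show f₀ (σ (τ⁻¹ y)) = f₀ y
    have h1 : f₀ (σ (τ⁻¹ y)) = f (τ⁻¹ y) := congrFun hσ.2 (τ⁻¹ y)
    rw [h1, ← hτ (τ⁻¹ y)]
    congr 1
    exact Equiv.apply_symm_apply τ y
  · intro ρ hρ
    rw [Finset.mem_filter] at hρ ⊢
    refine ⟨Finset.mem_univ _, funext fun i => ?_⟩
    show f₀ (ρ (τ i)) = f i
    have h2 : f₀ (ρ (τ i)) = f₀ (τ i) := congrFun hρ.2 (τ i)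
    rw [h2]
    exact hτ i
  · intro σ _; group
  · intro ρ _; group

lemma card_fib_class (f₀ : Fin n → Fin n) :
    ((Finset.univ : Finset (Fin n → Fin n)).filter fun f => fibc f = fibc f₀).card
      * ∏ j, (fibc f₀ j).factorial = Nat.factorial n := by
  have h1 : (Finset.univ : Finset (Equiv.Perm (Fin n))).card =
      ∑ f ∈ ((Finset.univ : Finset (Fin n → Fin n)).filter fun f => fibc f = fibc f₀),
        ((Finset.univ : Finset (Equiv.Perm (Fin n))).filter fun σ : Equiv.Perm (Fin n) => f₀ ∘ ⇑σ = f).card := by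
    apply Finset.card_eq_sum_card_fiberwise (f := fun σ : Equiv.Perm (Fin n) => f₀ ∘ ⇑σ)
    intro σ _
    refine Finset.mem_filter.2 ⟨Finset.mem_univ _, funext fun j => fibc_comp_perm f₀ σ j⟩
  rw [Finset.card_univ, Fintype.card_perm, Fintype.card_fin] at h1
  rw [h1]
  rw [Finset.sum_congr rfl (fun f hf => card_fiber_perm (Finset.mem_filter.1 hf).2)]
  rw [Finset.sum_const, smul_eq_mul]


open Finset

/-- The cycle lemma: for `h : ℕ → ℕ` with every window of length `n+1` summing to `n`,
there is a unique starting point `a < n+1` from which all partial sums stay ahead. -/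
lemma cycle_core (n : ℕ) (h : ℕ → ℕ)
    (hW : ∀ a, ∑ t ∈ Finset.range (n+1), h (a+t) = n) :
    ∃! a, a < n + 1 ∧ ∀ k, k < n → k + 1 ≤ ∑ t ∈ Finset.range (k+1), h (a + t) := by
  classical
  set S : ℕ → ℕ := fun t => ∑ u ∈ Finset.range t, h u with hS
  have hSadd : ∀ a m, S (a + m) = S a + ∑ t ∈ Finset.range m, h (a + t) := by
    intro a m; simp only [hS]; rw [Finset.sum_range_add]
  set D : ℕ → ℤ := fun t => (S t : ℤ) - t with hD
  have hDstep : ∀ t, D (t + (n+1)) = D t - 1 := by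
    intro t
    have h1 := hSadd t (n+1)
    rw [hW t] at h1
    simp only [hD]
    rw [h1]; push_cast; ring
  have hcond : ∀ a k, (k + 1 ≤ ∑ t ∈ Finset.range (k+1), h (a+t)) ↔ D a ≤ D (a + (k+1)) := by
    intro a k
    have h1 := hSadd a (k+1)
    simp only [hD]
    omega
  have hex : ∃ a, a < n+1 ∧ ∀ b, b < n+1 → D a ≤ D b := by
    obtain ⟨a, ha, hmin⟩ := Finset.exists_min_image (Finset.range (n+1)) D ⟨0, by simp⟩
    exact ⟨a, Finset.mem_range.1 ha, fun b hb => hmin b (Finset.mem_range.2 hb)⟩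
  have ha₀lt : Nat.find hex < n+1 := (Nat.find_spec hex).1
  have ha₀min : ∀ b, b < n+1 → D (Nat.find hex) ≤ D b := (Nat.find_spec hex).2
  have hstrict : ∀ b, b < (Nat.find hex) → D (Nat.find hex) < D b := by
    intro b hb
    have hblt : b < n+1 := hb.trans ha₀lt
    have hnot := Nat.find_min hex hb
    push_neg at hnot
    obtain ⟨c, hc, hcD⟩ := hnot hblt
    exact lt_of_le_of_lt (ha₀min c hc) hcD
  refine ⟨Nat.find hex, ⟨ha₀lt, ?_⟩, ?_⟩
  · intro k hk
    rw [hcond]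
    rcases lt_or_ge ((Nat.find hex) + (k+1)) (n+1) with hu | hu
    · exact ha₀min _ hu
    · have hv : (Nat.find hex) + (k+1) - (n+1) < (Nat.find hex) := by omega
      have heq : (Nat.find hex) + (k+1) = ((Nat.find hex) + (k+1) - (n+1)) + (n+1) := by omega
      rw [heq, hDstep]
      have := hstrict _ hv
      omega
  · rintro x ⟨hxlt, hx⟩
    have hxmin : ∀ b, b < n+1 → D x ≤ D b := by
      intro b hb
      rcases lt_trichotomy x b with hlt | heq | hgt
      · have hk : b - x - 1 < n := by omega
        have h2 := (hcond x (b - x - 1)).1 (hx _ hk)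
        have heq : x + (b - x - 1 + 1) = b := by omega
        rwa [heq] at h2
      · rw [heq]
      · have hk : b + n - x < n := by omega
        have h2 := (hcond x (b + n - x)).1 (hx _ hk)
        have heq : x + (b + n - x + 1) = b + (n+1) := by omega
        rw [heq, hDstep] at h2
        omega
    have hle : (Nat.find hex) ≤ x := Nat.find_min' hex ⟨hxlt, hxmin⟩
    rcases eq_or_lt_of_le hle with heq | hlt
    · exact heq.symm
    · exfalso
      have hk : (Nat.find hex) + n - x < n := by omega
      have hcx := (hcond x ((Nat.find hex) + n - x)).1 (hx _ hk)
      have heq : x + ((Nat.find hex) + n - x + 1) = (Nat.find hex) + (n+1) := by omega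
      rw [heq, hDstep] at hcx
      have := ha₀min x hxlt
      omega

section Pollak

variable {n : ℕ}

lemma ballot_iff_card (f : Fin n → Fin n) :
    IsBallot (fibc f) ↔ ∀ k : Fin n,
      (k : ℕ) + 1 ≤ ((Finset.univ : Finset (Fin n)).filter fun i => f i ≤ k).card := by
  unfold IsBallot
  apply forall_congr'
  intro k
  rw [sum_fibc]
  have h1 : ((Finset.univ : Finset (Fin n)).filter fun x => f x ∈ Finset.Iic k)
      = ((Finset.univ : Finset (Fin n)).filter fun i => f i ≤ k) := by
    apply Finset.filter_congr
    intro x _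
    rw [Finset.mem_Iic]
  rw [h1]

/-- The shift-condition for `g` relative to `c`. -/
def Qcond (g : Fin n → ZMod (n+1)) (c : ZMod (n+1)) : Prop :=
  ∀ k : ℕ, k < n →
    k + 1 ≤ ((Finset.univ : Finset (Fin n)).filter fun i => (g i - c).val ≤ k).card

lemma card_val_eq (g : Fin n → ZMod (n+1)) (a : ℕ) (k : ℕ) (hk : k < n) :
    ((Finset.univ : Finset (Fin n)).filter fun i => (g i - (a : ZMod (n+1))).val ≤ k).card
      = ∑ t ∈ Finset.range (k+1),
        ((Finset.univ : Finset (Fin n)).filter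
          fun i => g i = ((a + t : ℕ) : ZMod (n+1))).card := by
  rw [Finset.card_eq_sum_card_fiberwise
    (f := fun i => (g i - (a : ZMod (n+1))).val) (t := Finset.range (k+1))
    (fun x hx => Finset.mem_range.2 (Nat.lt_succ_of_le (Finset.mem_filter.1 hx).2))]
  refine Finset.sum_congr rfl fun t ht => ?_
  rw [Finset.mem_range] at ht
  congr 1
  ext i
  simp only [Finset.mem_filter, Finset.mem_univ, true_and]
  have htlt : t < n + 1 := by omega
  have hiff : (g i - (a : ZMod (n+1))).val = t ↔ g i = ((a + t : ℕ) : ZMod (n+1)) := by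
    constructor
    · intro hv
      have h1 : g i - (a : ZMod (n+1)) = (t : ZMod (n+1)) := by
        rw [← hv]
        exact (ZMod.natCast_rightInverse (g i - (a : ZMod (n+1)))).symm
      push_cast
      linear_combination h1
    · intro hgi
      have h1 : g i - (a : ZMod (n+1)) = (t : ZMod (n+1)) := by
        rw [hgi]; push_cast; ring
      rw [h1, ZMod.val_cast_of_lt htlt]
  constructor
  · rintro ⟨-, hv⟩
    exact hiff.1 hv
  · intro hgi
    have hv := hiff.2 hgi
    exact ⟨by omega, hv⟩

lemma exists_unique_shift (hn : 1 ≤ n) (g : Fin n → ZMod (n+1)) :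
    ∃! c : ZMod (n+1), Qcond g c := by
  classical
  set h : ℕ → ℕ := fun u =>
    (((Finset.univ : Finset (Fin n))).filter fun i => g i = ((u : ℕ) : ZMod (n+1))).card with hh
  have hW : ∀ a, ∑ t ∈ Finset.range (n+1), h (a+t) = n := by
    intro a
    have hcount : ((Finset.univ : Finset (Fin n)).card)
        = ∑ v ∈ (Finset.univ : Finset (ZMod (n+1))),
            ((Finset.univ : Finset (Fin n)).filter fun i => g i = v).card :=
      Finset.card_eq_sum_card_fiberwise (fun x _ => Finset.mem_univ _)
    rw [Finset.card_univ, Fintype.card_fin] at hcount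
    have hbij : ∑ t ∈ Finset.range (n+1), h (a+t)
        = ∑ v ∈ (Finset.univ : Finset (ZMod (n+1))),
            ((Finset.univ : Finset (Fin n)).filter fun i => g i = v).card := by
      apply Finset.sum_nbij' (i := fun t => ((a + t : ℕ) : ZMod (n+1)))
        (j := fun v => (v - (a : ZMod (n+1))).val)
      · intro t _
        exact Finset.mem_univ _
      · intro v _
        exact Finset.mem_range.2 (ZMod.val_lt _)
      · intro t ht
        rw [Finset.mem_range] at ht
        have h1 : ((a + t : ℕ) : ZMod (n+1)) - (a : ZMod (n+1)) = (t : ZMod (n+1)) := by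
          push_cast; ring
        rw [h1, ZMod.val_cast_of_lt ht]
      · intro v _
        have h1 : ((v - (a : ZMod (n+1))).val : ZMod (n+1)) = v - (a : ZMod (n+1)) :=
          ZMod.natCast_rightInverse _
        push_cast
        rw [h1]
        ring
      · intro t _
        rfl
    rw [hbij]
    exact hcount.symm
  obtain ⟨a0, ⟨ha0, hPa0⟩, huniq⟩ := cycle_core n h hW
  refine ⟨(a0 : ZMod (n+1)), ?_, ?_⟩
  · intro k hk
    rw [card_val_eq g a0 k hk]
    exact hPa0 k hk
  · intro c hc
    have hcv : c.val < n + 1 := ZMod.val_lt c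
    have h2 : c.val = a0 := by
      apply huniq
      refine ⟨hcv, fun k hk => ?_⟩
      have heq := card_val_eq g c.val k hk
      rw [ZMod.natCast_rightInverse c] at heq
      rw [← heq]
      exact hc k hk
    rw [← h2]
    exact (ZMod.natCast_rightInverse c).symm

lemma park_card (hn : 1 ≤ n) :
    ((Finset.univ : Finset (Fin n → Fin n)).filter fun f => IsBallot (fibc f)).card
      = (n+1)^(n-1) := by
  classical
  set cOf : (Fin n → ZMod (n+1)) → ZMod (n+1) :=
    fun g => Classical.choose (exists_unique_shift hn g).exists with hcOf
  have hcspec : ∀ g, Qcond g (cOf g) :=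
    fun g => Classical.choose_spec (exists_unique_shift hn g).exists
  have hcuniq : ∀ g c, Qcond g c → cOf g = c :=
    fun g c hc => (exists_unique_shift hn g).unique (hcspec g) hc
  have htot : Fintype.card (Fin n → ZMod (n+1))
      = ∑ c ∈ (Finset.univ : Finset (ZMod (n+1))),
          ((Finset.univ : Finset (Fin n → ZMod (n+1))).filter fun g => cOf g = c).card := by
    rw [← Finset.card_univ]
    exact Finset.card_eq_sum_card_fiberwise (fun g _ => Finset.mem_univ _)
  have hfiber : ∀ c : ZMod (n+1),
      ((Finset.univ : Finset (Fin n → ZMod (n+1))).filter fun g => cOf g = c).card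
        = ((Finset.univ : Finset (Fin n → Fin n)).filter fun f => IsBallot (fibc f)).card := by
    intro c
    set fwd : (Fin n → ZMod (n+1)) → (Fin n → Fin n) :=
      fun g i => if h : (g i - c).val < n then (⟨(g i - c).val, h⟩ : Fin n) else ⟨0, hn⟩
      with hfwd
    set bwd : (Fin n → Fin n) → (Fin n → ZMod (n+1)) :=
      fun f i => (((f i).val : ℕ) : ZMod (n+1)) + c with hbwd
    have hkey : ∀ g, cOf g = c → ∀ i, (g i - c).val < n := by
      intro g hg i
      have hQ : Qcond g c := hg ▸ hcspec g
      have hc1 := hQ (n-1) (by omega)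
      have hle : ((Finset.univ : Finset (Fin n)).filter
          fun i => (g i - c).val ≤ n - 1).card ≤ n := by
        calc ((Finset.univ : Finset (Fin n)).filter fun i => (g i - c).val ≤ n - 1).card
            ≤ (Finset.univ : Finset (Fin n)).card := Finset.card_filter_le _ _
          _ = n := by rw [Finset.card_univ, Fintype.card_fin]
      have hcardeq : ((Finset.univ : Finset (Fin n)).filter
          fun i => (g i - c).val ≤ n - 1).card = Fintype.card (Fin n) := by
        rw [Fintype.card_fin]; omega
      have hall := Finset.eq_univ_of_card _ hcardeq
      have hmem : i ∈ (Finset.univ : Finset (Fin n)).filter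
          fun i => (g i - c).val ≤ n - 1 := hall.symm ▸ Finset.mem_univ i
      rw [Finset.mem_filter] at hmem
      omega
    apply Finset.card_bij' (fun g _ => fwd g) (fun f _ => bwd f)
    · intro g hg
      rw [Finset.mem_filter] at hg
      have hk := hkey g hg.2
      have hQ : Qcond g c := hg.2 ▸ hcspec g
      refine Finset.mem_filter.2 ⟨Finset.mem_univ _, ?_⟩
      rw [ballot_iff_card]
      intro k
      have hfilter : ((Finset.univ : Finset (Fin n)).filter fun i => fwd g i ≤ k)
          = (Finset.univ : Finset (Fin n)).filter fun i => (g i - c).val ≤ (k : ℕ) := by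
        apply Finset.filter_congr
        intro x _
        simp only [hfwd, dif_pos (hk x)]
        rw [Fin.le_def]
      rw [hfilter]
      exact hQ (k : ℕ) k.2
    · intro f hf
      rw [Finset.mem_filter] at hf
      refine Finset.mem_filter.2 ⟨Finset.mem_univ _, ?_⟩
      apply hcuniq
      intro k hk
      have hfilter : ((Finset.univ : Finset (Fin n)).filter fun i => (bwd f i - c).val ≤ k)
          = (Finset.univ : Finset (Fin n)).filter fun i => f i ≤ (⟨k, hk⟩ : Fin n) := by
        apply Finset.filter_congr
        intro x _
        simp only [hbwd]
        rw [add_sub_cancel_right, ZMod.val_cast_of_lt (lt_trans (f x).2 (Nat.lt_succ_self n)),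
          Fin.le_def]
      rw [hfilter]
      exact (ballot_iff_card f).1 hf.2 ⟨k, hk⟩
    · intro g hg
      rw [Finset.mem_filter] at hg
      have hk := hkey g hg.2
      funext i
      simp only [hbwd, hfwd, dif_pos (hk i)]
      rw [ZMod.natCast_rightInverse (g i - c)]
      ring
    · intro f hf
      funext i
      have hvlt : ((((f i).val : ℕ) : ZMod (n+1)) + c - c).val < n := by
        rw [add_sub_cancel_right, ZMod.val_cast_of_lt (lt_trans (f i).2 (Nat.lt_succ_self n))]
        exact (f i).2
      simp only [hfwd, hbwd, dif_pos hvlt]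
      apply Fin.ext
      simp only
      rw [add_sub_cancel_right, ZMod.val_cast_of_lt (lt_trans (f i).2 (Nat.lt_succ_self n))]
  rw [Fintype.card_fun, ZMod.card, Fintype.card_fin] at htot
  rw [Finset.sum_congr rfl (fun c _ => hfiber c), Finset.sum_const, Finset.card_univ,
    ZMod.card, smul_eq_mul] at htot
  have hpow : (n+1)^n = (n+1) * (n+1)^(n-1) := by
    have hn' : n = (n-1) + 1 := by omega
    calc (n+1)^n = (n+1)^((n-1)+1) := by rw [← hn']
      _ = (n+1) * (n+1)^(n-1) := pow_succ' _ _
  rw [hpow] at htot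
  exact (Nat.eq_of_mul_eq_mul_left (Nat.succ_pos n) htot).symm

end Pollak

/-- `(n+1)^(n-1) = Σ_π n! / ∏_{B ∈ π} |B|!`, the sum over all non-crossing
partitions `π` of `{1,…,n}`. -/
theorem stmt12 (n : ℕ) (hn : 1 ≤ n) :
    (n + 1) ^ (n - 1) =
      ∑ᶠ π ∈ {π : Finset (Finset (Fin n)) | IsNCPartition n π},
        (Nat.factorial n) / ∏ B ∈ π, Nat.factorial B.card := by
  classical
  have hset : {π : Finset (Finset (Fin n)) | IsNCPartition n π}
      = ↑((Finset.univ : Finset (Finset (Finset (Fin n)))).filter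
            fun π => IsNCPartition n π) := by
    ext π; simp
  rw [hset, finsum_mem_coe_finset]
  set NCf := (Finset.univ : Finset (Finset (Finset (Fin n)))).filter
    (fun π => IsNCPartition n π) with hNCf
  set parkf := (Finset.univ : Finset (Fin n → Fin n)).filter
    (fun f => IsBallot (fibc f)) with hparkf
  have hΘ : ∀ f ∈ parkf, buildPart (fibc f) ∈ NCf := by
    intro f hf
    rw [hparkf, Finset.mem_filter] at hf
    exact Finset.mem_filter.2 ⟨Finset.mem_univ _, build_isNC hf.2⟩
  have hsplit : parkf.card
      = ∑ π ∈ NCf, (parkf.filter fun f => buildPart (fibc f) = π).card :=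
    Finset.card_eq_sum_card_fiberwise hΘ
  have hfib : ∀ π ∈ NCf, (parkf.filter fun f => buildPart (fibc f) = π)
      = (Finset.univ : Finset (Fin n → Fin n)).filter
          fun f => fibc f = fibc (muOf π) := by
    intro π hπmem
    have hπ : IsNCPartition n π := (Finset.mem_filter.1 hπmem).2
    have hbπ : IsBallot (sdata π) := ballot_sdata hπ
    have hsumπ : ∑ j, sdata π j = n := sum_fibc_univ _
    ext f
    constructor
    · intro hmem
      rw [Finset.mem_filter] at hmem
      obtain ⟨hfp, hbuild⟩ := hmem
      rw [hparkf, Finset.mem_filter] at hfp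
      have h1 : sdata (buildPart (fibc f)) = fibc f := sdata_build hfp.2 (sum_fibc_univ f)
      rw [hbuild] at h1
      unfold sdata at h1
      rw [Finset.mem_filter]
      exact ⟨Finset.mem_univ _, h1.symm⟩
    · intro hmem
      rw [Finset.mem_filter] at hmem
      have hfs : fibc f = sdata π := hmem.2
      refine Finset.mem_filter.2 ⟨?_, ?_⟩
      · rw [hparkf, Finset.mem_filter]
        exact ⟨Finset.mem_univ _, hfs ▸ hbπ⟩
      · rw [hfs]
        exact (part_eq_build hπ).symm
  have hterm : ∀ π ∈ NCf, Nat.factorial n / ∏ B ∈ π, Nat.factorial B.card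
      = ((Finset.univ : Finset (Fin n → Fin n)).filter
          fun f => fibc f = fibc (muOf π)).card := by
    intro π hπmem
    have hπ : IsNCPartition n π := (Finset.mem_filter.1 hπmem).2
    have hprod : ∏ B ∈ π, Nat.factorial B.card = ∏ j, (fibc (muOf π) j).factorial := by
      have h1 := prod_card_eq_sdata hπ
      unfold sdata at h1
      exact h1
    rw [hprod, ← card_fib_class (muOf π), Nat.mul_div_cancel]
    exact Finset.prod_pos fun j _ => Nat.factorial_pos _
  calc (n+1)^(n-1) = parkf.card := (park_card hn).symm
    _ = ∑ π ∈ NCf, (parkf.filter fun f => buildPart (fibc f) = π).card := hsplit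
    _ = ∑ π ∈ NCf, Nat.factorial n / ∏ B ∈ π, Nat.factorial B.card := by
        refine Finset.sum_congr rfl fun π hπm => ?_
        rw [hfib π hπm, ← hterm π hπm]
end

section
/- Let G = ([n], E) be a finite simple graph with n ≥ 3. For an acyclic orientation O of G and a vertex v ∈ [n], let O^v be the orientation of G given by O^v(e) = O(e) for every edge e ∈ E with v ∉ e, and O^v({u,v}) = (u,v) for every edge {u,v} ∈ E incident to v. Then: (a) O^v is an acyclic orientation of G for every acyclic orientation O and every v ∈ [n]; and (b) for every acyclic orientation O' of G, Σ_{O} e(O) · |{ v ∈ [n] : O^v = O' }| = n · e(O'), where the sum runs over all acyclic orientations O of G. (Statement (b) expresses that the distribution assigning probability e(O)/n! to each acyclic orientation O is stationary for the Card-Shuffling Markov chain, whose transition from O picks v ∈ [n] uniformly and moves to O^v.) -/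
open scoped Classical

/-- `O` is an orientation of `G` (Boolean-valued, to allow finite enumeration). -/
def IsOrientationB {n : ℕ} (G : SimpleGraph (Fin n)) (O : Fin n → Fin n → Bool) : Prop :=
  (∀ u v, O u v = true → G.Adj u v) ∧ ∀ u v, G.Adj u v → O u v = !O v u

/-- The Boolean relation `O` has no directed cycles. -/
def IsAcyclicB {n : ℕ} (O : Fin n → Fin n → Bool) : Prop :=
  ∀ v, ¬ Relation.TransGen (fun a b => O a b = true) v v

/-- The number `e(O)` of linear extensions of the orientation `O`: bijections
`f : [n] → [n]` with `f u < f v` whenever `O` orients an edge as `(u,v)`. -/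
noncomputable def linextCount (n : ℕ) (O : Fin n → Fin n → Bool) : ℕ :=
  Nat.card {f : Equiv.Perm (Fin n) // ∀ u v, O u v = true → f u < f v}

/-- `O^v`: every edge incident to `v` is oriented towards `v`; all other edges keep
their orientation from `O`. -/
def shiftOr {n : ℕ} (G : SimpleGraph (Fin n)) [DecidableRel G.Adj]
    (O : Fin n → Fin n → Bool) (v : Fin n) : Fin n → Fin n → Bool :=
  fun x y => if y = v then decide (G.Adj x v) else if x = v then false else O x y


set_option linter.unusedSectionVars false
set_option linter.unusedVariables false
set_option maxHeartbeats 1000000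

section Aux

variable {n : ℕ}

def toTop (k : Fin n) : Equiv.Perm (Fin n) where
  toFun x := if x = k then ⟨n-1, by have := k.isLt; omega⟩ else if x.val < k.val then x
    else ⟨x.val - 1, by have := x.isLt; omega⟩
  invFun y := if h : y.val = n-1 then k else if y.val < k.val then y
    else ⟨y.val + 1, by have := y.isLt; omega⟩
  left_inv := by
    intro x
    have hk := k.isLt; have hx := x.isLt
    beta_reduce
    by_cases h1 : x = k
    · simp [h1]
    · have hne : x.val ≠ k.val := fun h => h1 (Fin.ext h)
      by_cases h2 : x.val < k.val
      · rw [if_neg h1, if_pos h2, dif_neg (by omega), if_pos h2]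
      · rw [if_neg h1, if_neg h2, dif_neg (by simp; omega), if_neg (by simp; omega)]
        exact Fin.ext (by simp; omega)
  right_inv := by
    intro y
    have hk := k.isLt; have hy := y.isLt
    beta_reduce
    by_cases h1 : y.val = n-1
    · rw [dif_pos h1, if_pos rfl]
      exact Fin.ext (by simp; omega)
    · rw [dif_neg h1]
      by_cases h2 : y.val < k.val
      · rw [if_pos h2, if_neg (fun h => by rw [h] at h2; omega), if_pos h2]
      · rw [if_neg h2, if_neg (by intro h; have := congrArg Fin.val h; simp at this; omega),
          if_neg (by simp; omega)]
        exact Fin.ext (by simp)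

lemma toTop_val_of_ne (k x : Fin n) (h : x ≠ k) :
    ((toTop k) x).val = if x.val < k.val then x.val else x.val - 1 := by
  simp only [toTop, Equiv.coe_fn_mk, if_neg h]
  split_ifs <;> rfl

lemma toTop_self (k : Fin n) : ((toTop k) k).val = n - 1 := by
  simp [toTop]

lemma toTop_lt_iff (k a b : Fin n) (ha : a ≠ k) (hb : b ≠ k) :
    (toTop k) a < (toTop k) b ↔ a < b := by
  have h1 := toTop_val_of_ne k a ha
  have h2 := toTop_val_of_ne k b hb
  have ha' : a.val ≠ k.val := fun h => ha (Fin.ext h)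
  have hb' : b.val ≠ k.val := fun h => hb (Fin.ext h)
  have hak := a.isLt; have hbk := b.isLt; have hkk := k.isLt
  rw [Fin.lt_iff_val_lt_val, Fin.lt_iff_val_lt_val, h1, h2]
  split_ifs <;> omega

end Aux

section Aux2
variable {n : ℕ} {G : SimpleGraph (Fin n)} [DecidableRel G.Adj]

lemma orient_false_of_not_adj {O : Fin n → Fin n → Bool} (hO : IsOrientationB G O)
    {x y : Fin n} (h : ¬ G.Adj x y) : O x y = false := by
  cases hxy : O x y with
  | false => rfl
  | true => exact absurd (hO.1 x y hxy) h

lemma shift_edge {O : Fin n → Fin n → Bool} {v x y : Fin n}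
    (h : shiftOr G O v x y = true) : x ≠ v ∧ (y = v ∨ O x y = true) := by
  unfold shiftOr at h
  by_cases hy : y = v
  · rw [if_pos hy, decide_eq_true_iff] at h
    exact ⟨G.ne_of_adj h, Or.inl hy⟩
  · rw [if_neg hy] at h
    by_cases hx : x = v
    · rw [if_pos hx] at h; exact absurd h (by simp)
    · rw [if_neg hx] at h; exact ⟨hx, Or.inr h⟩

lemma shift_orientation {O : Fin n → Fin n → Bool} (hO : IsOrientationB G O) (v : Fin n) :
    IsOrientationB G (shiftOr G O v) := by
  constructor
  · intro x y h
    unfold shiftOr at h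
    by_cases hy : y = v
    · rw [if_pos hy, decide_eq_true_iff] at h; rw [hy]; exact h
    · rw [if_neg hy] at h
      by_cases hx : x = v
      · rw [if_pos hx] at h; exact absurd h (by simp)
      · rw [if_neg hx] at h; exact hO.1 x y h
  · intro u w hadj
    unfold shiftOr
    by_cases hw : w = v
    · have hu : u ≠ v := by rw [hw] at hadj; exact G.ne_of_adj hadj
      rw [if_pos hw, if_neg hu, if_pos hw]
      rw [hw] at hadj
      simp [hadj]
    · by_cases hu : u = v
      · rw [if_neg hw, if_pos hu, if_pos (by rw [hu]), decide_eq_true_iff.mpr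
          (by rw [hu] at hadj; exact G.adj_symm hadj)]
        rfl
      · rw [if_neg hw, if_neg hu, if_neg hu, if_neg hw]
        exact hO.2 u w hadj

lemma ext_lt {O : Fin n → Fin n → Bool} {f : Equiv.Perm (Fin n)}
    (hf : ∀ u w, O u w = true → f u < f w) {a b : Fin n}
    (h : Relation.TransGen (fun a b => O a b = true) a b) : f a < f b := by
  induction h with
  | single h => exact hf _ _ h
  | tail _ h ih => exact lt_trans ih (hf _ _ h)

lemma acyclic_of_ext {O : Fin n → Fin n → Bool} (f : Equiv.Perm (Fin n))
    (hf : ∀ u w, O u w = true → f u < f w) : IsAcyclicB O :=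
  fun v h => lt_irrefl _ (ext_lt hf h)

lemma shift_acyclic {O : Fin n → Fin n → Bool} (hA : IsAcyclicB O) (v : Fin n) :
    IsAcyclicB (shiftOr G O v) := by
  intro w hw
  have key : ∀ a b : Fin n, Relation.TransGen (fun a b => shiftOr G O v a b = true) a b →
      a ≠ v ∧ (b = v ∨ Relation.TransGen (fun a b => O a b = true) a b) := by
    intro a b h
    induction h with
    | single h => exact ⟨(shift_edge h).1, (shift_edge h).2.imp id Relation.TransGen.single⟩
    | tail hab hbc ih =>
      obtain ⟨hav, hb⟩ := ih
      obtain ⟨hbv, hc⟩ := shift_edge hbc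
      have hab' : Relation.TransGen (fun a b => O a b = true) _ _ := hb.resolve_left hbv
      exact ⟨hav, hc.imp id (fun h => hab'.tail h)⟩
  obtain ⟨hwv, hw'⟩ := key w w hw
  exact hA w (hw'.resolve_left hwv)

lemma linextCount_eq (O : Fin n → Fin n → Bool) :
    linextCount n O
      = (Finset.univ.filter (fun f : Equiv.Perm (Fin n) =>
          ∀ u v, O u v = true → f u < f v)).card := by
  rw [linextCount, Nat.card_eq_fintype_card, Fintype.card_subtype]

end Aux2

section PartB
variable {n : ℕ} {G : SimpleGraph (Fin n)} [DecidableRel G.Adj]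

/-- extension predicate -/
def extP {n : ℕ} (O : Fin n → Fin n → Bool) (f : Equiv.Perm (Fin n)) : Prop :=
  ∀ u w, O u w = true → f u < f w

/-- relaxed extension predicate ignoring vertex v -/
def qP {n : ℕ} (O' : Fin n → Fin n → Bool) (v : Fin n) (f : Equiv.Perm (Fin n)) : Prop :=
  ∀ u w, u ≠ v → w ≠ v → O' u w = true → f u < f w

lemma sink_of_shift {O O' : Fin n → Fin n → Bool} {v : Fin n}
    (h : shiftOr G O v = O') (u : Fin n) : O' v u = false := by
  rw [← h]
  unfold shiftOr
  by_cases hu : u = v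
  · rw [if_pos hu]
    simp [G.irrefl]
  · rw [if_neg hu, if_pos rfl]

lemma offv_of_shift {O O' : Fin n → Fin n → Bool} {v : Fin n}
    (h : shiftOr G O v = O') {x y : Fin n} (hx : x ≠ v) (hy : y ≠ v) : O x y = O' x y := by
  rw [← h]
  unfold shiftOr
  rw [if_neg hy, if_neg hx]

lemma adjv_of_shift {O O' : Fin n → Fin n → Bool} {v : Fin n}
    (h : shiftOr G O v = O') {x : Fin n} (hadj : G.Adj x v) : O' x v = true := by
  rw [← h]; unfold shiftOr; rw [if_pos rfl, decide_eq_true_iff]; exact hadj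

/-- The union of extension sets over `{O acyclic orientation : O^v = O'}` equals the set of
permutations satisfying `P v`. -/
lemma biUnion_ext_eq (O' : Fin n → Fin n → Bool) (hO' : IsOrientationB G O') (v : Fin n) :
    ((Finset.univ.filter
        (fun O : Fin n → Fin n → Bool => IsOrientationB G O ∧ IsAcyclicB O)).filter
        (fun O => shiftOr G O v = O')).biUnion
      (fun O => Finset.univ.filter (fun f : Equiv.Perm (Fin n) => extP O f))
    = Finset.univ.filter (fun f : Equiv.Perm (Fin n) =>
        (∀ u, O' v u = false) ∧ qP O' v f) := by
  ext f
  simp only [Finset.mem_biUnion, Finset.mem_filter, Finset.mem_univ, true_and]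
  constructor
  · rintro ⟨O, ⟨⟨hOor, hOac⟩, hsh⟩, hf⟩
    refine ⟨sink_of_shift hsh, fun u w hu hw huw => hf u w ?_⟩
    rw [offv_of_shift hsh hu hw]; exact huw
  · rintro ⟨hsink, hq⟩
    set Of : Fin n → Fin n → Bool := fun x y =>
      decide (G.Adj x y) && (if x = v ∨ y = v then decide (f x < f y) else O' x y) with hOf
    have hOfor : IsOrientationB G Of := by
      constructor
      · intro x y h
        rw [hOf] at h
        simp only [Bool.and_eq_true, decide_eq_true_iff] at h
        exact h.1
      · intro x y hadj
        have hxy : x ≠ y := G.ne_of_adj hadj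
        rw [hOf]
        simp only [decide_eq_true_iff.mpr hadj, decide_eq_true_iff.mpr (G.adj_symm hadj),
          Bool.true_and]
        by_cases h : x = v ∨ y = v
        · rw [if_pos h, if_pos (by tauto)]
          have : f x ≠ f y := fun hc => hxy (f.injective hc)
          rcases lt_or_gt_of_ne this with h' | h'
          · simp [h', not_lt_of_gt h']
          · simp [h', not_lt_of_gt h']
        · rw [if_neg h, if_neg (by tauto)]
          exact hO'.2 x y hadj
    have hfext : extP Of f := by
      intro u w h
      rw [hOf] at h
      simp only [Bool.and_eq_true, decide_eq_true_iff] at h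
      obtain ⟨hadj, h2⟩ := h
      by_cases hc : u = v ∨ w = v
      · rw [if_pos hc, decide_eq_true_iff] at h2; exact h2
      · push_neg at hc
        rw [if_neg (by tauto)] at h2
        exact hq u w hc.1 hc.2 h2
    refine ⟨Of, ⟨⟨hOfor, acyclic_of_ext f hfext⟩, ?_⟩, hfext⟩
    · funext x y
      unfold shiftOr
      by_cases hy : y = v
      · rw [if_pos hy, hy]
        by_cases hadj : G.Adj x v
        · rw [decide_eq_true_iff.mpr hadj]
          have hxv : x ≠ v := G.ne_of_adj hadj
          have := hO'.2 x v hadj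
          rw [this, hsink x, Bool.not_false]
        · rw [decide_eq_false_iff_not.mpr hadj,
            orient_false_of_not_adj hO' hadj]
      · rw [if_neg hy]
        by_cases hx : x = v
        · rw [if_pos hx, hx]
          exact (hsink y).symm
        · rw [if_neg hx, hOf]
          by_cases hadj : G.Adj x y
          · simp only [decide_eq_true_iff.mpr hadj, Bool.true_and]
            rw [if_neg (by tauto)]
          · simp only [decide_eq_false_iff_not.mpr hadj, Bool.false_and]
            exact (orient_false_of_not_adj hO' hadj).symm

end PartB

section PartB2
variable {n : ℕ} {G : SimpleGraph (Fin n)} [DecidableRel G.Adj]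

lemma ext_disjoint {O₁ O₂ : Fin n → Fin n → Bool} (h1 : IsOrientationB G O₁)
    (h2 : IsOrientationB G O₂) (hne : O₁ ≠ O₂) :
    Disjoint (Finset.univ.filter (fun f : Equiv.Perm (Fin n) => extP O₁ f))
      (Finset.univ.filter (fun f : Equiv.Perm (Fin n) => extP O₂ f)) := by
  rw [Finset.disjoint_left]
  intro f hf1 hf2
  rw [Finset.mem_filter] at hf1 hf2
  apply hne
  funext x y
  by_cases hadj : G.Adj x y
  · cases hxy1 : O₁ x y with
    | true =>
      cases hxy2 : O₂ x y with
      | true => rfl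
      | false =>
        have : O₂ y x = true := by
          have h := h2.2 x y hadj; rw [hxy2] at h
          simpa using h.symm
        exact absurd (hf2.2 y x this) (not_lt_of_gt (hf1.2 x y hxy1))
    | false =>
      cases hxy2 : O₂ x y with
      | false => rfl
      | true =>
        have : O₁ y x = true := by
          have h := h1.2 x y hadj; rw [hxy1] at h
          simpa using h.symm
        exact absurd (hf1.2 y x this) (not_lt_of_gt (hf2.2 x y hxy2))
  · rw [orient_false_of_not_adj h1 hadj, orient_false_of_not_adj h2 hadj]

lemma sum_ext_eq (O' : Fin n → Fin n → Bool) (hO' : IsOrientationB G O') (v : Fin n) :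
    ∑ O ∈ (Finset.univ.filter
        (fun O : Fin n → Fin n → Bool => IsOrientationB G O ∧ IsAcyclicB O)).filter
        (fun O => shiftOr G O v = O'),
      (Finset.univ.filter (fun f : Equiv.Perm (Fin n) => extP O f)).card
    = (Finset.univ.filter (fun f : Equiv.Perm (Fin n) =>
        (∀ u, O' v u = false) ∧ qP O' v f)).card := by
  rw [← biUnion_ext_eq O' hO' v, Finset.card_biUnion]
  intro O₁ hO₁ O₂ hO₂ hne
  rw [Finset.mem_coe, Finset.mem_filter, Finset.mem_filter] at hO₁ hO₂
  exact ext_disjoint hO₁.1.2.1 hO₂.1.2.1 hne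

lemma card_fiber (O' : Fin n → Fin n → Bool) (v k : Fin n) :
    (Finset.univ.filter (fun f : Equiv.Perm (Fin n) => qP O' v f ∧ f v = k)).card
    = (Finset.univ.filter (fun f : Equiv.Perm (Fin n) =>
        qP O' v f ∧ (f v).val = n - 1)).card := by
  apply Finset.card_bij' (fun f _ => (toTop k) * f) (fun g _ => (toTop k)⁻¹ * g)
  · intro f hf
    rw [Finset.mem_filter] at hf ⊢
    obtain ⟨-, hq, hfv⟩ := hf
    refine ⟨Finset.mem_univ _, fun u w hu hw huw => ?_, ?_⟩
    · have h1 : f u ≠ k := by rw [← hfv]; exact fun h => hu (f.injective h)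
      have h2 : f w ≠ k := by rw [← hfv]; exact fun h => hw (f.injective h)
      rw [Equiv.Perm.mul_apply, Equiv.Perm.mul_apply]
      exact (toTop_lt_iff k (f u) (f w) h1 h2).mpr (hq u w hu hw huw)
    · rw [Equiv.Perm.mul_apply, hfv]
      exact toTop_self k
  · intro g hg
    rw [Finset.mem_filter] at hg ⊢
    obtain ⟨-, hq, hgv⟩ := hg
    have hgvk : g v = (toTop k) k := Fin.ext (by rw [hgv, toTop_self])
    refine ⟨Finset.mem_univ _, fun u w hu hw huw => ?_, ?_⟩
    · have h1 : (toTop k)⁻¹ (g u) ≠ k := by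
        intro h
        have : g u = (toTop k) k :=
          (Equiv.apply_symm_apply (toTop k) (g u)).symm.trans (congrArg (toTop k) h)
        exact hu (g.injective (this.trans hgvk.symm))
      have h2 : (toTop k)⁻¹ (g w) ≠ k := by
        intro h
        have : g w = (toTop k) k :=
          (Equiv.apply_symm_apply (toTop k) (g w)).symm.trans (congrArg (toTop k) h)
        exact hw (g.injective (this.trans hgvk.symm))
      rw [Equiv.Perm.mul_apply, Equiv.Perm.mul_apply]
      rw [← toTop_lt_iff k _ _ h1 h2]
      have e1 : (toTop k) ((toTop k)⁻¹ (g u)) = g u := Equiv.apply_symm_apply _ _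
      have e2 : (toTop k) ((toTop k)⁻¹ (g w)) = g w := Equiv.apply_symm_apply _ _
      rw [e1, e2]
      exact hq u w hu hw huw
    · rw [Equiv.Perm.mul_apply, hgvk, ← Equiv.Perm.mul_apply, inv_mul_cancel,
        Equiv.Perm.one_apply]
  · intro f hf
    rw [← mul_assoc, inv_mul_cancel, one_mul]
  · intro g hg
    rw [← mul_assoc, mul_inv_cancel, one_mul]

lemma card_Pv (hn : 0 < n) (O' : Fin n → Fin n → Bool) (hO' : IsOrientationB G O')
    (v : Fin n) :
    (Finset.univ.filter (fun f : Equiv.Perm (Fin n) =>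
        (∀ u, O' v u = false) ∧ qP O' v f)).card
    = n * (Finset.univ.filter (fun g : Equiv.Perm (Fin n) =>
        extP O' g ∧ (g v).val = n - 1)).card := by
  by_cases hsink : ∀ u, O' v u = false
  · have h1 : (Finset.univ.filter (fun f : Equiv.Perm (Fin n) =>
        (∀ u, O' v u = false) ∧ qP O' v f))
        = Finset.univ.filter (fun f : Equiv.Perm (Fin n) => qP O' v f) := by
      apply Finset.filter_congr
      intro f _
      simp [hsink]
    have h2 : (Finset.univ.filter (fun g : Equiv.Perm (Fin n) =>
        extP O' g ∧ (g v).val = n - 1))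
        = Finset.univ.filter (fun f : Equiv.Perm (Fin n) =>
            qP O' v f ∧ (f v).val = n - 1) := by
      apply Finset.filter_congr
      intro g _
      constructor
      · rintro ⟨hext, htop⟩
        exact ⟨fun u w _ _ huw => hext u w huw, htop⟩
      · rintro ⟨hq, htop⟩
        refine ⟨fun u w huw => ?_, htop⟩
        by_cases hu : u = v
        · rw [hu] at huw; rw [hsink w] at huw; exact absurd huw (by simp)
        · by_cases hw : w = v
          · subst hw
            rw [Fin.lt_iff_val_lt_val, htop]
            have huv : g u ≠ g w := fun h => hu (g.injective h)
            have h3 : (g u).val ≠ (g w).val := fun h => huv (Fin.ext h)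
            have := (g u).isLt
            rw [htop] at h3
            omega
          · exact hq u w hu hw huw
    rw [h1, h2]
    rw [Finset.card_eq_sum_card_fiberwise
      (f := fun f : Equiv.Perm (Fin n) => f v) (t := Finset.univ) (fun f _ => Finset.mem_univ _)]
    have h3 : ∀ k : Fin n,
        ((Finset.univ.filter (fun f : Equiv.Perm (Fin n) => qP O' v f)).filter
          (fun f => f v = k)).card
        = (Finset.univ.filter (fun f : Equiv.Perm (Fin n) =>
            qP O' v f ∧ (f v).val = n - 1)).card := by
      intro k
      rw [Finset.filter_filter]
      exact card_fiber O' v k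
    rw [Finset.sum_congr rfl (fun k _ => h3 k), Finset.sum_const, Finset.card_univ,
      Fintype.card_fin, smul_eq_mul]
  · push_neg at hsink
    obtain ⟨u, hu⟩ := hsink
    have hu' : O' v u = true := by
      cases h : O' v u with
      | true => rfl
      | false => exact absurd h hu
    have h1 : (Finset.univ.filter (fun f : Equiv.Perm (Fin n) =>
        (∀ u, O' v u = false) ∧ qP O' v f)) = ∅ := by
      apply Finset.filter_eq_empty_iff.mpr
      intro f _
      rintro ⟨hsink', -⟩
      exact absurd (hsink' u) (by rw [hu']; simp)
    have h2 : (Finset.univ.filter (fun g : Equiv.Perm (Fin n) =>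
        extP O' g ∧ (g v).val = n - 1)) = ∅ := by
      apply Finset.filter_eq_empty_iff.mpr
      intro g _
      rintro ⟨hext, htop⟩
      have := hext v u hu'
      rw [Fin.lt_iff_val_lt_val, htop] at this
      have := (g u).isLt
      omega
    rw [h1, h2]
    simp

lemma sum_top (hn : 0 < n) (O' : Fin n → Fin n → Bool) :
    ∑ v : Fin n, (Finset.univ.filter (fun g : Equiv.Perm (Fin n) =>
        extP O' g ∧ (g v).val = n - 1)).card
    = (Finset.univ.filter (fun g : Equiv.Perm (Fin n) => extP O' g)).card := by
  rw [Finset.card_eq_sum_card_fiberwise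
    (f := fun g : Equiv.Perm (Fin n) => g.symm ⟨n-1, by omega⟩) (t := Finset.univ)
    (fun g _ => Finset.mem_univ _)]
  apply Finset.sum_congr rfl
  intro v _
  rw [Finset.filter_filter]
  apply congrArg
  apply Finset.filter_congr
  intro g _
  have : (g.symm ⟨n-1, by omega⟩ = v) ↔ ((g v).val = n - 1) := by
    rw [Equiv.symm_apply_eq]
    constructor
    · intro h; rw [← h]
    · intro h; exact Fin.ext h.symm
  constructor
  · rintro ⟨he, ht⟩; exact ⟨he, this.mpr ht⟩
  · rintro ⟨he, ht⟩; exact ⟨he, this.mp ht⟩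

end PartB2

/-- (a) `O^v` is an acyclic orientation whenever `O` is; (b) the distribution
`O ↦ e(O)/n!` is stationary for the Card-Shuffling Markov chain, i.e.
`Σ_O e(O)·|{v : O^v = O'}| = n·e(O')` for every acyclic orientation `O'`. -/
theorem stmt13 (n : ℕ) (hn : 3 ≤ n) (G : SimpleGraph (Fin n)) [DecidableRel G.Adj] :
    (∀ (O : Fin n → Fin n → Bool) (v : Fin n),
      IsOrientationB G O → IsAcyclicB O →
        IsOrientationB G (shiftOr G O v) ∧ IsAcyclicB (shiftOr G O v)) ∧
    (∀ O' : Fin n → Fin n → Bool, IsOrientationB G O' → IsAcyclicB O' →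
      ∑ O ∈ Finset.univ.filter
          (fun O : Fin n → Fin n → Bool => IsOrientationB G O ∧ IsAcyclicB O),
        linextCount n O *
          (Finset.univ.filter (fun v : Fin n => shiftOr G O v = O')).card =
        n * linextCount n O') := by
  constructor
  · intro O v hO hA
    exact ⟨shift_orientation hO v, shift_acyclic hA v⟩
  · intro O' hO' hA'
    have hn0 : 0 < n := by omega
    have step1 : ∀ O : Fin n → Fin n → Bool,
        linextCount n O * (Finset.univ.filter (fun v : Fin n => shiftOr G O v = O')).card
        = ∑ v : Fin n, if shiftOr G O v = O'
            then (Finset.univ.filter (fun f : Equiv.Perm (Fin n) => extP O f)).card else 0 := by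
      intro O
      rw [linextCount_eq O,
        Finset.card_filter (fun v : Fin n => shiftOr G O v = O') Finset.univ, Finset.mul_sum]
      refine Finset.sum_congr rfl (fun v _ => ?_)
      by_cases h : shiftOr G O v = O'
      · rw [if_pos h, if_pos h, mul_one]
        exact congrArg Finset.card (Finset.filter_congr (fun f _ => Iff.rfl))
      · rw [if_neg h, if_neg h, mul_zero]
    rw [Finset.sum_congr rfl (fun O _ => step1 O), Finset.sum_comm]
    have step2 : ∀ v : Fin n,
        (∑ O ∈ Finset.univ.filter
            (fun O : Fin n → Fin n → Bool => IsOrientationB G O ∧ IsAcyclicB O),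
          if shiftOr G O v = O'
            then (Finset.univ.filter (fun f : Equiv.Perm (Fin n) => extP O f)).card else 0)
        = n * (Finset.univ.filter (fun g : Equiv.Perm (Fin n) =>
            extP O' g ∧ (g v).val = n - 1)).card := by
      intro v
      rw [← Finset.sum_filter, sum_ext_eq O' hO' v]
      exact card_Pv hn0 O' hO' v
    rw [Finset.sum_congr rfl (fun v _ => step2 v), ← Finset.mul_sum, sum_top hn0 O',
      linextCount_eq O']
    exact congrArg (fun m => n * m)
      (congrArg Finset.card (Finset.filter_congr (fun f _ => Iff.rfl)))
end

section
/- Let G = ([n], E) be a finite simple graph, O an acyclic orientation of G, and let ≤_O denote the reflexive-transitive closure of the directed-edge relation of O (so x ≤_O y iff there is a directed path from x to y in O). Suppose {u,v} ∈ E with (u,v) a directed edge of O, and let O' be the orientation of G obtained from O by reversing only that edge: O'({u,v}) = (v,u) and O'(e) = O(e) for all other edges e ∈ E. Then O' is acyclic if and only if v covers u in ([n], ≤_O), i.e. u ≤_O v, u ≠ v, and there is no w ∉ {u,v} with u ≤_O w and w ≤_O v. -/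
section Aux

variable {V : Type*} {O : V → V → Prop} {u v : V}

/-- Any `O'`-path decomposes: either it never uses the reversed edge `(v,u)`, or the part
after the last use of the reversed edge is a pure (restricted) `O`-path from `u`. -/
lemma stmt15_split {a b : V}
    (h : Relation.ReflTransGen (fun x y => (x = v ∧ y = u) ∨ (O x y ∧ ¬ (x = u ∧ y = v))) a b) :
    Relation.ReflTransGen (fun x y => O x y ∧ ¬ (x = u ∧ y = v)) a b ∨
      (Relation.ReflTransGen (fun x y => (x = v ∧ y = u) ∨ (O x y ∧ ¬ (x = u ∧ y = v))) a v ∧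
        Relation.ReflTransGen (fun x y => O x y ∧ ¬ (x = u ∧ y = v)) u b) := by
  induction h with
  | refl => exact Or.inl .refl
  | tail hab hbc ih =>
    rcases hbc with ⟨hb, hc⟩ | hbc
    · subst hb; subst hc; exact Or.inr ⟨hab, .refl⟩
    · rcases ih with h | ⟨h1, h2⟩
      · exact Or.inl (h.tail hbc)
      · exact Or.inr ⟨h1, h2.tail hbc⟩

/-- A path `u →* w` avoids the edge `(u,v)` when `w →* v` nontrivially (by acyclicity,
`v` cannot occur on the path). -/
lemma stmt15_lift1 {w a : V} (hacyc : IsAcyclicRel O)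
    (hwv : Relation.ReflTransGen O w v) (hwne : w ≠ v)
    (h : Relation.ReflTransGen O a w) :
    Relation.ReflTransGen (fun x y => O x y ∧ ¬ (x = u ∧ y = v)) a w := by
  induction h using Relation.ReflTransGen.head_induction_on with
  | refl => exact .refl
  | head hac hcw ih =>
    refine Relation.ReflTransGen.head ⟨hac, ?_⟩ ih
    rintro ⟨-, rfl⟩
    rcases Relation.reflTransGen_iff_eq_or_transGen.mp hwv with rfl | tg
    · exact hwne rfl
    · exact hacyc _ (Relation.TransGen.trans_right hcw tg)

/-- A path `w →* v` avoids the edge `(u,v)` when `u →* w` nontrivially. -/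
lemma stmt15_lift2 {w b : V} (hacyc : IsAcyclicRel O)
    (huw : Relation.ReflTransGen O u w) (hne : u ≠ w)
    (h : Relation.ReflTransGen O w b) :
    Relation.ReflTransGen (fun x y => O x y ∧ ¬ (x = u ∧ y = v)) w b := by
  induction h with
  | refl => exact .refl
  | tail hwb hbc ih =>
    refine ih.tail ⟨hbc, ?_⟩
    rintro ⟨rfl, -⟩
    rcases Relation.reflTransGen_iff_eq_or_transGen.mp huw with rfl | tg
    · exact hne rfl
    · exact hacyc _ (Relation.TransGen.trans_right hwb tg)

end Aux

/-- reversing the single directed edge `(u,v)` of an acyclic orientation `O`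
yields an acyclic orientation iff `v` covers `u` in the induced partial order `≤_O`
(the reflexive-transitive closure of `O`). -/
theorem stmt15 (n : ℕ) (G : SimpleGraph (Fin n)) (O : Fin n → Fin n → Prop)
    (hO : IsOrientation G O) (hacyc : IsAcyclicRel O)
    (u v : Fin n) (hE : G.Adj u v) (huv : O u v) :
    IsAcyclicRel (fun x y => (x = v ∧ y = u) ∨ (O x y ∧ ¬ (x = u ∧ y = v))) ↔
      (Relation.ReflTransGen O u v ∧ u ≠ v ∧
        ∀ w, w ≠ u → w ≠ v →
          ¬ (Relation.ReflTransGen O u w ∧ Relation.ReflTransGen O w v)) := by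
  set O'' : Fin n → Fin n → Prop := fun x y => O x y ∧ ¬ (x = u ∧ y = v) with hO''
  set O' : Fin n → Fin n → Prop :=
    fun x y => (x = v ∧ y = u) ∨ (O x y ∧ ¬ (x = u ∧ y = v)) with hO'
  have hmono : ∀ {a b : Fin n}, Relation.ReflTransGen O'' a b → Relation.ReflTransGen O a b :=
    fun h => Relation.ReflTransGen.mono (r := O'') (p := O) (fun _ _ hh => hh.1) _ _ h
  have hinj : ∀ {a b : Fin n}, Relation.ReflTransGen O'' a b → Relation.ReflTransGen O' a b :=
    fun h => Relation.ReflTransGen.mono (r := O'') (p := O') (fun _ _ hh => Or.inr hh) _ _ h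
  constructor
  · intro h'
    refine ⟨.single huv, hE.ne, ?_⟩
    rintro w hwu hwv ⟨h1, h2⟩
    have p1 : Relation.ReflTransGen O'' u w := stmt15_lift1 hacyc h2 hwv h1
    have p2 : Relation.ReflTransGen O'' w v := stmt15_lift2 hacyc h1 (Ne.symm hwu) h2
    exact h' v (Relation.TransGen.head' (Or.inl ⟨rfl, rfl⟩) ((hinj p1).trans (hinj p2)))
  · rintro ⟨-, -, hcov⟩ x hx
    obtain ⟨y, hxy, hyx⟩ := Relation.TransGen.head'_iff.mp hx
    -- produce a pure restricted path from u to v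
    have key : Relation.ReflTransGen O'' u v := by
      rcases hxy with ⟨hxv, hyu⟩ | hxy
      · subst hxv; subst hyu
        rcases stmt15_split hyx with h | ⟨-, h⟩ <;> exact h
      · rcases stmt15_split hyx with h | ⟨h1, h2⟩
        · have hc : Relation.TransGen O'' x x := Relation.TransGen.head' hxy h
          exact absurd (Relation.TransGen.mono (r := O'') (p := O) (fun _ _ hh => hh.1) _ _ hc) (hacyc x)
        · -- h2 : u →*O'' x, hxy : O'' x y, h1 : y →*O' v
          rcases stmt15_split h1 with h | ⟨-, h⟩
          · exact (h2.tail hxy).trans h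
          · exact h
    rcases key.cases_head with h | ⟨w, hw, hwv⟩
    · exact hE.ne h
    · have hwu : w ≠ u := fun h => by
        subst h; exact G.loopless.irrefl w (hO.1 _ _ hw.1)
      have hwnev : w ≠ v := fun h => hw.2 ⟨rfl, h⟩
      exact hcov w hwu hwnev ⟨.single hw.1, hmono hwv⟩
end

section
/- Let G = (V, E) be a finite simple graph, O an acyclic orientation of G, and ≤_O the reflexive-transitive closure of the directed-edge relation of O (write x <_O y for x ≤_O y and x ≠ y). Given {u,v} ∈ E with (u,v) a directed edge of O, define the orientation O_{{u,v}} of G as follows: for each edge e = {x,y} ∈ E with (x,y) a directed edge of O, set O_{{u,v}}(e) = (y,x) if u ≤_O x, x <_O y, and y ≤_O v, and set O_{{u,v}}(e) = (x,y) otherwise. Then: (a) O_{{u,v}} is an acyclic orientation of G; (b) applying the operation again to the same edge recovers O, i.e. (O_{{u,v}})_{{u,v}} = O; and (c) for edges e_1, e_2 ∈ E, if O_{e_1} = O_{e_2} then e_1 = e_2. -/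
/-- The condition under which a directed edge `(x,y)` of `O` gets reversed in the interval
reversal indexed by `(u,v)`: `u ≤_O x`, `x <_O y` and `y ≤_O v`. -/
def irCond {V : Type*} (O : V → V → Prop) (u v x y : V) : Prop :=
  Relation.ReflTransGen O u x ∧ (Relation.ReflTransGen O x y ∧ x ≠ y) ∧
    Relation.ReflTransGen O y v

/-- The interval reversal `O_{{u,v}}` of an orientation `O` of a graph: each directed edge
`(x,y)` of `O` with `u ≤_O x`, `x <_O y`, `y ≤_O v` is reversed, and all other edges keep
their orientation. -/
def intervalReversal {V : Type*} (O : V → V → Prop) (u v : V) : V → V → Prop :=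
  fun a b => (O a b ∧ ¬ irCond O u v a b) ∨ (O b a ∧ irCond O u v b a)

namespace Stmt16Aux

open Relation

variable {V : Type*} {O : V → V → Prop} {u v a b : V}

lemma acyc_ne (hacyc : IsAcyclicRel O) (h : O a b) : a ≠ b :=
  fun heq => hacyc b (TransGen.single (heq ▸ h))

lemma acyc_asymm (hacyc : IsAcyclicRel O) (h : O a b) : ¬ O b a :=
  fun h' => hacyc a ((TransGen.single h).tail h')

lemma acyc_anti (hacyc : IsAcyclicRel O) (h1 : ReflTransGen O a b)
    (h2 : ReflTransGen O b a) : a = b := by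
  by_contra hne
  have t1 : TransGen O a b :=
    (reflTransGen_iff_eq_or_transGen.mp h1).resolve_left (fun h => hne h.symm)
  have t2 : TransGen O b a :=
    (reflTransGen_iff_eq_or_transGen.mp h2).resolve_left (fun h => hne h)
  exact hacyc a (t1.trans t2)

/-- One step from a vertex not below `v` is a kept edge and stays not below `v`. -/
lemma step_not_le_v (h : intervalReversal O u v a b)
    (ha : ¬ ReflTransGen O a v) : O a b ∧ ¬ ReflTransGen O b v := by
  rcases h with ⟨hab, _⟩ | ⟨_, _, _, hav⟩
  · exact ⟨hab, fun hbv => ha (ReflTransGen.head hab hbv)⟩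
  · exact absurd hav ha

lemma tg_not_le_v (h : TransGen (intervalReversal O u v) a b)
    (ha : ¬ ReflTransGen O a v) : TransGen O a b ∧ ¬ ReflTransGen O b v := by
  induction h with
  | single h => exact ⟨TransGen.single (step_not_le_v h ha).1, (step_not_le_v h ha).2⟩
  | tail _ hcb ih =>
    obtain ⟨t, hc⟩ := ih
    obtain ⟨hstep, hb⟩ := step_not_le_v hcb hc
    exact ⟨t.tail hstep, hb⟩

/-- One step into a vertex not above `u` is a kept edge and the source is not above `u`. -/
lemma step_not_u_le (h : intervalReversal O u v a b)
    (hb : ¬ ReflTransGen O u b) : O a b ∧ ¬ ReflTransGen O u a := by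
  rcases h with ⟨hab, _⟩ | ⟨_, hub, _, _⟩
  · exact ⟨hab, fun hua => hb (hua.tail hab)⟩
  · exact absurd hub hb

lemma tg_not_u_le (h : TransGen (intervalReversal O u v) a b)
    (hb : ¬ ReflTransGen O u b) : TransGen O a b ∧ ¬ ReflTransGen O u a := by
  induction h using TransGen.head_induction_on with
  | single h => exact ⟨TransGen.single (step_not_u_le h hb).1, (step_not_u_le h hb).2⟩
  | head h' _ ih =>
    obtain ⟨t, hc⟩ := ih
    obtain ⟨hstep, ha⟩ := step_not_u_le h' hc
    exact ⟨t.head hstep, ha⟩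

lemma step_u_le (h : intervalReversal O u v a b)
    (ha : ReflTransGen O u a) : ReflTransGen O u b := by
  rcases h with ⟨hab, _⟩ | ⟨_, hub, _, _⟩
  · exact ha.tail hab
  · exact hub

/-- Steps inside the interval are reversed edges. -/
lemma step_int (hacyc : IsAcyclicRel O) (h : intervalReversal O u v a b)
    (hua : ReflTransGen O u a) (hav : ReflTransGen O a v) (hbv : ReflTransGen O b v) :
    ReflTransGen O u b ∧ O b a := by
  rcases h with ⟨hab, hnc⟩ | ⟨hba, hub, _, _⟩
  · exact absurd ⟨hua, ⟨ReflTransGen.single hab, acyc_ne hacyc hab⟩, hbv⟩ hnc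
  · exact ⟨hub, hba⟩

lemma tg_int (hacyc : IsAcyclicRel O) (h : TransGen (intervalReversal O u v) a b)
    (hua : ReflTransGen O u a) (hav : ReflTransGen O a v) (hbv : ReflTransGen O b v) :
    ReflTransGen O u b ∧ TransGen O b a := by
  induction h with
  | single h =>
    obtain ⟨h1, h2⟩ := step_int hacyc h hua hav hbv
    exact ⟨h1, TransGen.single h2⟩
  | @tail c d htac hcb ih =>
    have hcv : ReflTransGen O c v := by
      by_contra hcv
      exact (step_not_le_v hcb hcv).2 hbv
    obtain ⟨huc, tca⟩ := ih hcv
    obtain ⟨hub, hbc⟩ := step_int hacyc hcb huc hcv hbv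
    exact ⟨hub, tca.head hbc⟩

lemma step_intd (hacyc : IsAcyclicRel O) (h : intervalReversal O u v a b)
    (hua : ReflTransGen O u a) (hub : ReflTransGen O u b) (hbv : ReflTransGen O b v) :
    O b a ∧ ReflTransGen O a v := by
  rcases h with ⟨hab, hnc⟩ | ⟨hba, _, _, hav⟩
  · exact absurd ⟨hua, ⟨ReflTransGen.single hab, acyc_ne hacyc hab⟩, hbv⟩ hnc
  · exact ⟨hba, hav⟩

lemma tg_intd (hacyc : IsAcyclicRel O) (h : TransGen (intervalReversal O u v) a b)
    (hua : ReflTransGen O u a) (hub : ReflTransGen O u b) (hbv : ReflTransGen O b v) :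
    TransGen O b a ∧ ReflTransGen O a v := by
  induction h using TransGen.head_induction_on with
  | single h =>
    obtain ⟨h1, h2⟩ := step_intd hacyc h hua hub hbv
    exact ⟨TransGen.single h1, h2⟩
  | @head a c h' htcb ih =>
    have huc : ReflTransGen O u c := step_u_le h' hua
    obtain ⟨tbc, hcv⟩ := ih huc
    obtain ⟨hca, hav⟩ := step_intd hacyc h' hua huc hcv
    exact ⟨tbc.tail hca, hav⟩

/-- An `O`-path inside the interval `[u,v]` reverses to an `O'`-path. -/
lemma rtg_rev (hacyc : IsAcyclicRel O) {x y : V} (h : ReflTransGen O y x)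
    (huy : ReflTransGen O u y) (hxv : ReflTransGen O x v) :
    ReflTransGen (intervalReversal O u v) x y := by
  induction h using ReflTransGen.head_induction_on with
  | refl => exact ReflTransGen.refl
  | @head y z hyz hzx ih =>
    have huz : ReflTransGen O u z := huy.tail hyz
    have hzv : ReflTransGen O z v := hzx.trans hxv
    have hrev : intervalReversal O u v z y :=
      Or.inr ⟨hyz, huy, ⟨ReflTransGen.single hyz, acyc_ne hacyc hyz⟩, hzv⟩
    exact (ih huz).tail hrev

lemma acyc_rev (hacyc : IsAcyclicRel O) : IsAcyclicRel (intervalReversal O u v) := by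
  intro w hw
  by_cases h1 : ReflTransGen O w v
  · by_cases h2 : ReflTransGen O u w
    · exact hacyc w (tg_int hacyc hw h2 h1 h1).2
    · exact hacyc w (tg_not_u_le hw h2).1
  · exact hacyc w (tg_not_le_v hw h1).1

/-- Case of a reversed edge: its double reversal data. -/
lemma rev_forward (hacyc : IsAcyclicRel O) (huv : O u v) (hab : O a b)
    (hc : irCond O u v a b) :
    intervalReversal O u v b a ∧ irCond (intervalReversal O u v) v u b a ∧
      ¬ intervalReversal O u v a b := by
  obtain ⟨hua, ⟨_, hne⟩, hbv⟩ := hc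
  have hnba : ¬ O b a := acyc_asymm hacyc hab
  have hrev : intervalReversal O u v b a :=
    Or.inr ⟨hab, hua, ⟨ReflTransGen.single hab, hne⟩, hbv⟩
  refine ⟨hrev, ⟨?_, ⟨ReflTransGen.single hrev, hne.symm⟩, ?_⟩, ?_⟩
  · exact rtg_rev hacyc hbv (hua.tail hab) ReflTransGen.refl
  · exact rtg_rev hacyc hua ReflTransGen.refl ((ReflTransGen.single hab).trans hbv)
  · rintro (⟨_, hn⟩ | ⟨h', _⟩)
    · exact hn ⟨hua, ⟨ReflTransGen.single hab, hne⟩, hbv⟩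
    · exact hnba h'

/-- Case of a kept edge: its double reversal data. -/
lemma rev_keep (hacyc : IsAcyclicRel O) (huv : O u v) (hab : O a b)
    (hnc : ¬ irCond O u v a b) :
    intervalReversal O u v a b ∧ ¬ irCond (intervalReversal O u v) v u a b ∧
      ¬ intervalReversal O u v b a := by
  have hne : a ≠ b := acyc_ne hacyc hab
  refine ⟨Or.inl ⟨hab, hnc⟩, ?_, ?_⟩
  · rintro ⟨hva, ⟨hab', _⟩, hbu⟩
    have hmain : ¬ ReflTransGen O u a ∨ ¬ ReflTransGen O b v := by
      by_contra hcon
      push_neg at hcon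
      exact hnc ⟨hcon.1, ⟨ReflTransGen.single hab, hne⟩, hcon.2⟩
    rcases hmain with hna | hnb
    · have hnav : ¬ ReflTransGen O a v := by
        intro hav
        have hvne : v ≠ a := fun heq => hna (heq ▸ ReflTransGen.single huv)
        have tva : TransGen (intervalReversal O u v) v a :=
          (reflTransGen_iff_eq_or_transGen.mp hva).resolve_left (fun h => hvne h.symm)
        exact hna (tg_int hacyc tva (ReflTransGen.single huv) ReflTransGen.refl hav).1
      have tau : TransGen (intervalReversal O u v) a u := by
        have : ReflTransGen (intervalReversal O u v) a u := hab'.trans hbu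
        have hane : a ≠ u := fun heq => hna (heq ▸ ReflTransGen.refl)
        exact (reflTransGen_iff_eq_or_transGen.mp this).resolve_left (fun h => hane h.symm)
      exact (tg_not_le_v tau hnav).2 (ReflTransGen.single huv)
    · have hbne : b ≠ u := fun heq => hnb (heq ▸ ReflTransGen.single huv)
      have tbu : TransGen (intervalReversal O u v) b u :=
        (reflTransGen_iff_eq_or_transGen.mp hbu).resolve_left (fun h => hbne h.symm)
      have hnbv : ¬ ReflTransGen O b v := hnb
      exact (tg_not_le_v tbu hnbv).2 (ReflTransGen.single huv)
  · rintro (⟨h', _⟩ | ⟨h', hc'⟩)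
    · exact acyc_asymm hacyc hab h'
    · exact hnc hc'

end Stmt16Aux

open Stmt16Aux Relation in
/-- (a) the interval reversal of an acyclic orientation is an acyclic
orientation; (b) reversing the same edge again recovers `O` (in `O_{{u,v}}` the edge
`{u,v}` is directed `(v,u)`); (c) interval reversals along distinct edges are distinct. -/
theorem stmt16 (V : Type*) [Fintype V] (G : SimpleGraph V) (O : V → V → Prop)
    (hO : IsOrientation G O) (hacyc : IsAcyclicRel O)
    (u v : V) (hE : G.Adj u v) (huv : O u v) :
    (IsOrientation G (intervalReversal O u v) ∧ IsAcyclicRel (intervalReversal O u v)) ∧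
    intervalReversal (intervalReversal O u v) v u = O ∧
    (∀ u₁ v₁ u₂ v₂ : V, O u₁ v₁ → O u₂ v₂ →
      intervalReversal O u₁ v₁ = intervalReversal O u₂ v₂ → u₁ = u₂ ∧ v₁ = v₂) := by
  refine ⟨⟨⟨?_, ?_⟩, acyc_rev hacyc⟩, ?_, ?_⟩
  · -- edges of the reversal are edges of G
    rintro a b (⟨h, _⟩ | ⟨h, _⟩)
    · exact hO.1 a b h
    · exact (hO.1 b a h).symm
  · -- exactly one direction per edge
    intro a b hadj
    have hiff := hO.2 a b hadj
    have hiff' := hO.2 b a hadj.symm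
    simp only [intervalReversal]
    by_cases hab : O a b
    · have hnba : ¬ O b a := hiff.mp hab
      tauto
    · have hba : O b a := hiff'.mpr hab
      tauto
  · -- double reversal
    funext a b
    apply propext
    by_cases hab : O a b
    · by_cases hc : irCond O u v a b
      · obtain ⟨h1, h2, _⟩ := rev_forward hacyc huv hab hc
        exact ⟨fun _ => hab, fun _ => Or.inr ⟨h1, h2⟩⟩
      · obtain ⟨h1, h2, _⟩ := rev_keep hacyc huv hab hc
        exact ⟨fun _ => hab, fun _ => Or.inl ⟨h1, h2⟩⟩
    · refine ⟨?_, fun h => absurd h hab⟩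
      by_cases hba : O b a
      · by_cases hc : irCond O u v b a
        · obtain ⟨h1, h2, h3⟩ := rev_forward hacyc huv hba hc
          rintro (⟨_, hn⟩ | ⟨h', _⟩)
          · exact absurd h2 hn
          · exact absurd h' h3
        · obtain ⟨h1, h2, h3⟩ := rev_keep hacyc huv hba hc
          rintro (⟨h', _⟩ | ⟨_, hc'⟩)
          · exact absurd h' h3
          · exact absurd hc' h2
      · rintro (⟨h', _⟩ | ⟨h', _⟩) <;>
          rcases h' with ⟨h'', _⟩ | ⟨h'', _⟩ <;> first
            | exact absurd h'' hab
            | exact absurd h'' hba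
  · -- injectivity
    intro u₁ v₁ u₂ v₂ h1 h2 heq
    have key : ∀ (u₁ v₁ u₂ v₂ : V), O u₁ v₁ → O u₂ v₂ →
        intervalReversal O u₁ v₁ = intervalReversal O u₂ v₂ →
        ReflTransGen O u₂ u₁ ∧ ReflTransGen O v₁ v₂ := by
      intro u₁ v₁ u₂ v₂ h1 h2 heq
      have c11 : irCond O u₁ v₁ u₁ v₁ :=
        ⟨ReflTransGen.refl, ⟨ReflTransGen.single h1, acyc_ne hacyc h1⟩, ReflTransGen.refl⟩
      have r1 : intervalReversal O u₁ v₁ v₁ u₁ := Or.inr ⟨h1, c11⟩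
      rw [heq] at r1
      rcases r1 with ⟨h', _⟩ | ⟨_, hc⟩
      · exact absurd h' (acyc_asymm hacyc h1)
      · exact ⟨hc.1, hc.2.2⟩
    obtain ⟨ha1, hb1⟩ := key u₁ v₁ u₂ v₂ h1 h2 heq
    obtain ⟨ha2, hb2⟩ := key u₂ v₂ u₁ v₁ h2 h1 heq.symm
    exact ⟨acyc_anti hacyc ha2 ha1, acyc_anti hacyc hb1 hb2⟩
end

section
/- Let G = (V, E) be a finite simple graph. Let AO_G^inter be the graph whose vertices are the acyclic orientations of G, where two acyclic orientations O_1 ≠ O_2 are adjacent if and only if there exists an edge {u,v} ∈ E, oriented (u,v) by O_1, such that the interval reversal (O_1)_{{u,v}} equals O_2. Then AO_G^inter is a well-defined simple graph (adjacency is symmetric), it is |E|-regular (every acyclic orientation has exactly |E| neighbors), and it is connected. -/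
/-- The vertices of the interval-reversal graph: acyclic orientations of `G`. -/
def AOVert {V : Type*} (G : SimpleGraph V) :=
  {O : V → V → Prop // IsOrientation G O ∧ IsAcyclicRel O}

/-- Adjacency in `AO_G^inter`: two distinct acyclic orientations related by an interval
reversal along some edge. -/
def AOAdj {V : Type*} (G : SimpleGraph V) (O₁ O₂ : AOVert G) : Prop :=
  O₁ ≠ O₂ ∧ ∃ u v : V, O₁.1 u v ∧ intervalReversal O₁.1 u v = O₂.1

open Relation

section Basic
variable {V : Type*} {G : SimpleGraph V} {O : V → V → Prop} {u v : V}

lemma ir17_not_both (hO : IsOrientation G O) {a b : V} (h : O a b) : ¬ O b a :=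
  (hO.2 a b (hO.1 a b h)).mp h

lemma ir17_ne (hA : IsAcyclicRel O) {a b : V} (h : O a b) : a ≠ b := by
  rintro rfl; exact hA a (TransGen.single h)

lemma ir17_antisymm (hA : IsAcyclicRel O) {a b : V}
    (h1 : ReflTransGen O a b) (h2 : ReflTransGen O b a) : a = b := by
  rcases (reflTransGen_iff_eq_or_transGen.mp h1) with h | h
  · exact h.symm
  · rcases (reflTransGen_iff_eq_or_transGen.mp h2) with h' | h'
    · exact h'
    · exact absurd (h.trans h') (hA a)

open Classical in
noncomputable def irCls (O : V → V → Prop) (u v x : V) : ℕ :=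
  if ReflTransGen O u x then (if ReflTransGen O x v then 1 else 2) else 0

lemma irCls_eq_one {x : V} :
    irCls O u v x = 1 ↔ ReflTransGen O u x ∧ ReflTransGen O x v := by
  unfold irCls; split_ifs with h1 h2 <;> simp_all

lemma irCls_mono {x y : V} (hedge : O x y) : irCls O u v x ≤ irCls O u v y := by
  unfold irCls
  by_cases h1 : ReflTransGen O u x
  · have h1y : ReflTransGen O u y := h1.tail hedge
    by_cases h2 : ReflTransGen O x v
    · simp only [if_pos h1, if_pos h1y, if_pos h2]
      split_ifs <;> omega
    · have h2y : ¬ ReflTransGen O y v := fun h => h2 (ReflTransGen.head hedge h)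
      simp [h1, h2, h1y, h2y]
  · simp only [if_neg h1]; omega

lemma irCls_mono_rev {x y : V} (h : intervalReversal O u v x y) :
    irCls O u v x ≤ irCls O u v y := by
  rcases h with ⟨h, -⟩ | ⟨h, hc⟩
  · exact irCls_mono h
  · obtain ⟨h1, ⟨h2, hne⟩, h3⟩ := hc
    have hx : irCls O u v x = 1 := irCls_eq_one.mpr ⟨h1.trans h2, h3⟩
    have hy : irCls O u v y = 1 := irCls_eq_one.mpr ⟨h1, h2.trans h3⟩
    omega

lemma ir17_rtg_mono {R : V → V → Prop} {f : V → ℕ} (hf : ∀ a b, R a b → f a ≤ f b)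
    {x y : V} (h : ReflTransGen R x y) : f x ≤ f y := by
  induction h with
  | refl => exact le_refl _
  | tail _ hstep ih => exact le_trans ih (hf _ _ hstep)

lemma ir17_tg_mono {R : V → V → Prop} {f : V → ℕ} (hf : ∀ a b, R a b → f a ≤ f b)
    {x y : V} (h : TransGen R x y) : f x ≤ f y :=
  ir17_rtg_mono hf h.to_reflTransGen

lemma ir17_orient (hO : IsOrientation G O) : IsOrientation G (intervalReversal O u v) := by
  constructor
  · rintro a b (⟨h, -⟩ | ⟨h, -⟩)
    · exact hO.1 a b h
    · exact (hO.1 b a h).symm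
  · intro a b hadj
    have h2 := hO.2 a b hadj
    unfold intervalReversal
    by_cases h : O a b
    · have hnb : ¬ O b a := h2.mp h
      by_cases hc : irCond O u v a b <;> simp [h, hnb, hc]
    · have hb : O b a := by
        by_contra hb; exact h (h2.mpr hb)
      by_cases hc : irCond O u v b a <;> simp [h, hb, hc]

lemma ir17_acyclic (hA : IsAcyclicRel O) : IsAcyclicRel (intervalReversal O u v) := by
  intro w hw
  set c := irCls O u v w with hc
  set S : V → V → Prop := fun a b =>
    intervalReversal O u v a b ∧ irCls O u v a = c ∧ irCls O u v b = c with hS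
  have extract : ∀ {a b : V}, TransGen (intervalReversal O u v) a b →
      irCls O u v a = c → irCls O u v b = c → TransGen S a b := by
    intro a b h
    induction h with
    | single h => exact fun ha hb => TransGen.single ⟨h, ha, hb⟩
    | @tail m b h hstep ih =>
      intro ha hb
      have hm1 : irCls O u v a ≤ irCls O u v m := ir17_tg_mono (fun _ _ hh => irCls_mono_rev hh) h
      have hm2 : irCls O u v m ≤ irCls O u v b := irCls_mono_rev hstep
      have hm : irCls O u v m = c := by omega
      exact (ih ha hm).tail ⟨hstep, hm, hb⟩
  have htg : TransGen S w w := extract hw rfl rfl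
  by_cases hc1 : c = 1
  · have hstep : ∀ a b, S a b → Function.swap O a b := by
      rintro a b ⟨hrev, ha, hb⟩
      rcases hrev with ⟨h, hnc⟩ | ⟨h, -⟩
      · obtain ⟨ha1, ha2⟩ := irCls_eq_one.mp (ha.trans hc1)
        obtain ⟨hb1, hb2⟩ := irCls_eq_one.mp (hb.trans hc1)
        exact absurd ⟨ha1, ⟨ReflTransGen.single h, ir17_ne hA h⟩, hb2⟩ hnc
      · exact h
    exact hA w (transGen_swap.mp (TransGen.mono hstep w w htg))
  · have hstep : ∀ a b, S a b → O a b := by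
      rintro a b ⟨hrev, ha, hb⟩
      rcases hrev with ⟨h, -⟩ | ⟨h, hcnd⟩
      · exact h
      · obtain ⟨h1, ⟨h2, hne⟩, h3⟩ := hcnd
        exact absurd (ha.symm.trans (irCls_eq_one.mpr ⟨h1.trans h2, h3⟩)) hc1
    exact hA w (TransGen.mono hstep w w htg)

end Basic

section Invol
variable {V : Type*} {G : SimpleGraph V} {O : V → V → Prop} {u v : V}
open Relation

/-- value lemma: a reversed edge. -/
lemma ir17_val_rev (hO : IsOrientation G O) {a b : V} (h : O a b) (hc : irCond O u v a b) :
    ¬ intervalReversal O u v a b ∧ intervalReversal O u v b a := by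
  have hnb := ir17_not_both hO h
  constructor
  · rintro (⟨-, hnc⟩ | ⟨hb, -⟩)
    · exact hnc hc
    · exact hnb hb
  · exact Or.inr ⟨h, hc⟩

/-- value lemma: a kept edge. -/
lemma ir17_val_keep (hO : IsOrientation G O) {a b : V} (h : O a b) (hc : ¬ irCond O u v a b) :
    intervalReversal O u v a b ∧ ¬ intervalReversal O u v b a := by
  have hnb := ir17_not_both hO h
  refine ⟨Or.inl ⟨h, hc⟩, ?_⟩
  rintro (⟨hb, -⟩ | ⟨-, hc'⟩)
  · exact hnb hb
  · exact hc hc'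

lemma ir17_val_none {a b : V} (h1 : ¬ O a b) (h2 : ¬ O b a) :
    ¬ intervalReversal O u v a b := by
  rintro (⟨h, -⟩ | ⟨h, -⟩)
  · exact h1 h
  · exact h2 h

/-- Reachability correspondence inside the interval. -/
lemma ir17_reach (hA : IsAcyclicRel O) {x y : V}
    (hx : ReflTransGen O u x ∧ ReflTransGen O x v)
    (hy : ReflTransGen O u y ∧ ReflTransGen O y v) :
    ReflTransGen (intervalReversal O u v) x y ↔ ReflTransGen O y x := by
  have edge_rev : ∀ {a b : V}, (ReflTransGen O u a ∧ ReflTransGen O a v) →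
      (ReflTransGen O u b ∧ ReflTransGen O b v) → intervalReversal O u v a b → O b a := by
    rintro a b ha hb (⟨h, hnc⟩ | ⟨h, -⟩)
    · exact absurd ⟨ha.1, ⟨ReflTransGen.single h, ir17_ne hA h⟩, hb.2⟩ hnc
    · exact h
  have edge_fwd : ∀ {a b : V}, (ReflTransGen O u a ∧ ReflTransGen O a v) →
      (ReflTransGen O u b ∧ ReflTransGen O b v) → O b a → intervalReversal O u v a b :=
    fun ha hb h => Or.inr ⟨h, hb.1, ⟨ReflTransGen.single h, ir17_ne hA h⟩, ha.2⟩
  have fwd : ∀ {x y : V}, ReflTransGen (intervalReversal O u v) x y →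
      (ReflTransGen O u x ∧ ReflTransGen O x v) →
      (ReflTransGen O u y ∧ ReflTransGen O y v) → ReflTransGen O y x := by
    intro x y h
    induction h with
    | refl => exact fun _ _ => ReflTransGen.refl
    | @tail m b h hstep ih =>
      intro hx hb
      have hm1 : irCls O u v x ≤ irCls O u v m :=
        ir17_rtg_mono (fun _ _ hh => irCls_mono_rev hh) h
      have hm2 : irCls O u v m ≤ irCls O u v b := irCls_mono_rev hstep
      have hx1 : irCls O u v x = 1 := irCls_eq_one.mpr hx
      have hb1 : irCls O u v b = 1 := irCls_eq_one.mpr hb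
      have hm : ReflTransGen O u m ∧ ReflTransGen O m v := irCls_eq_one.mp (by omega)
      exact ReflTransGen.head (edge_rev hm hb hstep) (ih hx hm)
  have back : ∀ {y x : V}, ReflTransGen O y x →
      (ReflTransGen O u y ∧ ReflTransGen O y v) →
      (ReflTransGen O u x ∧ ReflTransGen O x v) →
      ReflTransGen (intervalReversal O u v) x y := by
    intro y x h
    induction h with
    | refl => exact fun _ _ => ReflTransGen.refl
    | @tail m b h hstep ih =>
      intro hy hb
      have hm1 : irCls O u v y ≤ irCls O u v m :=
        ir17_rtg_mono (fun _ _ hh => irCls_mono hh) h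
      have hm2 : irCls O u v m ≤ irCls O u v b := irCls_mono hstep
      have hy1 : irCls O u v y = 1 := irCls_eq_one.mpr hy
      have hb1 : irCls O u v b = 1 := irCls_eq_one.mpr hb
      have hm : ReflTransGen O u m ∧ ReflTransGen O m v := irCls_eq_one.mp (by omega)
      exact ReflTransGen.head (edge_fwd hb hm hstep) (ih hy hm)
  exact ⟨fun h => fwd h hx hy, fun h => back h hy hx⟩

lemma ir17_uI (huv : O u v) : ReflTransGen O u u ∧ ReflTransGen O u v :=
  ⟨ReflTransGen.refl, ReflTransGen.single huv⟩

lemma ir17_vI (huv : O u v) : ReflTransGen O u v ∧ ReflTransGen O v v :=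
  ⟨ReflTransGen.single huv, ReflTransGen.refl⟩

/-- the reversal condition transfers to the reversed orientation. -/
lemma ir17_cond_rev (hA : IsAcyclicRel O) (huv : O u v) {x y : V}
    (hxy : O x y) (hC : irCond O u v x y) :
    irCond (intervalReversal O u v) v u y x := by
  obtain ⟨h1, ⟨h2, hne⟩, h3⟩ := hC
  have hxI : ReflTransGen O u x ∧ ReflTransGen O x v := ⟨h1, h2.trans h3⟩
  have hyI : ReflTransGen O u y ∧ ReflTransGen O y v := ⟨h1.trans h2, h3⟩
  refine ⟨(ir17_reach hA (ir17_vI huv) hyI).mpr h3, ⟨?_, hne.symm⟩, ?_⟩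
  · exact (ir17_reach hA hyI hxI).mpr h2
  · exact (ir17_reach hA hxI (ir17_uI huv)).mpr h1

lemma ir17_cond_keep (hA : IsAcyclicRel O) (huv : O u v) {x y : V}
    (hxy : O x y) (hC : ¬ irCond O u v x y) :
    ¬ irCond (intervalReversal O u v) v u x y := by
  rintro ⟨h1, ⟨h2, hne⟩, h3⟩
  have mono : ∀ {a b : V}, ReflTransGen (intervalReversal O u v) a b →
      irCls O u v a ≤ irCls O u v b := fun h => ir17_rtg_mono (fun _ _ hh => irCls_mono_rev hh) h
  have hv1 : irCls O u v v = 1 := irCls_eq_one.mpr (ir17_vI huv)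
  have hu1 : irCls O u v u = 1 := irCls_eq_one.mpr (ir17_uI huv)
  have c1 := mono h1
  have c2 := mono h2
  have c3 := mono h3
  have hxI : ReflTransGen O u x ∧ ReflTransGen O x v := irCls_eq_one.mp (by omega)
  have hyI : ReflTransGen O u y ∧ ReflTransGen O y v := irCls_eq_one.mp (by omega)
  exact hC ⟨hxI.1, ⟨ReflTransGen.single hxy, ir17_ne hA hxy⟩, hyI.2⟩

/-- interval reversal is an involution (with the reversed distinguished edge). -/
lemma ir17_invol (hO : IsOrientation G O) (hA : IsAcyclicRel O) (huv : O u v) :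
    intervalReversal (intervalReversal O u v) v u = O := by
  have hO2 : IsOrientation G (intervalReversal O u v) := ir17_orient hO
  funext a b
  apply propext
  by_cases hab : O a b
  · by_cases hC : irCond O u v a b
    · have hv := ir17_val_rev hO hab hC
      have hC2 := ir17_cond_rev hA huv hab hC
      have := ir17_val_rev hO2 hv.2 hC2
      exact iff_of_true this.2 hab
    · have hv := ir17_val_keep hO hab hC
      have hC2 := ir17_cond_keep hA huv hab hC
      have := ir17_val_keep hO2 hv.1 hC2
      exact iff_of_true this.1 hab
  · by_cases hba : O b a
    · by_cases hC : irCond O u v b a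
      · have hv := ir17_val_rev hO hba hC
        have hC2 := ir17_cond_rev hA huv hba hC
        have := ir17_val_rev hO2 hv.2 hC2
        exact iff_of_false this.1 hab
      · have hv := ir17_val_keep hO hba hC
        have hC2 := ir17_cond_keep hA huv hba hC
        have := ir17_val_keep hO2 hv.1 hC2
        exact iff_of_false this.2 hab
    · have h1 := ir17_val_none (O := O) (u := u) (v := v) hab hba
      have h2 := ir17_val_none (O := O) (u := u) (v := v) hba hab
      exact iff_of_false (ir17_val_none (u := v) (v := u) h1 h2) hab

/-- the distinguished edge is always reversed. -/
lemma ir17_self_cond (hA : IsAcyclicRel O) (huv : O u v) : irCond O u v u v :=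
  ⟨ReflTransGen.refl, ⟨ReflTransGen.single huv, ir17_ne hA huv⟩, ReflTransGen.refl⟩

end Invol

section Parts
variable {V : Type*} {G : SimpleGraph V}
open Relation

lemma ir17_symm (O₁ O₂ : AOVert G) (h : AOAdj G O₁ O₂) : AOAdj G O₂ O₁ := by
  obtain ⟨hne, u, v, huv, heq⟩ := h
  have hO := O₁.2.1
  have hA := O₁.2.2
  refine ⟨hne.symm, v, u, ?_, ?_⟩
  · rw [← heq]
    exact (ir17_val_rev hO huv (ir17_self_cond hA huv)).2
  · rw [← heq]
    exact ir17_invol hO hA huv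

lemma ir17_regular (O : AOVert G) :
    {O' : AOVert G | AOAdj G O O'}.ncard = G.edgeSet.ncard := by
  classical
  have hO := O.2.1
  have hA := O.2.2
  set D : Set (V × V) := {p | O.1 p.1 p.2} with hD
  set g : V × V → AOVert G := fun p =>
    ⟨intervalReversal O.1 p.1 p.2, ir17_orient hO, ir17_acyclic hA⟩ with hg
  have himg : {O' : AOVert G | AOAdj G O O'} = g '' D := by
    ext O'
    constructor
    · rintro ⟨hne, u, v, huv, heq⟩
      exact ⟨(u, v), huv, Subtype.ext heq⟩
    · rintro ⟨⟨a, b⟩, hp, rfl⟩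
      have hab : O.1 a b := hp
      have hrev := ir17_val_rev hO hab (ir17_self_cond hA hab)
      refine ⟨?_, a, b, hab, rfl⟩
      intro hcontra
      have hgab : (g (a, b)).1 a b := by rw [← hcontra]; exact hab
      exact hrev.1 hgab
  have hinj : D.InjOn g := by
    rintro ⟨a, b⟩ hab ⟨c, d⟩ hcd heq
    have hab' : O.1 a b := hab
    have hcd' : O.1 c d := hcd
    have heq' : intervalReversal O.1 a b = intervalReversal O.1 c d :=
      congrArg Subtype.val heq
    -- edge (c,d) is reversed in its own reversal; transfer along heq'
    have h1 : intervalReversal O.1 a b d c := by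
      rw [heq']; exact (ir17_val_rev hO hcd' (ir17_self_cond hA hcd')).2
    have h2 : intervalReversal O.1 c d b a := by
      rw [← heq']; exact (ir17_val_rev hO hab' (ir17_self_cond hA hab')).2
    have hc1 : irCond O.1 a b c d := by
      rcases h1 with ⟨hdc, -⟩ | ⟨-, hC⟩
      · exact absurd hdc (ir17_not_both hO hcd')
      · exact hC
    have hc2 : irCond O.1 c d a b := by
      rcases h2 with ⟨hba, -⟩ | ⟨-, hC⟩
      · exact absurd hba (ir17_not_both hO hab')
      · exact hC
    have hac : a = c := ir17_antisymm hA hc1.1 hc2.1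
    have hbd : b = d := ir17_antisymm hA hc2.2.2 hc1.2.2
    simp [hac, hbd]
  have hedge : G.edgeSet = (fun p : V × V => s(p.1, p.2)) '' D := by
    ext e
    induction e with
    | _ a b =>
      simp only [SimpleGraph.mem_edgeSet, Set.mem_image]
      constructor
      · intro hadj
        by_cases h : O.1 a b
        · exact ⟨(a, b), h, rfl⟩
        · have hba : O.1 b a := by
            by_contra hba
            exact h ((hO.2 a b hadj).mpr hba)
          exact ⟨(b, a), hba, Sym2.eq_swap⟩
      · rintro ⟨⟨c, d⟩, hp, heq⟩
        have : G.Adj c d := hO.1 c d hp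
        rcases Sym2.eq_iff.mp heq with ⟨rfl, rfl⟩ | ⟨rfl, rfl⟩
        · exact this
        · exact this.symm
  have hinj2 : D.InjOn (fun p : V × V => s(p.1, p.2)) := by
    rintro ⟨a, b⟩ hab ⟨c, d⟩ hcd heq
    rcases Sym2.eq_iff.mp heq with ⟨rfl, rfl⟩ | ⟨rfl, rfl⟩
    · rfl
    · exact absurd hcd (ir17_not_both hO hab)
  rw [himg, hedge, Set.ncard_image_of_injOn hinj, Set.ncard_image_of_injOn hinj2]

end Parts

section Conn
variable {V : Type*} {G : SimpleGraph V} [LinearOrder V]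
open Relation

lemma ir17_W {O : V → V → Prop} (hA : IsAcyclicRel O) {s t : V}
    (h : ReflTransGen O s t) : t < s →
    ∃ p q, O p q ∧ q < p ∧ ReflTransGen O s p ∧ ReflTransGen O q t := by
  induction h with
  | refl => exact fun hts => absurd hts (lt_irrefl _)
  | @tail m b h hstep ih =>
    intro hbs
    rcases lt_trichotomy b m with hbm | heq | hmb
    · exact ⟨m, b, hstep, hbm, h, ReflTransGen.refl⟩
    · exact absurd heq.symm (ir17_ne hA hstep)
    · obtain ⟨p, q, h1, h2, h3, h4⟩ := ih (lt_trans hmb hbs)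
      exact ⟨p, q, h1, h2, h3, h4.tail hstep⟩

lemma ir17_flip_exists [Fintype V] {O : V → V → Prop} (hA : IsAcyclicRel O) :
    ∀ n : ℕ, ∀ a b : V, O a b → b < a →
      ({e : V × V | O e.1 e.2 ∧ irCond O a b e.1 e.2}).ncard ≤ n →
      ∃ p q, O p q ∧ q < p ∧ ∀ x y, O x y → irCond O p q x y → x = p ∧ y = q := by
  intro n
  induction n with
  | zero =>
    intro a b hab hba hcard
    have hmem : (a, b) ∈ {e : V × V | O e.1 e.2 ∧ irCond O a b e.1 e.2} :=
      ⟨hab, ir17_self_cond hA hab⟩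
    have := (Set.ncard_pos (Set.toFinite _)).mpr ⟨_, hmem⟩
    omega
  | succ n ih =>
    intro a b hab hba hcard
    by_cases hf : ∀ x y, O x y → irCond O a b x y → x = a ∧ y = b
    · exact ⟨a, b, hab, hba, hf⟩
    push_neg at hf
    obtain ⟨x, y, hxy, hC, hne⟩ := hf
    obtain ⟨hax, ⟨hxyR, hxney⟩, hyb⟩ := hC
    have key : ∃ p q, O p q ∧ q < p ∧ ReflTransGen O a p ∧ ReflTransGen O q b ∧
        ¬(p = a ∧ q = b) := by
      rcases lt_trichotomy x y with hxy_lt | heq | hyx_lt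
      · by_cases hxa : x < a
        · obtain ⟨p, q, hpq, hqp, hap, hqx⟩ := ir17_W hA hax hxa
          refine ⟨p, q, hpq, hqp, hap, hqx.trans (hxyR.trans hyb), ?_⟩
          rintro ⟨rfl, rfl⟩
          exact hA q (TransGen.trans_right hqx (TransGen.head' hxy hyb))
        · by_cases hby : b < y
          · obtain ⟨p, q, hpq, hqp, hyp, hqb⟩ := ir17_W hA hyb hby
            refine ⟨p, q, hpq, hqp, hax.trans (hxyR.trans hyp), hqb, ?_⟩
            rintro ⟨rfl, rfl⟩
            exact hA p (TransGen.trans_left (TransGen.tail' hax hxy) hyp)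
          · exact absurd (lt_of_lt_of_le (lt_of_le_of_lt (not_lt.mp hxa) hxy_lt)
              (not_lt.mp hby)) (not_lt.mpr hba.le)
      · exact absurd heq hxney
      · exact ⟨x, y, hxy, hyx_lt, hax, hyb, fun h => hne h.1 h.2⟩
    obtain ⟨p, q, hpq, hqp, hap, hqb, hnepq⟩ := key
    have hsub : {e : V × V | O e.1 e.2 ∧ irCond O p q e.1 e.2} ⊆
        {e : V × V | O e.1 e.2 ∧ irCond O a b e.1 e.2} \ {(a, b)} := by
      rintro ⟨x', y'⟩ ⟨hxy', h1, h2, h3⟩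
      constructor
      · exact ⟨hxy', hap.trans h1, h2, h3.trans hqb⟩
      · intro hmem
        rw [Set.mem_singleton_iff, Prod.ext_iff] at hmem
        obtain ⟨h4, h5⟩ := hmem
        subst h4; subst h5
        exact hnepq ⟨ir17_antisymm hA h1 hap, ir17_antisymm hA hqb h3⟩
    have hmem : (a, b) ∈ {e : V × V | O e.1 e.2 ∧ irCond O a b e.1 e.2} :=
      ⟨hab, ir17_self_cond hA hab⟩
    have hcard' : ({e : V × V | O e.1 e.2 ∧ irCond O p q e.1 e.2}).ncard ≤ n := by
      have h1 := Set.ncard_le_ncard hsub (Set.toFinite _)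
      have h2 := Set.ncard_diff_singleton_of_mem hmem
      have h3 := (Set.ncard_pos (Set.toFinite _)).mpr ⟨_, hmem⟩
      omega
    exact ih p q hpq hqp hcard'

lemma ir17_flip_vals {O : V → V → Prop} (hO : IsOrientation G O) (hA : IsAcyclicRel O)
    {p q : V} (hpq : O p q)
    (hf : ∀ x y, O x y → irCond O p q x y → x = p ∧ y = q) :
    intervalReversal O p q q p ∧ ¬ intervalReversal O p q p q ∧
      ∀ x y, ¬(x = p ∧ y = q) → ¬(x = q ∧ y = p) → (intervalReversal O p q x y ↔ O x y) := by
  have hrev := ir17_val_rev hO hpq (ir17_self_cond hA hpq)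
  refine ⟨hrev.2, hrev.1, ?_⟩
  intro x y h1 h2
  constructor
  · rintro (⟨h, -⟩ | ⟨h, hC⟩)
    · exact h
    · obtain ⟨hyp, hxq⟩ := hf y x h hC
      exact absurd ⟨hxq, hyp⟩ h2
  · intro h
    by_cases hC : irCond O p q x y
    · obtain ⟨hxp, hyq⟩ := hf x y h hC
      exact absurd ⟨hxp, hyq⟩ h1
    · exact Or.inl ⟨h, hC⟩

lemma ir17_dis_eq {O : V → V → Prop} (hO : IsOrientation G O) (hA : IsAcyclicRel O)
    {p q : V} (hpq : O p q) (hqp : q < p)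
    (hf : ∀ x y, O x y → irCond O p q x y → x = p ∧ y = q) :
    {e : V × V | intervalReversal O p q e.1 e.2 ∧ e.2 < e.1}
      = {e : V × V | O e.1 e.2 ∧ e.2 < e.1} \ {(p, q)} := by
  obtain ⟨f1, f2, f3⟩ := ir17_flip_vals hO hA hpq hf
  ext ⟨s, t⟩
  simp only [Set.mem_setOf_eq, Set.mem_diff, Set.mem_singleton_iff]
  by_cases h1 : s = p ∧ t = q
  · obtain ⟨rfl, rfl⟩ := h1
    exact iff_of_false (fun h => f2 h.1) (fun h => h.2 rfl)
  · by_cases h2 : s = q ∧ t = p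
    · obtain ⟨rfl, rfl⟩ := h2
      exact iff_of_false (fun h => absurd h.2 (not_lt.mpr hqp.le))
        (fun h => ir17_not_both hO hpq h.1.1)
    · rw [f3 s t h1 h2]
      constructor
      · intro h
        refine ⟨h, fun he => ?_⟩
        rw [Prod.ext_iff] at he
        exact h1 ⟨he.1, he.2⟩
      · exact fun h => h.1

lemma ir17_dis_empty (T O : AOVert G) (hT : ∀ a b, T.1 a b ↔ G.Adj a b ∧ a < b)
    (h : ∀ a b, O.1 a b → ¬ b < a) : O = T := by
  apply Subtype.ext; funext a b; apply propext
  rw [hT a b]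
  constructor
  · intro hab
    refine ⟨O.2.1.1 a b hab, ?_⟩
    rcases lt_trichotomy a b with h' | h' | h'
    · exact h'
    · exact absurd h' (ir17_ne O.2.2 hab)
    · exact absurd h' (h a b hab)
  · rintro ⟨hadj, hlt⟩
    by_contra hnab
    have hba : O.1 b a := by
      by_contra hnba
      exact hnab ((O.2.1.2 a b hadj).mpr hnba)
    exact h b a hba hlt

lemma ir17_conn_aux [Fintype V] (T : AOVert G)
    (hT : ∀ a b, T.1 a b ↔ G.Adj a b ∧ a < b) :
    ∀ n : ℕ, ∀ O : AOVert G,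
      ({e : V × V | O.1 e.1 e.2 ∧ e.2 < e.1}).ncard ≤ n →
      ReflTransGen (AOAdj G) O T := by
  intro n
  induction n with
  | zero =>
    intro O hcard
    have hempty := (Set.ncard_eq_zero (Set.toFinite _)).mp (Nat.le_zero.mp hcard)
    have h : ∀ a b, O.1 a b → ¬ b < a := by
      intro a b hab hba
      exact Set.eq_empty_iff_forall_notMem.mp hempty (a, b) ⟨hab, hba⟩
    exact (ir17_dis_empty T O hT h) ▸ ReflTransGen.refl
  | succ n ih =>
    intro O hcard
    by_cases hempty : ∀ a b, O.1 a b → ¬ b < a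
    · exact (ir17_dis_empty T O hT hempty) ▸ ReflTransGen.refl
    · push_neg at hempty
      obtain ⟨a, b, hab, hba⟩ := hempty
      obtain ⟨p, q, hpq, hqp, hf⟩ := ir17_flip_exists O.2.2
        ({e : V × V | O.1 e.1 e.2 ∧ irCond O.1 a b e.1 e.2}).ncard a b hab hba le_rfl
      set O' : AOVert G := ⟨intervalReversal O.1 p q, ir17_orient O.2.1, ir17_acyclic O.2.2⟩
        with hO'
      obtain ⟨f1, f2, f3⟩ := ir17_flip_vals O.2.1 O.2.2 hpq hf
      have hadj : AOAdj G O O' := by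
        refine ⟨?_, p, q, hpq, rfl⟩
        intro hc
        have : O'.1 p q := by rw [← hc]; exact hpq
        exact f2 this
      have hdis := ir17_dis_eq O.2.1 O.2.2 hpq hqp hf
      have hmem : (p, q) ∈ {e : V × V | O.1 e.1 e.2 ∧ e.2 < e.1} := ⟨hpq, hqp⟩
      have hcard' : ({e : V × V | O'.1 e.1 e.2 ∧ e.2 < e.1}).ncard ≤ n := by
        have h2 := Set.ncard_diff_singleton_of_mem hmem
        have h3 := (Set.ncard_pos (Set.toFinite _)).mpr ⟨_, hmem⟩
        have : ({e : V × V | O'.1 e.1 e.2 ∧ e.2 < e.1}).ncard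
            = ({e : V × V | O.1 e.1 e.2 ∧ e.2 < e.1} \ {(p, q)}).ncard := by
          rw [hO']; rw [hdis]
        omega
      exact ReflTransGen.head hadj (ih O' hcard')

end Conn

/-- `AO_G^inter` is a well defined simple graph (the adjacency is symmetric),
it is `|E|`-regular, and it is connected. -/
theorem stmt17 (V : Type*) [Fintype V] (G : SimpleGraph V) :
    (∀ O₁ O₂ : AOVert G, AOAdj G O₁ O₂ → AOAdj G O₂ O₁) ∧
    (∀ O : AOVert G, {O' : AOVert G | AOAdj G O O'}.ncard = G.edgeSet.ncard) ∧
    (∀ O₁ O₂ : AOVert G, Relation.ReflTransGen (AOAdj G) O₁ O₂) := by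
  refine ⟨ir17_symm, ir17_regular, ?_⟩
  letI : LinearOrder V := WellOrderingRel.isWellOrder.linearOrder
  have hTor : IsOrientation G (fun a b => G.Adj a b ∧ a < b) := by
    constructor
    · exact fun a b h => h.1
    · intro a b hadj
      constructor
      · rintro ⟨-, h⟩ ⟨-, h'⟩
        exact absurd h' (lt_asymm h)
      · intro h
        refine ⟨hadj, ?_⟩
        rcases lt_trichotomy a b with h' | h' | h'
        · exact h'
        · exact absurd h' hadj.ne
        · exact absurd ⟨hadj.symm, h'⟩ h
  have hTac : IsAcyclicRel (fun a b => G.Adj a b ∧ a < b) := by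
    intro w hw
    have key : ∀ {x y : V}, Relation.TransGen (fun a b => G.Adj a b ∧ a < b) x y → x < y := by
      intro x y h
      induction h with
      | single h => exact h.2
      | tail _ h ih => exact lt_trans ih h.2
    exact lt_irrefl w (key hw)
  set T : AOVert G := ⟨fun a b => G.Adj a b ∧ a < b, hTor, hTac⟩ with hTdef
  have hT : ∀ a b, T.1 a b ↔ G.Adj a b ∧ a < b := fun a b => Iff.rfl
  intro O₁ O₂
  have h1 : Relation.ReflTransGen (AOAdj G) O₁ T := ir17_conn_aux T hT _ O₁ le_rfl
  have h2 : Relation.ReflTransGen (AOAdj G) O₂ T := ir17_conn_aux T hT _ O₂ le_rfl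
  have hsymm : Symmetric (AOAdj G) := fun _ _ h => ir17_symm _ _ h
  exact h1.trans ((@Relation.ReflTransGen.stdSymm _ (AOAdj G) ⟨fun _ _ h => hsymm h⟩).symm _ _ h2)
end

section
/- Let n ≥ 1 and p ∈ (0,1), and write q = 1 − p and N = n(n−1)/2. For a set H of edges of the complete graph on [n], let α(H) denote the number of acyclic orientations of the simple graph ([n], H). Then Σ_{H} p^{|H|} q^{N − |H|} α(H) = Σ_{a} p^{|supp(a)|} q^{N − Area(a)}, where the first sum runs over all subsets H of the edge set of the complete graph on [n] and the second sum runs over all parking functions a of [n]. (The left-hand side is the expected number of acyclic orientations of an Erdős–Rényi random graph G(n,p); note Area(a) ≤ N for every parking function a, so all exponents are natural numbers.) -/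
/-- The number of acyclic orientations of the simple graph on `[n]` with edge set `H`. -/
noncomputable def acycCount (n : ℕ) (H : Finset (Sym2 (Fin n))) : ℕ :=
  Nat.card {O : Fin n → Fin n → Prop //
    IsOrientation (SimpleGraph.fromEdgeSet (↑H : Set (Sym2 (Fin n)))) O ∧ IsAcyclicRel O}

/-- `a` is a parking function of `[n]` (0-indexed): after sorting increasingly by any
permutation `σ`, the `i`-th smallest value is at most `i`. -/
def IsParkingFn (n : ℕ) (a : Fin n → ℕ) : Prop :=
  ∀ σ : Equiv.Perm (Fin n), (∀ i j : Fin n, i ≤ j → a (σ i) ≤ a (σ j)) →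
    ∀ i : Fin n, a (σ i) ≤ (i : ℕ)

open Finset
namespace Stmt18
variable {n : ℕ}

def build (f : List (Fin n) → Finset (Fin n)) : ℕ → List (Fin n)
  | 0 => []
  | j + 1 =>
    build f j ++
      (if h : (f (build f j)).Nonempty then [(f (build f j)).max' h] else [])

lemma build_prefix_succ (f : List (Fin n) → Finset (Fin n)) (j : ℕ) :
    build f j <+: build f (j + 1) := ⟨_, rfl⟩

lemma build_prefix (f : List (Fin n) → Finset (Fin n)) {j k : ℕ} (h : j ≤ k) :
    build f j <+: build f k := by
  induction k with
  | zero => simpa using (Nat.le_zero.mp h) ▸ List.prefix_refl _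
  | succ k ih =>
    rcases Nat.lt_or_ge j (k+1) with h' | h'
    · exact (ih (Nat.lt_succ_iff.mp h')).trans (build_prefix_succ f k)
    · have : j = k + 1 := le_antisymm h h'
      exact this ▸ List.prefix_refl _

lemma build_congr {f g : List (Fin n) → Finset (Fin n)}
    (h : ∀ j, f (build g j) = g (build g j)) : ∀ j, build f j = build g j := by
  intro j
  induction j with
  | zero => rfl
  | succ j ih => simp only [build, ih, h j]

section Good

variable {f : List (Fin n) → Finset (Fin n)}
  (hf : ∀ l x, x ∈ f l → x ∉ l)
  (hne : ∀ l, l.Nodup → l.length < n → (f l).Nonempty)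

include hf hne

lemma build_len_nodup :
    ∀ j ≤ n, (build f j).length = j ∧ (build f j).Nodup := by
  intro j hj
  induction j with
  | zero => exact ⟨rfl, List.nodup_nil⟩
  | succ j ih =>
    obtain ⟨hl, hnd⟩ := ih (le_of_lt hj)
    have hne' : (f (build f j)).Nonempty := hne _ hnd (by omega)
    rw [build, dif_pos hne']
    constructor
    · simp [hl]
    · rw [List.nodup_append]
      refine ⟨hnd, List.nodup_singleton _, ?_⟩
      simpa using fun x hx (heq : x = (f (build f j)).max' hne') => (hf _ _ (Finset.max'_mem _ hne')) (heq ▸ hx)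

lemma build_mem_univ (i : Fin n) : i ∈ build f n := by
  obtain ⟨hl, hnd⟩ := build_len_nodup hf hne n le_rfl
  have hcard : (build f n).toFinset = Finset.univ :=
    Finset.eq_univ_of_card _ (by rw [List.toFinset_card_of_nodup hnd, hl, Fintype.card_fin])
  have : i ∈ (build f n).toFinset := hcard ▸ Finset.mem_univ i
  simpa using this

lemma build_indexOf_lt (i : Fin n) : (build f n).idxOf i < n := by
  have := List.idxOf_lt_length_iff.mpr (build_mem_univ hf hne i)
  rwa [(build_len_nodup hf hne n le_rfl).1] at this

lemma build_getElem_indexOf (i : Fin n) :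
    (build f n)[(build f n).idxOf i]'(by
      rw [(build_len_nodup hf hne n le_rfl).1]; exact build_indexOf_lt hf hne i) = i :=
  List.getElem_idxOf _

lemma build_indexOf_getElem {j : ℕ} (hj : j < n) :
    (build f n).idxOf ((build f n)[j]'(by rw [(build_len_nodup hf hne n le_rfl).1]; exact hj)) = j := by
  obtain ⟨hl, hnd⟩ := build_len_nodup hf hne n le_rfl
  have h1 : (build f n).idxOf ((build f n)[j]'(by omega)) < (build f n).length :=
    List.idxOf_lt_length_iff.mpr (List.getElem_mem _)
  have := List.getElem_idxOf (xs := build f n) (x := (build f n)[j]'(by omega)) h1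
  exact (List.Nodup.getElem_inj_iff hnd).mp this

/-- membership in a partial build is equivalent to index < j -/
lemma mem_build_iff {j : ℕ} (hj : j ≤ n) (i : Fin n) :
    i ∈ build f j ↔ (build f n).idxOf i < j := by
  obtain ⟨hl, hnd⟩ := build_len_nodup hf hne j hj
  have hpre : build f j <+: build f n := build_prefix f hj
  have htake : build f j = (build f n).take j := by
    have := List.prefix_iff_eq_take.mp hpre; rwa [hl] at this
  obtain ⟨hln, hndn⟩ := build_len_nodup hf hne n le_rfl
  constructor
  · intro hi
    obtain ⟨k, hk, hgk⟩ := List.getElem_of_mem hi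
    have hkj : k < j := by omega
    have hkn : k < n := by omega
    have hgn : (build f n)[k]'(by omega) = i := by rw [← hpre.getElem hk]; exact hgk
    have h2 := build_indexOf_getElem hf hne (j := k) hkn
    rw [hgn] at h2
    omega
  · intro hi
    have hi' : i = (build f n)[(build f n).idxOf i]'(by omega) :=
      (build_getElem_indexOf hf hne i).symm
    rw [htake]
    rw [hi']
    have hlen' : (build f n).idxOf i < ((build f n).take j).length := by
      simp [hln]; omega
    have := List.getElem_take (j := j) (i := (build f n).idxOf i) (h := hlen')
    exact this ▸ List.getElem_mem hlen'
  
/-- the element placed at step `j` is the maximum of the candidate set there. -/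
lemma build_getElem_spec {j : ℕ} (hj : j < n) :
    (build f n)[j]'(by rw [(build_len_nodup hf hne n le_rfl).1]; exact hj) ∈ f (build f j) ∧
      ∀ x ∈ f (build f j), x ≤ (build f n)[j]'(by rw [(build_len_nodup hf hne n le_rfl).1]; exact hj) := by
  obtain ⟨hl, hnd⟩ := build_len_nodup hf hne j (le_of_lt hj)
  have hne' : (f (build f j)).Nonempty := hne _ hnd (by omega)
  have hs : build f (j+1) = build f j ++ [(f (build f j)).max' hne'] := by
    rw [build, dif_pos hne']
  have hpre : build f (j+1) <+: build f n := build_prefix f hj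
  have hjlt : j < (build f (j+1)).length := by simp [hs, hl]
  have hg : (build f n)[j]'(by rw [(build_len_nodup hf hne n le_rfl).1]; exact hj)
      = (f (build f j)).max' hne' := by
    rw [← hpre.getElem hjlt]
    simp [hs, List.getElem_append, hl]
  rw [hg]
  exact ⟨Finset.max'_mem _ hne', fun x hx => Finset.le_max' _ x hx⟩

end Good

/-! ### The two candidate functions -/

def candA (a : Fin n → ℕ) (l : List (Fin n)) : Finset (Fin n) :=
  univ.filter fun i => i ∉ l ∧ a i ≤ l.length

def candD (D : Finset (Fin n × Fin n)) (l : List (Fin n)) : Finset (Fin n) :=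
  univ.filter fun i => i ∉ l ∧ ∀ v, (i, v) ∈ D → v ∈ l

lemma hfA (a : Fin n → ℕ) : ∀ l x, x ∈ candA a l → x ∉ l := by
  intro l x hx; exact (Finset.mem_filter.mp hx).2.1

lemma hfD (D : Finset (Fin n × Fin n)) : ∀ l x, x ∈ candD D l → x ∉ l := by
  intro l x hx; exact (Finset.mem_filter.mp hx).2.1

/-- counting lemma for parking functions -/
lemma parking_card {a : Fin n → ℕ} (ha : IsParkingFn n a) {j : ℕ} (hj : j < n) :
    j + 1 ≤ (univ.filter fun i => a i ≤ j).card := by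
  classical
  set σ := Tuple.sort a with hσ
  have hmono : ∀ i k : Fin n, i ≤ k → a (σ i) ≤ a (σ k) := fun i k h =>
    Tuple.monotone_sort a h
  have hpk := ha σ hmono
  have hsub : (Finset.Iic (⟨j, hj⟩ : Fin n)).image σ ⊆ univ.filter fun i => a i ≤ j := by
    intro x hx
    obtain ⟨i, hi, rfl⟩ := Finset.mem_image.mp hx
    have : (i : ℕ) ≤ j := by
      have := Finset.mem_Iic.mp hi
      exact Fin.le_def.mp this
    exact Finset.mem_filter.mpr ⟨Finset.mem_univ _, le_trans (hpk i) this⟩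
  calc j + 1 = (Finset.Iic (⟨j, hj⟩ : Fin n)).card := by rw [Fin.card_Iic]
    _ = ((Finset.Iic (⟨j, hj⟩ : Fin n)).image σ).card :=
        (Finset.card_image_of_injective _ σ.injective).symm
    _ ≤ _ := Finset.card_le_card hsub

lemma hneA {a : Fin n → ℕ} (ha : IsParkingFn n a) :
    ∀ l : List (Fin n), l.Nodup → l.length < n → (candA a l).Nonempty := by
  intro l hnd hlen
  have h1 := parking_card ha hlen
  have h2 : l.toFinset.card < (univ.filter fun i => a i ≤ l.length).card := by
    rw [List.toFinset_card_of_nodup hnd]; omega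
  have hns : ¬ (univ.filter fun i => a i ≤ l.length) ⊆ l.toFinset := by
    intro hsub
    have := Finset.card_le_card hsub
    omega
  obtain ⟨x, hx1, hx2⟩ := Finset.not_subset.mp hns
  exact ⟨x, Finset.mem_filter.mpr ⟨Finset.mem_univ _,
    by simpa using hx2, (Finset.mem_filter.mp hx1).2⟩⟩

/-- every finite nonempty set in an acyclic digraph contains a relative sink -/
lemma exists_sink {D : Finset (Fin n × Fin n)}
    (hD : IsAcyclicRel (fun u v : Fin n => (u, v) ∈ D)) :
    ∀ s : Finset (Fin n), s.Nonempty → ∃ i ∈ s, ∀ v, (i, v) ∈ D → v ∉ s := by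
  classical
  intro s
  induction s using Finset.strongInduction with
  | _ s ih =>
    intro hs
    obtain ⟨x, hx⟩ := hs
    by_cases hsd : ∀ v, (x, v) ∈ D → v ∉ s
    · exact ⟨x, hx, hsd⟩
    set r := Relation.TransGen (fun u v : Fin n => (u, v) ∈ D) with hr
    set t := s.filter (fun y => r x y) with ht
    have hxt : x ∉ t := by
      simp only [ht, Finset.mem_filter]
      rintro ⟨-, hrxx⟩
      exact hD x hrxx
    have htsub : t ⊂ s := ⟨Finset.filter_subset _ _, fun hsub => hxt (hsub hx)⟩
    have htne : t.Nonempty := by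
      push_neg at hsd
      obtain ⟨v, hv1, hv2⟩ := hsd
      exact ⟨v, Finset.mem_filter.mpr ⟨hv2, Relation.TransGen.single hv1⟩⟩
    obtain ⟨i, hit, hi⟩ := ih t htsub htne
    refine ⟨i, (Finset.filter_subset _ _) hit, ?_⟩
    intro v hv hvs
    have hrxv : r x v := Relation.TransGen.tail (Finset.mem_filter.mp hit).2 hv
    exact hi v hv (Finset.mem_filter.mpr ⟨hvs, hrxv⟩)

lemma hneD {D : Finset (Fin n × Fin n)}
    (hD : IsAcyclicRel (fun u v : Fin n => (u, v) ∈ D)) :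
    ∀ l : List (Fin n), l.Nodup → l.length < n → (candD D l).Nonempty := by
  intro l hnd hlen
  have hs : (univ \ l.toFinset : Finset (Fin n)).Nonempty := by
    rw [← Finset.card_pos, Finset.card_sdiff_of_subset (Finset.subset_univ _), Finset.card_univ,
      Fintype.card_fin]
    have := List.toFinset_card_le l
    omega
  obtain ⟨i, hi, hsink⟩ := exists_sink hD _ hs
  refine ⟨i, Finset.mem_filter.mpr ⟨Finset.mem_univ _, ?_, ?_⟩⟩
  · have := Finset.mem_sdiff.mp hi
    simpa using this.2
  · intro v hv
    have := hsink v hv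
    simp only [Finset.mem_sdiff, Finset.mem_univ, true_and, not_not] at this
    simpa using this

/-! ### Orders, positions, Phi -/

def ordA (a : Fin n → ℕ) : List (Fin n) := build (candA a) n
def posA (a : Fin n → ℕ) (i : Fin n) : ℕ := (ordA a).idxOf i
def ordD (D : Finset (Fin n × Fin n)) : List (Fin n) := build (candD D) n
def posD (D : Finset (Fin n × Fin n)) (i : Fin n) : ℕ := (ordD D).idxOf i

def PhiD (D : Finset (Fin n × Fin n)) : Fin n → ℕ := fun i =>
  (D.filter fun e => e.1 = i).sup fun e => posD D e.2 + 1

def Dmin (a : Fin n → ℕ) : Finset (Fin n × Fin n) :=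
  (univ.filter fun i => 0 < a i).image fun i => (i, (ordA a).getD (a i - 1) i)

def Eopt (a : Fin n → ℕ) : Finset (Fin n × Fin n) :=
  univ.filter fun e => posA a e.2 + 2 ≤ a e.1

section ALemmas

variable {a : Fin n → ℕ} (ha : IsParkingFn n a)
include ha

lemma ordA_length : (ordA a).length = n :=
  (build_len_nodup (hfA a) (hneA ha) n le_rfl).1

lemma ordA_nodup : (ordA a).Nodup :=
  (build_len_nodup (hfA a) (hneA ha) n le_rfl).2

lemma posA_lt (i : Fin n) : posA a i < n := build_indexOf_lt (hfA a) (hneA ha) i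

lemma getElem_posA (i : Fin n) :
    (ordA a)[posA a i]'(by rw [ordA_length ha]; exact posA_lt ha i) = i :=
  build_getElem_indexOf (hfA a) (hneA ha) i

lemma posA_getElem {j : ℕ} (hj : j < n) :
    posA a ((ordA a)[j]'(by rw [ordA_length ha]; exact hj)) = j :=
  build_indexOf_getElem (hfA a) (hneA ha) hj

lemma mem_buildA {j : ℕ} (hj : j ≤ n) (i : Fin n) :
    i ∈ build (candA a) j ↔ posA a i < j :=
  mem_build_iff (hfA a) (hneA ha) hj i

lemma le_posA (i : Fin n) : a i ≤ posA a i := by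
  have hspec : i ∈ candA a (build (candA a) (posA a i)) := by
    have h0 := (build_getElem_spec (hfA a) (hneA ha) (posA_lt ha i)).1
    have h1 : (build (candA a) n)[posA a i]'(by
        rw [(build_len_nodup (hfA a) (hneA ha) n le_rfl).1]; exact posA_lt ha i) = i :=
      build_getElem_indexOf (hfA a) (hneA ha) i
    simp only [h1] at h0
    exact h0
  have hlen : (build (candA a) (posA a i)).length = posA a i :=
    (build_len_nodup (hfA a) (hneA ha) _ (le_of_lt (posA_lt ha i))).1
  have := (Finset.mem_filter.mp hspec).2.2
  omega

lemma getD_forced {u : Fin n} (hu : 0 < a u) :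
    posA a ((ordA a).getD (a u - 1) u) = a u - 1 := by
  have h1 : a u - 1 < n := by have := le_posA ha u; have := posA_lt ha u; omega
  have hget : (ordA a).getD (a u - 1) u = (ordA a)[a u - 1]'(by rw [ordA_length ha]; exact h1) :=
    List.getD_eq_getElem _ _ (by rw [ordA_length ha]; exact h1)
  rw [hget, posA_getElem ha h1]

end ALemmas

section DLemmas

variable {D : Finset (Fin n × Fin n)} (hD : IsAcyclicRel (fun u v : Fin n => (u, v) ∈ D))
include hD

lemma ordD_length : (ordD D).length = n :=
  (build_len_nodup (hfD D) (hneD hD) n le_rfl).1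

lemma ordD_nodup : (ordD D).Nodup :=
  (build_len_nodup (hfD D) (hneD hD) n le_rfl).2

lemma posD_lt (i : Fin n) : posD D i < n := build_indexOf_lt (hfD D) (hneD hD) i

lemma getElem_posD (i : Fin n) :
    (ordD D)[posD D i]'(by rw [ordD_length hD]; exact posD_lt hD i) = i :=
  build_getElem_indexOf (hfD D) (hneD hD) i

lemma posD_getElem {j : ℕ} (hj : j < n) :
    posD D ((ordD D)[j]'(by rw [ordD_length hD]; exact hj)) = j :=
  build_indexOf_getElem (hfD D) (hneD hD) hj

lemma mem_buildD {j : ℕ} (hj : j ≤ n) (i : Fin n) :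
    i ∈ build (candD D) j ↔ posD D i < j :=
  mem_build_iff (hfD D) (hneD hD) hj i

lemma edge_posD {u v : Fin n} (huv : (u, v) ∈ D) : posD D v < posD D u := by
  have hspec : u ∈ candD D (build (candD D) (posD D u)) := by
    have h0 := (build_getElem_spec (hfD D) (hneD hD) (posD_lt hD u)).1
    have h1 : (build (candD D) n)[posD D u]'(by
        rw [(build_len_nodup (hfD D) (hneD hD) n le_rfl).1]; exact posD_lt hD u) = u :=
      build_getElem_indexOf (hfD D) (hneD hD) u
    simp only [h1] at h0
    exact h0
  have hv : v ∈ build (candD D) (posD D u) := (Finset.mem_filter.mp hspec).2.2 v huv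
  exact (mem_buildD hD (le_of_lt (posD_lt hD u)) v).mp hv

lemma PhiD_le_posD (u : Fin n) : PhiD D u ≤ posD D u := by
  apply Finset.sup_le
  rintro ⟨x, y⟩ he
  obtain ⟨hxy, rfl⟩ := Finset.mem_filter.mp he
  exact edge_posD hD hxy

omit hD in
lemma le_PhiD {u v : Fin n} (huv : (u, v) ∈ D) : posD D v + 1 ≤ PhiD D u := by
  have hm : (u, v) ∈ D.filter (fun e => e.1 = u) :=
    Finset.mem_filter.mpr ⟨huv, rfl⟩
  exact Finset.le_sup (f := fun e => posD D e.2 + 1) hm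

lemma PhiD_forced {u : Fin n} (hu : 0 < PhiD D u) :
    (u, (ordD D).getD (PhiD D u - 1) u) ∈ D := by
  have hne' : (D.filter fun e => e.1 = u).Nonempty := by
    rcases Finset.eq_empty_or_nonempty (D.filter fun e => e.1 = u) with h | h
    · exfalso; rw [PhiD, h] at hu; simp at hu
    · exact h
  obtain ⟨e, he, hsup⟩ := Finset.exists_mem_eq_sup _ hne' (fun e => posD D e.2 + 1)
  obtain ⟨e1, e2⟩ := e
  obtain ⟨heD, he1⟩ := Finset.mem_filter.mp he
  simp only at he1
  subst he1
  have hpos : PhiD D e1 = posD D e2 + 1 := hsup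
  have h1 : PhiD D e1 - 1 < n := by have := posD_lt hD e2; omega
  have hget : (ordD D).getD (PhiD D e1 - 1) e1
      = (ordD D)[PhiD D e1 - 1]'(by rw [ordD_length hD]; exact h1) :=
    List.getD_eq_getElem _ _ (by rw [ordD_length hD]; exact h1)
  have h2 : (ordD D).getD (PhiD D e1 - 1) e1 = e2 := by
    rw [hget]
    have hPe : PhiD D e1 - 1 = posD D e2 := by omega
    simp_rw [hPe]
    exact getElem_posD hD e2
  rw [h2]
  exact heD

end DLemmas

lemma acyclic_of_decreasing {D : Finset (Fin n × Fin n)} (m : Fin n → ℕ)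
    (h : ∀ u v, (u, v) ∈ D → m v < m u) :
    IsAcyclicRel (fun u v : Fin n => (u, v) ∈ D) := by
  have htr : Transitive (fun u v : Fin n => m v < m u) := fun a b c h1 h2 => h2.trans h1
  intro v hv
  have := Relation.TransGen.mono (fun x y hxy => h x y hxy) _ _ hv
  rw [@Relation.transGen_eq_self _ _ ⟨htr⟩] at this
  exact lt_irrefl _ this

lemma parking_of_order {a : Fin n → ℕ} (π : List (Fin n)) (hlen : π.length = n)
    (hnd : π.Nodup) (h : ∀ j (hj : j < n), a (π[j]'(by omega)) ≤ j) :
    IsParkingFn n a := by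
  intro σ hmono i
  by_contra hlt
  push_neg at hlt
  classical
  set A := univ.filter fun t => a t ≤ (i : ℕ) with hA
  have h1 : (i : ℕ) + 1 ≤ A.card := by
    have hsub : (Finset.Iic i).image (fun k : Fin n => π[(k : ℕ)]'(by omega)) ⊆ A := by
      intro x hx
      obtain ⟨k, hk, rfl⟩ := Finset.mem_image.mp hx
      have hki : (k : ℕ) ≤ (i : ℕ) := Fin.le_def.mp (Finset.mem_Iic.mp hk)
      exact Finset.mem_filter.mpr ⟨Finset.mem_univ _, le_trans (h k k.isLt) hki⟩
    have hinj : Set.InjOn (fun k : Fin n => π[(k : ℕ)]'(by omega)) ↑(Finset.Iic i) := by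
      intro x hx y hy hxy
      have := (List.Nodup.getElem_inj_iff hnd).mp hxy
      exact Fin.ext this
    calc (i : ℕ) + 1 = (Finset.Iic i).card := by rw [Fin.card_Iic]
      _ = ((Finset.Iic i).image (fun k : Fin n => π[(k : ℕ)]'(by omega))).card :=
          (Finset.card_image_of_injOn hinj).symm
      _ ≤ A.card := Finset.card_le_card hsub
  have h2 : A ⊆ (Finset.Iio i).image σ := by
    intro t ht
    have hat : a t ≤ (i : ℕ) := (Finset.mem_filter.mp ht).2
    have hk : σ.symm t < i := by
      by_contra hik
      push_neg at hik
      have := hmono i (σ.symm t) hik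
      rw [Equiv.apply_symm_apply] at this
      omega
    exact Finset.mem_image.mpr ⟨σ.symm t, Finset.mem_Iio.mpr hk, Equiv.apply_symm_apply σ t⟩
  have h3 : A.card ≤ (i : ℕ) := by
    calc A.card ≤ ((Finset.Iio i).image σ).card := Finset.card_le_card h2
      _ = (Finset.Iio i).card := Finset.card_image_of_injective _ σ.injective
      _ = (i : ℕ) := Fin.card_Iio i
  omega

/-! ### Interval conditions and order agreement -/

section Interval

variable {a : Fin n → ℕ} {D : Finset (Fin n × Fin n)}

lemma cand_eq (ha : IsParkingFn n a)
    (hI1 : ∀ u, 0 < a u → (u, (ordA a).getD (a u - 1) u) ∈ D)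
    (hI2 : ∀ u v, (u, v) ∈ D → posA a v + 1 ≤ a u) (j : ℕ) :
    candD D (build (candA a) j) = candA a (build (candA a) j) := by
  rcases le_or_gt j n with hj | hj
  · ext i
    simp only [candD, candA, Finset.mem_filter, Finset.mem_univ, true_and]
    have hlen : (build (candA a) j).length = j := (build_len_nodup (hfA a) (hneA ha) j hj).1
    constructor
    · rintro ⟨hnotin, hall⟩
      refine ⟨hnotin, ?_⟩
      rw [hlen]
      by_cases h0 : 0 < a i
      · have hmem := hall _ (hI1 i h0)
        have := (mem_buildA ha hj _).mp hmem
        rw [getD_forced ha h0] at this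
        omega
      · omega
    · rintro ⟨hnotin, hle⟩
      refine ⟨hnotin, fun v hv => ?_⟩
      rw [hlen] at hle
      have := hI2 i v hv
      exact (mem_buildA ha hj v).mpr (by omega)
  · have hall : ∀ i : Fin n, i ∈ build (candA a) j := fun i =>
      (build_prefix (candA a) (le_of_lt hj)).subset (build_mem_univ (hfA a) (hneA ha) i)
    ext i
    simp only [candD, candA, Finset.mem_filter, Finset.mem_univ, true_and]
    constructor <;> rintro ⟨hni, -⟩ <;> exact (hni (hall i)).elim

lemma ordD_eq_ordA (ha : IsParkingFn n a)
    (hI1 : ∀ u, 0 < a u → (u, (ordA a).getD (a u - 1) u) ∈ D)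
    (hI2 : ∀ u v, (u, v) ∈ D → posA a v + 1 ≤ a u) :
    ordD D = ordA a :=
  build_congr (cand_eq ha hI1 hI2) n

lemma interval_acyclic (ha : IsParkingFn n a)
    (hI2 : ∀ u v, (u, v) ∈ D → posA a v + 1 ≤ a u) :
    IsAcyclicRel (fun u v : Fin n => (u, v) ∈ D) := by
  refine acyclic_of_decreasing (posA a) (fun u v huv => ?_)
  have h1 := hI2 u v huv
  have h2 := le_posA ha u
  omega

lemma interval_Phi (ha : IsParkingFn n a)
    (hI1 : ∀ u, 0 < a u → (u, (ordA a).getD (a u - 1) u) ∈ D)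
    (hI2 : ∀ u v, (u, v) ∈ D → posA a v + 1 ≤ a u) :
    PhiD D = a := by
  have hord : ordD D = ordA a := ordD_eq_ordA ha hI1 hI2
  have hpos : ∀ v, posD D v = posA a v := fun v => by rw [posD, hord]; rfl
  funext u
  apply le_antisymm
  · apply Finset.sup_le
    rintro ⟨x, y⟩ he
    obtain ⟨hxy, hx⟩ := Finset.mem_filter.mp he
    simp only at hx
    subst hx
    show posD D y + 1 ≤ a x
    rw [hpos y]
    exact hI2 x y hxy
  · by_cases h0 : 0 < a u
    · have hw := hI1 u h0
      have := le_PhiD hw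
      rw [hpos, getD_forced ha h0] at this
      omega
    · omega

lemma acyclic_parking (hD : IsAcyclicRel (fun u v : Fin n => (u, v) ∈ D)) :
    IsParkingFn n (PhiD D) := by
  refine parking_of_order (ordD D) (ordD_length hD) (ordD_nodup hD) (fun j hj => ?_)
  have h1 := PhiD_le_posD hD ((ordD D)[j]'(by rw [ordD_length hD]; exact hj))
  rwa [posD_getElem hD hj] at h1

lemma acyclic_cand_eq (hD : IsAcyclicRel (fun u v : Fin n => (u, v) ∈ D)) (j : ℕ) :
    candA (PhiD D) (build (candD D) j) = candD D (build (candD D) j) := by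
  rcases le_or_gt j n with hj | hj
  · ext i
    simp only [candD, candA, Finset.mem_filter, Finset.mem_univ, true_and]
    have hlen : (build (candD D) j).length = j := (build_len_nodup (hfD D) (hneD hD) j hj).1
    constructor
    · rintro ⟨hnotin, hle⟩
      refine ⟨hnotin, fun v hv => ?_⟩
      have := le_PhiD hv
      rw [hlen] at hle
      exact (mem_buildD hD hj v).mpr (by omega)
    · rintro ⟨hnotin, hall⟩
      refine ⟨hnotin, ?_⟩
      rw [hlen]
      apply Finset.sup_le
      rintro ⟨x, y⟩ he
      obtain ⟨hxy, hx⟩ := Finset.mem_filter.mp he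
      simp only at hx
      subst hx
      show posD D y + 1 ≤ _
      have := (mem_buildD hD hj y).mp (hall y hxy)
      omega
  · have hall : ∀ i : Fin n, i ∈ build (candD D) j := fun i =>
      (build_prefix (candD D) (le_of_lt hj)).subset (build_mem_univ (hfD D) (hneD hD) i)
    ext i
    simp only [candD, candA, Finset.mem_filter, Finset.mem_univ, true_and]
    constructor <;> rintro ⟨hni, -⟩ <;> exact (hni (hall i)).elim

lemma ordA_Phi (hD : IsAcyclicRel (fun u v : Fin n => (u, v) ∈ D)) :
    ordA (PhiD D) = ordD D :=
  build_congr (acyclic_cand_eq hD) n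

lemma acyclic_interval (hD : IsAcyclicRel (fun u v : Fin n => (u, v) ∈ D)) :
    (∀ u, 0 < PhiD D u → (u, (ordA (PhiD D)).getD (PhiD D u - 1) u) ∈ D) ∧
      (∀ u v, (u, v) ∈ D → posA (PhiD D) v + 1 ≤ PhiD D u) := by
  have hord := ordA_Phi hD
  have hpos : ∀ v, posA (PhiD D) v = posD D v := fun v => by rw [posA, hord]; rfl
  constructor
  · intro u hu
    rw [hord]
    exact PhiD_forced hD hu
  · intro u v huv
    rw [hpos]
    exact le_PhiD huv

end Interval

/-! ### Cardinalities -/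

section Cards

variable {a : Fin n → ℕ} (ha : IsParkingFn n a)

lemma mem_Dmin {e : Fin n × Fin n} :
    e ∈ Dmin a ↔ 0 < a e.1 ∧ e.2 = (ordA a).getD (a e.1 - 1) e.1 := by
  constructor
  · intro he
    obtain ⟨i, hi, rfl⟩ := Finset.mem_image.mp he
    exact ⟨(Finset.mem_filter.mp hi).2, rfl⟩
  · rintro ⟨h0, h2⟩
    refine Finset.mem_image.mpr ⟨e.1, Finset.mem_filter.mpr ⟨Finset.mem_univ _, h0⟩, ?_⟩
    rw [← h2]

lemma Dmin_card : (Dmin a).card = (univ.filter fun i => 0 < a i).card :=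
  Finset.card_image_of_injective _ (fun i j hij => congrArg Prod.fst hij)

include ha

lemma posA_inj {v w : Fin n} (h : posA a v = posA a w) : v = w :=
  (List.idxOf_inj (build_mem_univ (hfA a) (hneA ha) v)).mp h

lemma Dmin_posA {e : Fin n × Fin n} (he : e ∈ Dmin a) :
    posA a e.2 + 1 = a e.1 := by
  obtain ⟨h0, h2⟩ := (mem_Dmin (a := a)).mp he
  rw [h2, getD_forced ha h0]
  omega

lemma Dmin_disj : Disjoint (Dmin a) (Eopt a) := by
  rw [Finset.disjoint_left]
  intro e he1 he2
  have h1 := Dmin_posA ha he1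
  have h2 := (Finset.mem_filter.mp he2).2
  omega

lemma a_lt (i : Fin n) : a i < n := lt_of_le_of_lt (le_posA ha i) (posA_lt ha i)

lemma inner_card (u : Fin n) :
    (univ.filter fun v => posA a v + 2 ≤ a u).card = a u - 1 := by
  have h1 : (univ.filter fun v => posA a v + 2 ≤ a u).card = (Finset.range (a u - 1)).card := by
    apply Finset.card_bij (fun v _ => posA a v)
    · intro v hv
      have := (Finset.mem_filter.mp hv).2
      exact Finset.mem_range.mpr (by omega)
    · intro v hv w hw hvw
      exact posA_inj ha hvw
    · intro t ht
      have ht' : t < a u - 1 := Finset.mem_range.mp ht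
      have htn : t < n := by have := a_lt ha u; omega
      refine ⟨(ordA a)[t]'(by rw [ordA_length ha]; exact htn), ?_, posA_getElem ha htn⟩
      refine Finset.mem_filter.mpr ⟨Finset.mem_univ _, ?_⟩
      rw [posA_getElem ha htn]
      omega
  rw [h1, Finset.card_range]

lemma Eopt_card : (Eopt a).card + (univ.filter fun i => 0 < a i).card = ∑ u, a u := by
  classical
  have h1 : (Eopt a).card
      = ∑ u : Fin n, (univ.filter fun v => posA a v + 2 ≤ a u).card := by
    rw [Eopt, Finset.card_eq_sum_card_fiberwise
      (f := fun e : Fin n × Fin n => e.1) (t := univ) (fun e _ => Finset.mem_univ _)]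
    apply Finset.sum_congr rfl
    intro u _
    apply Finset.card_bij (fun e _ => e.2)
    · intro e he
      obtain ⟨he1, he2⟩ := Finset.mem_filter.mp he
      have := (Finset.mem_filter.mp he1).2
      exact Finset.mem_filter.mpr ⟨Finset.mem_univ _, he2 ▸ this⟩
    · rintro ⟨x1, y1⟩ h1 ⟨x2, y2⟩ h2 h
      have e1 := (Finset.mem_filter.mp h1).2
      have e2 := (Finset.mem_filter.mp h2).2
      simp only at e1 e2 h
      simp [e1, e2, h]
    · intro v hv
      have := (Finset.mem_filter.mp hv).2
      exact ⟨(u, v), Finset.mem_filter.mpr ⟨Finset.mem_filter.mpr ⟨Finset.mem_univ _, this⟩,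
        rfl⟩, rfl⟩
  rw [h1]
  have h2 : ∀ u : Fin n, (univ.filter fun v => posA a v + 2 ≤ a u).card = a u - 1 :=
    inner_card ha
  rw [Finset.sum_congr rfl (fun u _ => h2 u), Finset.card_filter]
  rw [← Finset.sum_add_distrib]
  apply Finset.sum_congr rfl
  intro u _
  split_ifs <;> omega

lemma sum_posA_eq : ∑ u : Fin n, posA a u = ∑ t ∈ Finset.range n, t := by
  apply Finset.sum_nbij (i := fun u => posA a u)
  · intro u _
    exact Finset.mem_range.mpr (posA_lt ha u)
  · intro v _ w _ h
    exact posA_inj ha h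
  · intro t ht
    have htn : t < n := Finset.mem_range.mp ht
    exact ⟨(ordA a)[t]'(by rw [ordA_length ha]; exact htn), Finset.mem_coe.mpr (Finset.mem_univ _),
      posA_getElem ha htn⟩
  · intro u _
    rfl

lemma sum_a_le : ∑ u, a u ≤ n * (n - 1) / 2 := by
  have h1 : ∑ u, a u ≤ ∑ u : Fin n, posA a u :=
    Finset.sum_le_sum (fun u _ => le_posA ha u)
  have h2 := sum_posA_eq ha
  have h3 := Finset.sum_range_id_mul_two n
  omega

/-- membership in the interval is equivalent to the two interval conditions -/
lemma interval_iff {D : Finset (Fin n × Fin n)} :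
    (Dmin a ⊆ D ∧ D ⊆ Dmin a ∪ Eopt a) ↔
      ((∀ u, 0 < a u → (u, (ordA a).getD (a u - 1) u) ∈ D) ∧
        (∀ u v, (u, v) ∈ D → posA a v + 1 ≤ a u)) := by
  classical
  constructor
  · rintro ⟨hsub, hsup⟩
    constructor
    · intro u hu
      exact hsub ((mem_Dmin (a := a)).mpr ⟨hu, rfl⟩)
    · intro u v huv
      rcases Finset.mem_union.mp (hsup huv) with h | h
      · have := Dmin_posA ha h
        simp only at this
        omega
      · have := (Finset.mem_filter.mp h).2
        simp only at this
        omega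
  · rintro ⟨h1, h2⟩
    constructor
    · intro e he
      obtain ⟨h0, hsnd⟩ := (mem_Dmin (a := a)).mp he
      have := h1 e.1 h0
      rwa [← hsnd, Prod.mk.eta] at this
    · intro e he
      have hle := h2 e.1 e.2 (by rwa [Prod.mk.eta])
      rcases eq_or_lt_of_le hle with heq | hlt
      · apply Finset.mem_union_left
        apply (mem_Dmin (a := a)).mpr
        refine ⟨by omega, ?_⟩
        apply posA_inj ha
        rw [getD_forced ha (by omega)]
        omega
      · apply Finset.mem_union_right
        exact Finset.mem_filter.mpr ⟨Finset.mem_univ _, by omega⟩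

end Cards

/-! ### The main fiber sum -/

open scoped Classical in
noncomputable def AcyD (n : ℕ) : Finset (Finset (Fin n × Fin n)) :=
  univ.filter fun D => IsAcyclicRel (fun u v : Fin n => (u, v) ∈ D)

lemma mem_AcyD {D : Finset (Fin n × Fin n)} :
    D ∈ AcyD n ↔ IsAcyclicRel (fun u v : Fin n => (u, v) ∈ D) := by
  classical
  simp [AcyD]

lemma filter_PhiD_eq (a : Fin n → ℕ) (ha : IsParkingFn n a) :
    (AcyD n).filter (fun D => PhiD D = a)
      = (Eopt a).powerset.image (fun T => Dmin a ∪ T) := by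
  classical
  ext D
  simp only [Finset.mem_filter, Finset.mem_image, Finset.mem_powerset]
  constructor
  · rintro ⟨hDm, hphi⟩
    have hD := mem_AcyD.mp hDm
    obtain ⟨h1, h2⟩ := acyclic_interval hD
    rw [hphi] at h1 h2
    have hint := (interval_iff ha).mpr ⟨h1, h2⟩
    refine ⟨D \ Dmin a, ?_, ?_⟩
    · intro e he
      obtain ⟨heD, heM⟩ := Finset.mem_sdiff.mp he
      rcases Finset.mem_union.mp (hint.2 heD) with h | h
      · exact (heM h).elim
      · exact h
    · exact Finset.union_sdiff_of_subset hint.1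
  · rintro ⟨T, hT, rfl⟩
    have hint : Dmin a ⊆ Dmin a ∪ T ∧ Dmin a ∪ T ⊆ Dmin a ∪ Eopt a :=
      ⟨Finset.subset_union_left, Finset.union_subset_union Finset.Subset.rfl hT⟩
    obtain ⟨h1, h2⟩ := (interval_iff ha).mp hint
    exact ⟨mem_AcyD.mpr (interval_acyclic ha h2), interval_Phi ha h1 h2⟩

lemma interval_sum (p : ℝ) {a : Fin n → ℕ} (ha : IsParkingFn n a) :
    ∑ D ∈ (AcyD n).filter (fun D => PhiD D = a),
        p ^ D.card * (1 - p) ^ (n * (n - 1) / 2 - D.card)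
      = p ^ ((univ.filter fun i => 0 < a i).card)
          * (1 - p) ^ (n * (n - 1) / 2 - ∑ u, a u) := by
  classical
  rw [filter_PhiD_eq a ha]
  have hinj : Set.InjOn (fun T => Dmin a ∪ T) ↑(Eopt a).powerset := by
    intro T hT T' hT' h
    simp only at h
    have dT : Disjoint (Dmin a) T :=
      (Dmin_disj ha).mono_right (Finset.le_iff_subset.mpr (Finset.mem_powerset.mp hT))
    have dT' : Disjoint (Dmin a) T' :=
      (Dmin_disj ha).mono_right (Finset.le_iff_subset.mpr (Finset.mem_powerset.mp hT'))
    rw [← Finset.union_sdiff_cancel_left dT, ← Finset.union_sdiff_cancel_left dT', h]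
  rw [Finset.sum_image (fun T hT T' hT' h => hinj hT hT' h)]
  have hs := Dmin_card (a := a)
  have hE := Eopt_card ha
  have hA := sum_a_le ha
  have hstep : ∀ T ∈ (Eopt a).powerset,
      p ^ (Dmin a ∪ T).card * (1 - p) ^ (n * (n - 1) / 2 - (Dmin a ∪ T).card)
      = (p ^ ((univ.filter fun i => 0 < a i).card)
          * (1 - p) ^ (n * (n - 1) / 2 - ∑ u, a u))
        * (p ^ T.card * (1 - p) ^ ((Eopt a).card - T.card)) := by
    intro T hT
    have hTsub := Finset.mem_powerset.mp hT
    have hTE : T.card ≤ (Eopt a).card := Finset.card_le_card hTsub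
    have hdisj : Disjoint (Dmin a) T :=
      (Dmin_disj ha).mono_right (Finset.le_iff_subset.mpr hTsub)
    have hcard : (Dmin a ∪ T).card = (univ.filter fun i => 0 < a i).card + T.card := by
      rw [Finset.card_union_of_disjoint hdisj, hs]
    rw [hcard,
      show n * (n - 1) / 2 - ((univ.filter fun i => 0 < a i).card + T.card)
        = (n * (n - 1) / 2 - ∑ u, a u) + ((Eopt a).card - T.card) by omega,
      pow_add, pow_add]
    ring
  rw [Finset.sum_congr rfl hstep, ← Finset.mul_sum]
  have hone : ∑ T ∈ (Eopt a).powerset, p ^ T.card * (1 - p) ^ ((Eopt a).card - T.card) = 1 := by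
    have hpr := Finset.prod_add (fun _ : Fin n × Fin n => p) (fun _ => (1 - p)) (Eopt a)
    simp only [Finset.prod_const] at hpr
    have hL : (p + (1 - p)) ^ (Eopt a).card = 1 := by
      rw [show p + (1 - p) = (1 : ℝ) by ring, one_pow]
    rw [hL] at hpr
    calc ∑ T ∈ (Eopt a).powerset, p ^ T.card * (1 - p) ^ ((Eopt a).card - T.card)
        = ∑ T ∈ (Eopt a).powerset, p ^ T.card * (1 - p) ^ ((Eopt a) \ T).card := by
          apply Finset.sum_congr rfl
          intro T hT
          rw [Finset.card_sdiff_of_subset (Finset.mem_powerset.mp hT)]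
      _ = 1 := hpr.symm
  rw [hone, mul_one]

/-! ### Part A : orientations of edge sets are acyclic digraphs -/

open scoped Classical in
noncomputable def Orient (n : ℕ) (H : Finset (Sym2 (Fin n))) : Finset (Finset (Fin n × Fin n)) :=
  univ.filter fun D =>
    IsOrientation (SimpleGraph.fromEdgeSet (↑H : Set (Sym2 (Fin n))))
        (fun u v => (u, v) ∈ D)
      ∧ IsAcyclicRel (fun u v : Fin n => (u, v) ∈ D)

lemma mem_Orient {H : Finset (Sym2 (Fin n))} {D : Finset (Fin n × Fin n)} :
    D ∈ Orient n H ↔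
      IsOrientation (SimpleGraph.fromEdgeSet (↑H : Set (Sym2 (Fin n))))
          (fun u v => (u, v) ∈ D)
        ∧ IsAcyclicRel (fun u v : Fin n => (u, v) ∈ D) := by
  classical
  simp [Orient]

lemma acycCount_eq (H : Finset (Sym2 (Fin n))) : acycCount n H = (Orient n H).card := by
  classical
  rw [← Nat.card_eq_finsetCard]
  symm
  apply Nat.card_eq_of_bijective
    (fun D : {x // x ∈ Orient n H} =>
      (⟨fun u v => (u, v) ∈ D.1, mem_Orient.mp D.2⟩ :
        {O : Fin n → Fin n → Prop //
          IsOrientation (SimpleGraph.fromEdgeSet (↑H : Set (Sym2 (Fin n)))) O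
            ∧ IsAcyclicRel O}))
  constructor
  · rintro ⟨D1, h1⟩ ⟨D2, h2⟩ h
    apply Subtype.ext
    have hrel : (fun u v => (u, v) ∈ D1) = (fun u v => (u, v) ∈ D2) :=
      congrArg Subtype.val h
    ext ⟨u, v⟩
    exact iff_of_eq (congrFun (congrFun hrel u) v)
  · rintro ⟨O, hO⟩
    have hrel : (fun u v => (u, v) ∈ univ.filter (fun e : Fin n × Fin n => O e.1 e.2)) = O := by
      funext u v
      apply propext
      simp
    refine ⟨⟨univ.filter (fun e : Fin n × Fin n => O e.1 e.2), ?_⟩, ?_⟩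
    · rw [mem_Orient, hrel]
      exact hO
    · apply Subtype.ext
      simp only
      rw [hrel]

def HofD (D : Finset (Fin n × Fin n)) : Finset (Sym2 (Fin n)) :=
  D.image fun e => s(e.1, e.2)

section AcyD'

variable {D : Finset (Fin n × Fin n)} (hD : IsAcyclicRel (fun u v : Fin n => (u, v) ∈ D))
include hD

lemma no_loop {u : Fin n} : (u, u) ∉ D := fun h => hD u (Relation.TransGen.single h)

lemma no_twocycle {u v : Fin n} (h1 : (u, v) ∈ D) (h2 : (v, u) ∈ D) : False :=
  hD u ((Relation.TransGen.single h1).tail h2)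

lemma HofD_card : (HofD D).card = D.card := by
  classical
  apply Finset.card_image_of_injOn
  rintro ⟨u1, v1⟩ h1 ⟨u2, v2⟩ h2 h
  simp only [Sym2.eq_iff] at h
  rcases h with ⟨rfl, rfl⟩ | ⟨rfl, rfl⟩
  · rfl
  · rcases eq_or_ne u1 v1 with rfl | hne
    · rfl
    · exact (no_twocycle hD h1 h2).elim

lemma HofD_nodiag : ∀ e ∈ HofD D, ¬ e.IsDiag := by
  intro e he hdiag
  obtain ⟨⟨u, v⟩, huv, rfl⟩ := Finset.mem_image.mp he
  have : u = v := by simpa using hdiag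
  subst this
  exact no_loop hD huv

lemma mem_Orient_HofD : D ∈ Orient n (HofD D) := by
  classical
  rw [mem_Orient]
  refine ⟨⟨?_, ?_⟩, hD⟩
  · intro u v huv
    rw [SimpleGraph.fromEdgeSet_adj]
    refine ⟨Finset.mem_coe.mpr (Finset.mem_image.mpr ⟨(u, v), huv, rfl⟩), ?_⟩
    rintro rfl
    exact no_loop hD huv
  · intro u v hadj
    obtain ⟨hmem, hne⟩ := (SimpleGraph.fromEdgeSet_adj _).mp hadj
    obtain ⟨⟨x, y⟩, hxy, hs⟩ := Finset.mem_image.mp (Finset.mem_coe.mp hmem)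
    rw [Sym2.eq_iff] at hs
    rcases hs with ⟨rfl, rfl⟩ | ⟨rfl, rfl⟩
    · exact ⟨fun _ h2 => no_twocycle hD hxy h2, fun _ => hxy⟩
    · refine ⟨fun h1 => (no_twocycle hD hxy h1).elim, fun hnn => ?_⟩
      exact (hnn hxy).elim

lemma Orient_HofD_unique {H : Finset (Sym2 (Fin n))} (hND : ∀ e ∈ H, ¬ e.IsDiag)
    (hDO : D ∈ Orient n H) : H = HofD D := by
  classical
  obtain ⟨⟨ho1, ho2⟩, -⟩ := mem_Orient.mp hDO
  ext e
  induction e using Sym2.ind with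
  | _ u v =>
    constructor
    · intro he
      have hne : u ≠ v := by
        intro h
        exact hND _ he (Sym2.mk_isDiag_iff.mpr h)
      have hadj : (SimpleGraph.fromEdgeSet (↑H : Set (Sym2 (Fin n)))).Adj u v :=
        (SimpleGraph.fromEdgeSet_adj _).mpr ⟨Finset.mem_coe.mpr he, hne⟩
      have hor := ho2 u v hadj
      by_cases hmem : (u, v) ∈ D
      · exact Finset.mem_image.mpr ⟨(u, v), hmem, rfl⟩
      · have : (v, u) ∈ D := by
          by_contra hvu
          exact hmem (hor.mpr hvu)
        exact Finset.mem_image.mpr ⟨(v, u), this, Sym2.eq_swap⟩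
    · intro he
      obtain ⟨⟨x, y⟩, hxy, hs⟩ := Finset.mem_image.mp he
      have hadj := ho1 x y hxy
      have := ((SimpleGraph.fromEdgeSet_adj _).mp hadj).1
      rw [hs] at this
      exact Finset.mem_coe.mp this

end AcyD'

lemma partA (p : ℝ) :
    ∑ H ∈ univ.filter (fun H : Finset (Sym2 (Fin n)) => ∀ e ∈ H, ¬ e.IsDiag),
        p ^ H.card * (1 - p) ^ (n * (n - 1) / 2 - H.card) * ((Orient n H).card : ℝ)
      = ∑ D ∈ AcyD n, p ^ D.card * (1 - p) ^ (n * (n - 1) / 2 - D.card) := by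
  classical
  have hexp : ∀ H : Finset (Sym2 (Fin n)),
      p ^ H.card * (1 - p) ^ (n * (n - 1) / 2 - H.card) * ((Orient n H).card : ℝ)
      = ∑ D ∈ Orient n H, p ^ H.card * (1 - p) ^ (n * (n - 1) / 2 - H.card) := by
    intro H
    rw [Finset.sum_const, nsmul_eq_mul, mul_comm]
  rw [Finset.sum_congr rfl (fun H _ => hexp H),
    ← Finset.sum_sigma (f := fun x : Σ _ : Finset (Sym2 (Fin n)), Finset (Fin n × Fin n) =>
      p ^ x.1.card * (1 - p) ^ (n * (n - 1) / 2 - x.1.card))]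
  apply Finset.sum_nbij' (i := fun x => x.2) (j := fun D => ⟨HofD D, D⟩)
  · rintro ⟨H, D⟩ hx
    rw [Finset.mem_sigma] at hx
    exact mem_AcyD.mpr (mem_Orient.mp hx.2).2
  · intro D hd
    have hD := mem_AcyD.mp hd
    rw [Finset.mem_sigma]
    exact ⟨Finset.mem_filter.mpr ⟨Finset.mem_univ _, HofD_nodiag hD⟩, mem_Orient_HofD hD⟩
  · rintro ⟨H, D⟩ hx
    rw [Finset.mem_sigma] at hx
    have hD := (mem_Orient.mp hx.2).2
    have hND := (Finset.mem_filter.mp hx.1).2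
    have : H = HofD D := Orient_HofD_unique hD hND hx.2
    simp [this]
  · intro D hd
    rfl
  · rintro ⟨H, D⟩ hx
    rw [Finset.mem_sigma] at hx
    have hD := (mem_Orient.mp hx.2).2
    have hND := (Finset.mem_filter.mp hx.1).2
    have hH : H = HofD D := Orient_HofD_unique hD hND hx.2
    simp only
    rw [hH, HofD_card hD]

lemma parking_finite : {a : Fin n → ℕ | IsParkingFn n a}.Finite := by
  apply Set.Finite.subset (Set.Finite.pi (t := fun _ : Fin n => Set.Iio n)
    (fun _ => Set.finite_Iio n))
  intro a ha
  rw [Set.mem_pi]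
  intro i _
  exact a_lt ha i

end Stmt18

/-- the expected number of acyclic orientations of an Erdős–Rényi random
graph `G(n,p)`, namely `Σ_H p^{|H|} q^{N-|H|} α(H)` over all edge subsets `H` of the
complete graph on `[n]`, equals `Σ_a p^{|supp a|} q^{N - Area a}` over all parking
functions `a` of `[n]`, where `q = 1 - p` and `N = n(n-1)/2`. -/
theorem stmt18 (n : ℕ) (hn : 1 ≤ n) (p : ℝ) (hp0 : 0 < p) (hp1 : p < 1) :
    ∑ᶠ H ∈ {H : Finset (Sym2 (Fin n)) | ∀ e ∈ H, ¬ e.IsDiag},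
        p ^ H.card * (1 - p) ^ (n * (n - 1) / 2 - H.card) * (acycCount n H : ℝ) =
      ∑ᶠ a ∈ {a : Fin n → ℕ | IsParkingFn n a},
        p ^ ({i : Fin n | 0 < a i}.ncard) *
          (1 - p) ^ (n * (n - 1) / 2 - ∑ i, a i) := by
  classical
  have hsetH : {H : Finset (Sym2 (Fin n)) | ∀ e ∈ H, ¬ e.IsDiag}
      = ↑(Finset.univ.filter (fun H : Finset (Sym2 (Fin n)) => ∀ e ∈ H, ¬ e.IsDiag)) := by
    ext H; simp
  rw [hsetH, finsum_mem_coe_finset]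
  have hL : ∀ H ∈ Finset.univ.filter (fun H : Finset (Sym2 (Fin n)) => ∀ e ∈ H, ¬ e.IsDiag),
      p ^ H.card * (1 - p) ^ (n * (n - 1) / 2 - H.card) * (acycCount n H : ℝ)
      = p ^ H.card * (1 - p) ^ (n * (n - 1) / 2 - H.card) * ((Stmt18.Orient n H).card : ℝ) := by
    intro H _
    rw [Stmt18.acycCount_eq]
  rw [Finset.sum_congr rfl hL, Stmt18.partA]
  rw [finsum_mem_eq_finite_toFinset_sum _ (Stmt18.parking_finite (n := n))]
  rw [← Finset.sum_fiberwise_of_maps_to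
    (g := Stmt18.PhiD) (t := (Stmt18.parking_finite (n := n)).toFinset)
    (fun D hD => (Set.Finite.mem_toFinset _).mpr
      (Stmt18.acyclic_parking (Stmt18.mem_AcyD.mp hD)))]
  apply Finset.sum_congr rfl
  intro a haf
  have ha : IsParkingFn n a := (Set.Finite.mem_toFinset _).mp haf
  rw [Stmt18.interval_sum p ha]
  have hset : ({i : Fin n | 0 < a i}).ncard = (Finset.univ.filter fun i => 0 < a i).card := by
    have h1 : {i : Fin n | 0 < a i} = ↑(Finset.univ.filter fun i => 0 < a i) := by
      ext i; simp
    rw [h1, Set.ncard_coe_finset]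
  rw [hset]
end
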